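/- arXiv:1207.2565 — 8 statements merged into one kernel-verified Lean document; each statement's English description precedes it below -/
import Mathlib

section
/- With the kernel K(x,y)=ψ(y−Ax)+ψ(x−Ay), the first eigenvalues satisfy lim_{p→∞} [λ_{1,p}(ℝ^d)]^{1/p} = 0. -/
open MeasureTheory Filter

/-- The first eigenvalue of the nonlocal `p`-Laplacian with kernel `K` on the whole space. -/
noncomputable def lambdaOne (d : ℕ) (p : ℝ)
    (K : EuclideanSpace ℝ (Fin d) → EuclideanSpace ℝ (Fin d) → ℝ) : ℝ :=
  sInf { r : ℝ |
    ∃ u : EuclideanSpace ℝ (Fin d) → ℝ,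
      MemLp u (ENNReal.ofReal p) volume ∧
      ¬ u =ᵐ[volume] (0 : EuclideanSpace ℝ (Fin d) → ℝ) ∧
      r = (∫ x, ∫ y, K x y * |u x - u y| ^ p) / (∫ x, |u x| ^ p) }

lemma abs_exp_sub_one_le' (s : ℝ) : |Real.exp s - 1| ≤ |s| * Real.exp |s| := by
  rcases le_or_gt 0 s with hs | hs
  · rw [abs_of_nonneg (sub_nonneg.mpr (Real.one_le_exp hs)), abs_of_nonneg hs]
    have h := Real.add_one_le_exp (-s)
    rw [Real.exp_neg] at h
    have hpos := Real.exp_pos s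
    have h' := mul_le_mul_of_nonneg_right h hpos.le
    rw [inv_mul_cancel₀ hpos.ne'] at h'
    nlinarith
  · have h := Real.add_one_le_exp s
    rw [abs_of_nonpos (sub_nonpos.mpr (Real.exp_le_one_iff.mpr hs.le))]
    have h1 : 1 ≤ Real.exp |s| := Real.one_le_exp (abs_nonneg s)
    have h2 : |s| = -s := abs_of_neg hs
    nlinarith [abs_nonneg s]

lemma exp_diff_le' {β L s t : ℝ} (hβ : 0 ≤ β) (hL : 0 ≤ L) (h : |s - t| ≤ L) :
    |Real.exp (-(β * s)) - Real.exp (-(β * t))| ≤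
      β * L * Real.exp (β * L) * Real.exp (-(β * s)) := by
  have key : Real.exp (-(β * t)) = Real.exp (-(β * s)) * Real.exp (β * (s - t)) := by
    rw [← Real.exp_add]; ring_nf
  rw [key]
  have e1 : |Real.exp (-(β * s)) - Real.exp (-(β * s)) * Real.exp (β * (s - t))|
      = Real.exp (-(β * s)) * |Real.exp (β * (s - t)) - 1| := by
    rw [show Real.exp (-(β * s)) - Real.exp (-(β * s)) * Real.exp (β * (s - t))
        = Real.exp (-(β * s)) * (1 - Real.exp (β * (s - t))) by ring, abs_mul,
      abs_of_pos (Real.exp_pos _), abs_sub_comm]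
  rw [e1]
  have h2 := abs_exp_sub_one_le' (β * (s - t))
  have h3 : |β * (s - t)| ≤ β * L := by
    rw [abs_mul, abs_of_nonneg hβ]
    exact mul_le_mul_of_nonneg_left h hβ
  have h4 : Real.exp |β * (s - t)| ≤ Real.exp (β * L) := Real.exp_le_exp.mpr h3
  have h5 : |Real.exp (β * (s - t)) - 1| ≤ β * L * Real.exp (β * L) :=
    h2.trans (mul_le_mul h3 h4 (Real.exp_pos _).le (mul_nonneg hβ hL))
  calc Real.exp (-(β * s)) * |Real.exp (β * (s - t)) - 1|
      ≤ Real.exp (-(β * s)) * (β * L * Real.exp (β * L)) :=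
        mul_le_mul_of_nonneg_left h5 (Real.exp_pos _).le
  _ = β * L * Real.exp (β * L) * Real.exp (-(β * s)) := by ring

theorem tendsto_rpow_first_eigenvalue (d : ℕ) (hd : 1 ≤ d)
    (ψ : EuclideanSpace ℝ (Fin d) → ℝ)
    (hψmeas : Measurable ψ) (hψnn : ∀ z, 0 ≤ ψ z)
    (hψbdd : ∃ M : ℝ, ∀ z, ψ z ≤ M)
    (hψsupp : ∀ z, ψ z ≠ 0 → z ∈ Metric.closedBall (0 : EuclideanSpace ℝ (Fin d)) 1)
    (A : Matrix (Fin d) (Fin d) ℝ) (hA : IsUnit A.det) :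
    Tendsto (fun p : ℝ =>
        (lambdaOne d p (fun x y =>
          ψ (y - Matrix.toEuclideanLin A x) + ψ (x - Matrix.toEuclideanLin A y))) ^ (1 / p))
      atTop (nhds 0) := by
  classical
  obtain ⟨M, hM⟩ := hψbdd
  have hM0 : 0 ≤ M := le_trans (hψnn 0) (hM 0)
  set T : EuclideanSpace ℝ (Fin d) →L[ℝ] EuclideanSpace ℝ (Fin d) :=
    Matrix.toEuclideanCLM (𝕜 := ℝ) A with hTdef
  set S : EuclideanSpace ℝ (Fin d) →L[ℝ] EuclideanSpace ℝ (Fin d) :=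
    Matrix.toEuclideanCLM (𝕜 := ℝ) A⁻¹ with hSdef
  have hT : ∀ z, Matrix.toEuclideanLin A z = T z := by
    intro z
    have h := Matrix.coe_toEuclideanCLM_eq_toEuclideanLin (𝕜 := ℝ) (A := A)
    rw [hTdef]
    simpa using (LinearMap.congr_fun h z).symm
  have hST : ∀ z, S (T z) = z := by
    intro z
    have h1 : A⁻¹ * A = 1 := Matrix.nonsing_inv_mul A hA
    have h2 : S * T = 1 := by
      rw [hSdef, hTdef, ← map_mul, h1, map_one]
    calc S (T z) = (S * T) z := rfl
    _ = z := by rw [h2]; rfl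
  -- replace the kernel with one phrased via `T`
  have hKrw : (fun x y => ψ (y - Matrix.toEuclideanLin A x) + ψ (x - Matrix.toEuclideanLin A y))
      = fun x y => ψ (y - T x) + ψ (x - T y) := by
    funext x y; rw [hT, hT]
  rw [hKrw]
  set Kf : EuclideanSpace ℝ (Fin d) → EuclideanSpace ℝ (Fin d) → ℝ :=
    fun x y => ψ (y - T x) + ψ (x - T y) with hKf
  -- nonnegativity of all Rayleigh quotients
  have hsetnn : ∀ (q r : ℝ),
      (∃ u : EuclideanSpace ℝ (Fin d) → ℝ,
        MemLp u (ENNReal.ofReal q) volume ∧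
        ¬ u =ᵐ[volume] (0 : EuclideanSpace ℝ (Fin d) → ℝ) ∧
        r = (∫ x, ∫ y, Kf x y * |u x - u y| ^ q) / (∫ x, |u x| ^ q)) → 0 ≤ r := by
    rintro q r ⟨u, -, -, rfl⟩
    apply div_nonneg
    · apply integral_nonneg
      intro x
      apply integral_nonneg
      intro y
      exact mul_nonneg (add_nonneg (hψnn _) (hψnn _)) (Real.rpow_nonneg (abs_nonneg _) _)
    · exact integral_nonneg fun x => Real.rpow_nonneg (abs_nonneg _) _
  have hnn : ∀ q : ℝ, 0 ≤ lambdaOne d q Kf := by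
    intro q
    exact Real.sInf_nonneg fun r hr => hsetnn q r hr
  have hbdd : ∀ q : ℝ, BddBelow { r : ℝ |
      ∃ u : EuclideanSpace ℝ (Fin d) → ℝ,
        MemLp u (ENNReal.ofReal q) volume ∧
        ¬ u =ᵐ[volume] (0 : EuclideanSpace ℝ (Fin d) → ℝ) ∧
        r = (∫ x, ∫ y, Kf x y * |u x - u y| ^ q) / (∫ x, |u x| ^ q) } :=
    fun q => ⟨0, fun r hr => hsetnn q r hr⟩
  -- the growth constant
  set C0 : ℝ := 2 + ‖T‖ + ‖S‖ with hC0def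
  have hC0two : (2:ℝ) ≤ C0 := by
    have := norm_nonneg T; have := norm_nonneg S
    rw [hC0def]; linarith
  have hC0pos : (0:ℝ) < C0 := by linarith
  set L : ℝ := Real.log C0 with hLdef
  have hL0 : 0 ≤ L := Real.log_nonneg (by linarith)
  have hlog : ∀ x y : EuclideanSpace ℝ (Fin d), 1 + ‖x‖ ≤ C0 * (1 + ‖y‖) →
      Real.log (1 + ‖x‖) - Real.log (1 + ‖y‖) ≤ L := by
    intro x y hxy
    have hx : (0:ℝ) < 1 + ‖x‖ := by positivity
    have hy : (0:ℝ) < 1 + ‖y‖ := by positivity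
    have h := Real.log_le_log hx hxy
    rw [Real.log_mul hC0pos.ne' hy.ne'] at h
    linarith
  have sub1 : ∀ x y : EuclideanSpace ℝ (Fin d), ‖y - T x‖ ≤ 1 →
      1 + ‖y‖ ≤ C0 * (1 + ‖x‖) ∧ 1 + ‖x‖ ≤ C0 * (1 + ‖y‖) := by
    intro x y h
    have hTnn := norm_nonneg T; have hSnn := norm_nonneg S
    have hxn := norm_nonneg x; have hyn := norm_nonneg y
    have hTx : ‖T x‖ ≤ ‖T‖ * ‖x‖ := T.le_opNorm x
    constructor
    · have h1 : ‖y‖ - ‖T x‖ ≤ ‖y - T x‖ := norm_sub_norm_le y (T x)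
      rw [hC0def]; nlinarith
    · have h1 : ‖x‖ ≤ ‖S‖ * ‖T x‖ := by
        conv_lhs => rw [← hST x]
        exact S.le_opNorm (T x)
      have h2 : ‖T x‖ - ‖y‖ ≤ ‖T x - y‖ := norm_sub_norm_le (T x) y
      rw [norm_sub_rev] at h2
      rw [hC0def]; nlinarith [mul_le_mul_of_nonneg_left (show ‖T x‖ ≤ 1 + ‖y‖ by linarith) hSnn]
  have hgrow : ∀ x y : EuclideanSpace ℝ (Fin d), (‖y - T x‖ ≤ 1 ∨ ‖x - T y‖ ≤ 1) →
      |Real.log (1 + ‖x‖) - Real.log (1 + ‖y‖)| ≤ L := by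
    intro x y hxy
    rw [abs_sub_le_iff]
    rcases hxy with h | h
    · exact ⟨hlog _ _ (sub1 x y h).2, hlog _ _ (sub1 x y h).1⟩
    · exact ⟨hlog _ _ (sub1 y x h).1, hlog _ _ (sub1 y x h).2⟩
  -- volumes
  set vol1 : ℝ := (volume (Metric.closedBall (0 : EuclideanSpace ℝ (Fin d)) 1)).toReal with hv1
  set vol2 : ℝ := (volume (Metric.closedBall (0 : EuclideanSpace ℝ (Fin d)) ‖S‖)).toReal with hv2
  have hv1nn : 0 ≤ vol1 := ENNReal.toReal_nonneg
  have hv2nn : 0 ≤ vol2 := ENNReal.toReal_nonneg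
  set V : ℝ := M * vol1 + M * vol2 with hVdef
  have hVnn : 0 ≤ V := by
    rw [hVdef]
    exact add_nonneg (mul_nonneg hM0 hv1nn) (mul_nonneg hM0 hv2nn)
  -- main estimate for fixed p ≥ 1
  have key : ∀ p : ℝ, 1 ≤ p →
      lambdaOne d p Kf ≤ (Real.exp (((d:ℝ)+1) * L) * V) * ((((d:ℝ)+1) * L) / p) ^ p := by
    intro p hp
    have hp0 : (0:ℝ) < p := lt_of_lt_of_le one_pos hp
    set β : ℝ := ((d:ℝ)+1) / p with hβdef
    have hβpos : 0 < β := by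
      rw [hβdef]
      exact div_pos (by positivity) hp0
    have hβp : β * p = (d:ℝ)+1 := div_mul_cancel₀ _ hp0.ne'
    set a : EuclideanSpace ℝ (Fin d) → ℝ := fun x => Real.log (1 + ‖x‖) with hadef
    set u : EuclideanSpace ℝ (Fin d) → ℝ := fun x => Real.exp (-(β * a x)) with hudef
    set w : EuclideanSpace ℝ (Fin d) → ℝ := fun x => Real.exp (-(((d:ℝ)+1) * a x)) with hwdef
    have ha_cont : Continuous a := by
      rw [hadef]
      exact (continuous_const.add continuous_norm).log (fun x => (by positivity : (0:ℝ) < 1 + ‖x‖).ne')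
    have hu_cont : Continuous u := by
      rw [hudef]
      exact Real.continuous_exp.comp (continuous_const.mul ha_cont).neg
    have hw_eq : ∀ x, w x = (1 + ‖x‖) ^ (-((d:ℝ)+1)) := by
      intro x
      simp only [hwdef, hadef]
      rw [Real.rpow_def_of_pos (by positivity)]
      congr 1
      ring
    have hw_int : Integrable w (volume : Measure (EuclideanSpace ℝ (Fin d))) := by
      have : ((Module.finrank ℝ (EuclideanSpace ℝ (Fin d)) : ℝ)) < (d:ℝ)+1 := by
        rw [finrank_euclideanSpace_fin]; linarith
      exact (integrable_one_add_norm this).congr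
        (ae_of_all _ fun x => (hw_eq x).symm)
    have hu_absp : ∀ x, |u x| ^ p = w x := by
      intro x
      simp only [hudef, hwdef]
      rw [abs_of_pos (Real.exp_pos _), ← Real.exp_mul]
      congr 1
      have : -(β * a x) * p = -((β * p) * a x) := by ring
      rw [this, hβp]
    have hq0 : ENNReal.ofReal p ≠ 0 := by
      simp [ENNReal.ofReal_eq_zero, not_le, hp0]
    have hqt : ENNReal.ofReal p ≠ ⊤ := ENNReal.ofReal_ne_top
    have hmem : MemLp u (ENNReal.ofReal p) volume := by
      have h1 : MemLp (fun x => ‖u x‖ ^ (ENNReal.ofReal p).toReal)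
          (ENNReal.ofReal p / ENNReal.ofReal p) volume := by
        rw [ENNReal.div_self hq0 hqt, memLp_one_iff_integrable]
        apply hw_int.congr
        apply ae_of_all
        intro x
        simp only [ENNReal.toReal_ofReal hp0.le, Real.norm_eq_abs]
        exact (hu_absp x).symm
      exact (memLp_norm_rpow_iff hu_cont.aestronglyMeasurable hq0 hqt).mp h1
    have hune : ¬ u =ᵐ[volume] (0 : EuclideanSpace ℝ (Fin d) → ℝ) := by
      intro h
      have h2 : ∀ᵐ x : EuclideanSpace ℝ (Fin d) ∂volume, False := by
        filter_upwards [h] with x hx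
        simp only [hudef, Pi.zero_apply] at hx
        exact (Real.exp_pos _).ne' hx
      rw [ae_iff] at h2
      simp only [not_false_iff, Set.setOf_true] at h2
      have hpos := isOpen_univ.measure_pos (volume : Measure (EuclideanSpace ℝ (Fin d)))
        ⟨0, trivial⟩
      rw [h2] at hpos
      exact lt_irrefl _ hpos
    -- denominator
    have hD_eq : (∫ x, |u x| ^ p) = ∫ x, w x := by
      congr 1; funext x; exact hu_absp x
    have hD_pos : 0 < ∫ x, w x := by
      have hwpos : ∀ x, 0 < w x := fun x => by simp only [hwdef]; exact Real.exp_pos _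
      rw [integral_pos_iff_support_of_nonneg (fun x => (hwpos x).le) hw_int]
      have : Function.support w = Set.univ := by
        ext x
        simp only [Function.mem_support, Set.mem_univ, iff_true]
        exact (hwpos x).ne'
      rw [this]
      exact (isOpen_univ.measure_pos volume ⟨0, trivial⟩)
    -- pointwise bound on the difference
    set cB : ℝ := β * L * Real.exp (β * L) with hcBdef
    have hcBnn : 0 ≤ cB := by
      rw [hcBdef]
      exact mul_nonneg (mul_nonneg hβpos.le hL0) (Real.exp_pos _).le
    have hdiff : ∀ x y : EuclideanSpace ℝ (Fin d), (‖y - T x‖ ≤ 1 ∨ ‖x - T y‖ ≤ 1) →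
        |u x - u y| ^ p ≤ cB ^ p * w x := by
      intro x y hxy
      have h1 : |u x - u y| ≤ cB * u x := by
        have hga : |a x - a y| ≤ L := by
          simp only [hadef]; exact hgrow x y hxy
        have := exp_diff_le' hβpos.le hL0 hga
        simp only [hudef, hcBdef]
        calc |Real.exp (-(β * a x)) - Real.exp (-(β * a y))|
            ≤ β * L * Real.exp (β * L) * Real.exp (-(β * a x)) := this
        _ = β * L * Real.exp (β * L) * Real.exp (-(β * a x)) := rfl
      have h2 : |u x - u y| ^ p ≤ (cB * u x) ^ p :=
        Real.rpow_le_rpow (abs_nonneg _) h1 hp0.le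
      have h3 : (cB * u x) ^ p = cB ^ p * w x := by
        have hupos : 0 < u x := by simp only [hudef]; exact Real.exp_pos _
        rw [Real.mul_rpow hcBnn hupos.le]
        congr 1
        simp only [hudef, hwdef]
        rw [← Real.exp_mul]
        congr 1
        have : -(β * a x) * p = -((β * p) * a x) := by ring
        rw [this, hβp]
      rw [h3] at h2
      exact h2
    -- the inner integral bound
    have hind1_int : ∀ x : EuclideanSpace ℝ (Fin d),
        Integrable ((Metric.closedBall (T x) 1).indicator (fun _ => M)) volume := by
      intro x
      rw [integrable_indicator_iff measurableSet_closedBall]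
      exact integrableOn_const measure_closedBall_lt_top.ne
    have hind2_int : ∀ x : EuclideanSpace ℝ (Fin d),
        Integrable ((Metric.closedBall (S x) ‖S‖).indicator (fun _ => M)) volume := by
      intro x
      rw [integrable_indicator_iff measurableSet_closedBall]
      exact integrableOn_const measure_closedBall_lt_top.ne
    have hinner : ∀ x : EuclideanSpace ℝ (Fin d),
        (∫ y, Kf x y * |u x - u y| ^ p) ≤ (cB ^ p * w x) * V := by
      intro x
      have hmono := integral_mono_of_nonneg
        (f := fun y => Kf x y * |u x - u y| ^ p)
        (g := fun y => ((Metric.closedBall (T x) 1).indicator (fun _ => M) y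
            + (Metric.closedBall (S x) ‖S‖).indicator (fun _ => M) y) * (cB ^ p * w x))
        (μ := volume)
        (ae_of_all _ fun y => mul_nonneg (add_nonneg (hψnn _) (hψnn _))
          (Real.rpow_nonneg (abs_nonneg _) _))
        (((hind1_int x).add (hind2_int x)).mul_const _)
        ?_
      · refine hmono.trans (le_of_eq ?_)
        rw [integral_mul_const, integral_add (hind1_int x) (hind2_int x),
          integral_indicator_const (M : ℝ) measurableSet_closedBall,
          integral_indicator_const (M : ℝ) measurableSet_closedBall,
          measureReal_def, measureReal_def,
          Measure.addHaar_closedBall_center volume (T x),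
          Measure.addHaar_closedBall_center volume (S x)]
        rw [hVdef, ← hv1, ← hv2]
        simp only [smul_eq_mul]
        ring
      · apply ae_of_all
        intro y
        simp only []
        by_cases hz : ψ (y - T x) = 0 ∧ ψ (x - T y) = 0
        · have : Kf x y = 0 := by rw [hKf]; simp [hz.1, hz.2]
          rw [this, zero_mul]
          apply mul_nonneg
          · exact add_nonneg (Set.indicator_nonneg (fun _ _ => hM0) y)
              (Set.indicator_nonneg (fun _ _ => hM0) y)
          · exact mul_nonneg (Real.rpow_nonneg hcBnn _) (Real.exp_pos _).le
        · push_neg at hz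
          have hball : ‖y - T x‖ ≤ 1 ∨ ‖x - T y‖ ≤ 1 := by
            by_cases h1 : ψ (y - T x) = 0
            · exact Or.inr (mem_closedBall_zero_iff.mp (hψsupp _ (hz h1)))
            · exact Or.inl (mem_closedBall_zero_iff.mp (hψsupp _ h1))
          have hK1 : ψ (y - T x) ≤ (Metric.closedBall (T x) 1).indicator (fun _ => M) y := by
            by_cases h1 : ψ (y - T x) = 0
            · rw [h1]; exact Set.indicator_nonneg (fun _ _ => hM0) y
            · have hy : y ∈ Metric.closedBall (T x) 1 := by
                rw [Metric.mem_closedBall, dist_eq_norm]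
                exact mem_closedBall_zero_iff.mp (hψsupp _ h1)
              rw [Set.indicator_of_mem hy]
              exact hM _
          have hK2 : ψ (x - T y) ≤ (Metric.closedBall (S x) ‖S‖).indicator (fun _ => M) y := by
            by_cases h2 : ψ (x - T y) = 0
            · rw [h2]; exact Set.indicator_nonneg (fun _ _ => hM0) y
            · have hxy : ‖x - T y‖ ≤ 1 := mem_closedBall_zero_iff.mp (hψsupp _ h2)
              have hy : y ∈ Metric.closedBall (S x) ‖S‖ := by
                rw [Metric.mem_closedBall, dist_comm, dist_eq_norm]
                calc ‖S x - y‖ = ‖S (x - T y)‖ := by rw [map_sub, hST]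
                _ ≤ ‖S‖ * ‖x - T y‖ := S.le_opNorm _
                _ ≤ ‖S‖ * 1 := mul_le_mul_of_nonneg_left hxy (norm_nonneg S)
                _ = ‖S‖ := mul_one _
              rw [Set.indicator_of_mem hy]
              exact hM _
          exact mul_le_mul (add_le_add hK1 hK2) (hdiff x y hball)
            (Real.rpow_nonneg (abs_nonneg _) _)
            (add_nonneg (Set.indicator_nonneg (fun _ _ => hM0) y)
              (Set.indicator_nonneg (fun _ _ => hM0) y))
    -- the outer integral bound
    have houter : (∫ x, ∫ y, Kf x y * |u x - u y| ^ p) ≤ (cB ^ p * V) * ∫ x, w x := by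
      have hmono := integral_mono_of_nonneg
        (f := fun x => ∫ y, Kf x y * |u x - u y| ^ p)
        (g := fun x => (cB ^ p * V) * w x)
        (μ := volume)
        (ae_of_all _ fun x => integral_nonneg fun y =>
          mul_nonneg (add_nonneg (hψnn _) (hψnn _)) (Real.rpow_nonneg (abs_nonneg _) _))
        (hw_int.const_mul _)
        (ae_of_all _ fun x => (hinner x).trans (le_of_eq (by ring)))
      refine hmono.trans (le_of_eq ?_)
      rw [integral_const_mul]
    -- conclude the bound on lambdaOne
    have hrle : (∫ x, ∫ y, Kf x y * |u x - u y| ^ p) / (∫ x, |u x| ^ p)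
        ≤ (Real.exp (((d:ℝ)+1) * L) * V) * ((((d:ℝ)+1) * L) / p) ^ p := by
      rw [hD_eq, div_le_iff₀ hD_pos]
      refine houter.trans (le_of_eq ?_)
      have hcBp : cB ^ p = ((((d:ℝ)+1) * L) / p) ^ p * Real.exp (((d:ℝ)+1) * L) := by
        rw [hcBdef, Real.mul_rpow (mul_nonneg hβpos.le hL0) (Real.exp_pos _).le, ← Real.exp_mul]
        congr 2
        · rw [hβdef]; ring
        · have : β * L * p = (β * p) * L := by ring
          rw [this, hβp]
      rw [hcBp]
      ring
    have hmem_set : (∫ x, ∫ y, Kf x y * |u x - u y| ^ p) / (∫ x, |u x| ^ p) ∈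
        { r : ℝ | ∃ u : EuclideanSpace ℝ (Fin d) → ℝ,
          MemLp u (ENNReal.ofReal p) volume ∧
          ¬ u =ᵐ[volume] (0 : EuclideanSpace ℝ (Fin d) → ℝ) ∧
          r = (∫ x, ∫ y, Kf x y * |u x - u y| ^ p) / (∫ x, |u x| ^ p) } :=
      ⟨u, hmem, hune, rfl⟩
    exact le_trans (csInf_le (hbdd p) hmem_set) hrle
  -- final limit argument
  set Cc : ℝ := Real.exp (((d:ℝ)+1) * L) * V with hCcdef
  have hCcnn : 0 ≤ Cc := by
    rw [hCcdef]
    exact mul_nonneg (Real.exp_pos _).le hVnn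
  set Cm : ℝ := max 1 Cc with hCmdef
  have hCm1 : (1:ℝ) ≤ Cm := le_max_left _ _
  have hCmnn : (0:ℝ) ≤ Cm := le_trans zero_le_one hCm1
  apply squeeze_zero' (g := fun p : ℝ => (Cm * (((d:ℝ)+1) * L)) / p)
  · filter_upwards with p
    exact Real.rpow_nonneg (hnn p) _
  · filter_upwards [eventually_ge_atTop (1:ℝ)] with p hp
    have hp0 : (0:ℝ) < p := lt_of_lt_of_le one_pos hp
    have h1 : lambdaOne d p Kf ^ (1/p) ≤ (Cc * ((((d:ℝ)+1) * L) / p) ^ p) ^ (1/p) :=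
      Real.rpow_le_rpow (hnn p) (key p hp) (one_div_nonneg.mpr hp0.le)
    have h2 : (Cc * ((((d:ℝ)+1) * L) / p) ^ p) ^ (1/p)
        = Cc ^ (1/p) * ((((d:ℝ)+1) * L) / p) := by
      have hXnn : 0 ≤ (((d:ℝ)+1) * L) / p :=
        div_nonneg (mul_nonneg (by positivity) hL0) hp0.le
      rw [Real.mul_rpow hCcnn (Real.rpow_nonneg hXnn _),
        ← Real.rpow_mul hXnn, mul_one_div, div_self hp0.ne', Real.rpow_one]
    have h3 : Cc ^ (1/p) ≤ Cm := by
      rcases le_total Cc 1 with h | h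
      · exact le_trans (Real.rpow_le_one hCcnn h (one_div_nonneg.mpr hp0.le)) hCm1
      · calc Cc ^ (1/p) ≤ Cc ^ (1:ℝ) := by
              apply Real.rpow_le_rpow_of_exponent_le h
              rw [div_le_one hp0]; exact hp
        _ = Cc := Real.rpow_one _
        _ ≤ Cm := le_max_right _ _
    calc lambdaOne d p Kf ^ (1/p)
        ≤ Cc ^ (1/p) * ((((d:ℝ)+1) * L) / p) := by rw [← h2]; exact h1
    _ ≤ Cm * ((((d:ℝ)+1) * L) / p) := by
        exact mul_le_mul_of_nonneg_right h3
          (div_nonneg (mul_nonneg (by positivity) hL0) hp0.le)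
    _ = (Cm * (((d:ℝ)+1) * L)) / p := by ring
  · exact Tendsto.div_atTop tendsto_const_nhds tendsto_id
end

section
/- With the kernel K(x,y)=ψ(y−Ax)+ψ(x−Ay), the first eigenvalues themselves satisfy lim_{p→∞} λ_{1,p}(ℝ^d) = 0; in particular there is no uniform positive lower bound for λ_{1,p}(ℝ^d) over p ≥ 1. -/
open MeasureTheory Filter

/-- The set whose infimum defines `lambdaOne`. -/
def eigSet (d : ℕ) (p : ℝ)
    (K : EuclideanSpace ℝ (Fin d) → EuclideanSpace ℝ (Fin d) → ℝ) : Set ℝ :=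
  { r : ℝ |
    ∃ u : EuclideanSpace ℝ (Fin d) → ℝ,
      MemLp u (ENNReal.ofReal p) volume ∧
      ¬ u =ᵐ[volume] (0 : EuclideanSpace ℝ (Fin d) → ℝ) ∧
      r = (∫ x, ∫ y, K x y * |u x - u y| ^ p) / (∫ x, |u x| ^ p) }

lemma lambdaOne_eq_sInf (d : ℕ) (p : ℝ)
    (K : EuclideanSpace ℝ (Fin d) → EuclideanSpace ℝ (Fin d) → ℝ) :
    lambdaOne d p K = sInf (eigSet d p K) := rfl

set_option maxHeartbeats 1000000 in
set_option synthInstance.maxHeartbeats 400000 in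
theorem tendsto_first_eigenvalue_zero_no_uniform_lower_bound (d : ℕ) (hd : 1 ≤ d)
    (ψ : EuclideanSpace ℝ (Fin d) → ℝ)
    (hψmeas : Measurable ψ) (hψnn : ∀ z, 0 ≤ ψ z)
    (hψbdd : ∃ M : ℝ, ∀ z, ψ z ≤ M)
    (hψsupp : ∀ z, ψ z ≠ 0 → z ∈ Metric.closedBall (0 : EuclideanSpace ℝ (Fin d)) 1)
    (A : Matrix (Fin d) (Fin d) ℝ) (hA : IsUnit A.det)
    (K : EuclideanSpace ℝ (Fin d) → EuclideanSpace ℝ (Fin d) → ℝ)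
    (hK : K = fun x y =>
      ψ (y - Matrix.toEuclideanLin A x) + ψ (x - Matrix.toEuclideanLin A y)) :
    Tendsto (fun p : ℝ => lambdaOne d p K) atTop (nhds 0) ∧
      ¬ ∃ c : ℝ, 0 < c ∧ ∀ p : ℝ, 1 ≤ p → c ≤ lambdaOne d p K := by
  classical
  obtain ⟨M₀, hM₀⟩ := hψbdd
  set M : ℝ := max M₀ 0 with hMdef
  have hψM : ∀ z, ψ z ≤ M := fun z => le_trans (hM₀ z) (le_max_left _ _)
  have hM0 : (0:ℝ) ≤ M := le_max_right _ _
  set T := Matrix.toEuclideanLin A with hTdef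
  set S := Matrix.toEuclideanLin A⁻¹ with hSdef
  have hST : ∀ x, S (T x) = x := by
    intro x
    simp only [hTdef, hSdef, Matrix.toEuclideanLin_apply]
    simp [Matrix.mulVec_mulVec, Matrix.nonsing_inv_mul A hA]
  set nT : ℝ := ‖LinearMap.toContinuousLinearMap T‖ with hnTdef
  set nS : ℝ := ‖LinearMap.toContinuousLinearMap S‖ with hnSdef
  have hTnorm : ∀ x, ‖T x‖ ≤ nT * ‖x‖ := fun x => by
    simpa using (LinearMap.toContinuousLinearMap T).le_opNorm x
  have hSnorm : ∀ x, ‖S x‖ ≤ nS * ‖x‖ := fun x => by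
    simpa using (LinearMap.toContinuousLinearMap S).le_opNorm x
  have hnT : (0:ℝ) ≤ nT := norm_nonneg _
  have hnS : (0:ℝ) ≤ nS := norm_nonneg _
  set κ : ℝ := 2 + nT + nS with hκdef
  have hκ2 : (2:ℝ) ≤ κ := by simp only [hκdef]; linarith
  have hκ1 : (1:ℝ) < κ := by linarith
  have hκ0 : (0:ℝ) < κ := by linarith
  have hlogκ : 0 < Real.log κ := Real.log_pos hκ1
  set ε : ℝ := Real.log (3/2) / Real.log κ with hεdef
  have hlog32 : 0 < Real.log (3/2) := Real.log_pos (by norm_num)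
  have hε : 0 < ε := div_pos hlog32 hlogκ
  have hκε : κ ^ ε = 3/2 := by
    rw [hεdef, Real.rpow_def_of_pos hκ0, mul_comm, div_mul_cancel₀ _ hlogκ.ne']
    exact Real.exp_log (by norm_num)
  have hκεneg : κ ^ (-ε) = 2/3 := by
    rw [Real.rpow_neg hκ0.le, hκε]; norm_num
  -- core real-number estimate
  have key : ∀ s t : ℝ, 1 ≤ s → 1 ≤ t → t ≤ κ * s → s ≤ κ * t →
      |s ^ (-ε) - t ^ (-ε)| ≤ 1/2 * s ^ (-ε) := by
    intro s t hs ht hts hst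
    have hs0 : (0:ℝ) < s := by linarith
    have ht0 : (0:ℝ) < t := by linarith
    have hsp : 0 < s ^ (-ε) := Real.rpow_pos_of_pos hs0 _
    have h1 : (κ * s) ^ (-ε) ≤ t ^ (-ε) :=
      Real.rpow_le_rpow_of_nonpos ht0 hts (by linarith)
    have h2 : t ^ (-ε) ≤ (s / κ) ^ (-ε) :=
      Real.rpow_le_rpow_of_nonpos (by positivity)
        (by rw [div_le_iff₀ hκ0]; linarith) (by linarith)
    have e1 : (κ * s) ^ (-ε) = 2/3 * s ^ (-ε) := by
      rw [Real.mul_rpow hκ0.le hs0.le, hκεneg]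
    have e2 : (s / κ) ^ (-ε) = 3/2 * s ^ (-ε) := by
      rw [div_eq_mul_inv, Real.mul_rpow hs0.le (by positivity),
        Real.inv_rpow hκ0.le, hκεneg]
      norm_num; ring
    rw [e1] at h1
    rw [e2] at h2
    rw [abs_sub_le_iff]
    constructor <;> linarith
  -- geometric estimate
  have hgeo : ∀ x y : EuclideanSpace ℝ (Fin d), K x y ≠ 0 →
      ((1 + ‖y‖ ≤ κ * (1 + ‖x‖) ∧ 1 + ‖x‖ ≤ κ * (1 + ‖y‖)) ∧
        y ∈ Metric.closedBall (T x) 1 ∪ Metric.closedBall (S x) nS) := by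
    intro x y hxy
    have h2 : ψ (y - T x) ≠ 0 ∨ ψ (x - T y) ≠ 0 := by
      by_contra h
      push_neg at h
      apply hxy
      simp only [hK]
      rw [h.1, h.2, add_zero]
    have hnx : (0:ℝ) ≤ ‖x‖ := norm_nonneg _
    have hny : (0:ℝ) ≤ ‖y‖ := norm_nonneg _
    rcases h2 with h | h
    · have hb : ‖y - T x‖ ≤ 1 := by
        have := hψsupp _ h
        rwa [Metric.mem_closedBall, dist_zero_right] at this
      have hTx : ‖T x‖ ≤ nT * ‖x‖ := hTnorm x
      have hy : ‖y‖ ≤ nT * ‖x‖ + 1 := by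
        have h3 := norm_sub_norm_le y (T x)
        linarith
      have hx' : ‖x‖ ≤ nS * (‖y‖ + 1) := by
        have h1 : ‖x‖ = ‖S (T x)‖ := by rw [hST]
        have h2' : ‖S (T x)‖ ≤ nS * ‖T x‖ := hSnorm _
        have h3 : ‖T x‖ ≤ ‖y‖ + 1 := by
          have h4 := norm_sub_norm_le (T x) y
          rw [norm_sub_rev] at h4
          linarith
        calc ‖x‖ ≤ nS * ‖T x‖ := by rw [h1]; exact h2'
          _ ≤ nS * (‖y‖ + 1) := mul_le_mul_of_nonneg_left (by linarith) hnS
      refine ⟨⟨?_, ?_⟩, Or.inl ?_⟩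
      · simp only [hκdef]
        nlinarith [mul_nonneg hnS hnx, mul_nonneg hnT hnx]
      · simp only [hκdef]
        nlinarith [mul_nonneg hnT hny, mul_nonneg hnS hny, mul_nonneg hnT hnS]
      · rwa [Metric.mem_closedBall, dist_eq_norm]
    · have hb : ‖x - T y‖ ≤ 1 := by
        have := hψsupp _ h
        rwa [Metric.mem_closedBall, dist_zero_right] at this
      have hTy : ‖T y‖ ≤ nT * ‖y‖ := hTnorm y
      have hx : ‖x‖ ≤ nT * ‖y‖ + 1 := by
        have h3 := norm_sub_norm_le x (T y)
        linarith
      have hy' : ‖y‖ ≤ nS * (‖x‖ + 1) := by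
        have h1 : ‖y‖ = ‖S (T y)‖ := by rw [hST]
        have h2' : ‖S (T y)‖ ≤ nS * ‖T y‖ := hSnorm _
        have h3 : ‖T y‖ ≤ ‖x‖ + 1 := by
          have h4 := norm_sub_norm_le (T y) x
          rw [norm_sub_rev] at h4
          linarith
        calc ‖y‖ ≤ nS * ‖T y‖ := by rw [h1]; exact h2'
          _ ≤ nS * (‖x‖ + 1) := mul_le_mul_of_nonneg_left (by linarith) hnS
      refine ⟨⟨?_, ?_⟩, Or.inr ?_⟩
      · simp only [hκdef]
        nlinarith [mul_nonneg hnT hnx, mul_nonneg hnS hnx, mul_nonneg hnT hnS]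
      · simp only [hκdef]
        nlinarith [mul_nonneg hnS hny, mul_nonneg hnT hny]
      · rw [Metric.mem_closedBall, dist_eq_norm]
        have h5 : y - S x = S (T y - x) := by
          rw [map_sub, hST]
        rw [h5]
        calc ‖S (T y - x)‖ ≤ nS * ‖T y - x‖ := hSnorm _
          _ ≤ nS * 1 := mul_le_mul_of_nonneg_left (by rwa [norm_sub_rev]) hnS
          _ = nS := mul_one _
  -- the test function
  set u : EuclideanSpace ℝ (Fin d) → ℝ := fun x => (1 + ‖x‖) ^ (-ε) with hu
  have hux : ∀ x, 0 < u x := fun x => Real.rpow_pos_of_pos (by positivity) _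
  have hcore : ∀ x y, K x y ≠ 0 → |u x - u y| ≤ 1/2 * u x := by
    intro x y h
    have hg := (hgeo x y h).1
    exact key (1 + ‖x‖) (1 + ‖y‖) (by linarith [norm_nonneg x])
      (by linarith [norm_nonneg y]) hg.1 hg.2
  have hKnn : ∀ x y, 0 ≤ K x y := by
    intro x y
    simp only [hK]
    exact add_nonneg (hψnn _) (hψnn _)
  -- all elements of the eigenvalue set are nonnegative
  have hSet : ∀ p : ℝ, ∀ r ∈ eigSet d p K, 0 ≤ r := by
    rintro p r ⟨v, -, -, rfl⟩
    apply div_nonneg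
    · apply integral_nonneg
      intro x
      apply integral_nonneg
      intro y
      exact mul_nonneg (hKnn x y) (Real.rpow_nonneg (abs_nonneg _) _)
    · exact integral_nonneg fun x => Real.rpow_nonneg (abs_nonneg _) _
  have hlamnn : ∀ p : ℝ, 0 ≤ lambdaOne d p K := by
    intro p
    rw [lambdaOne_eq_sInf]
    exact Real.sInf_nonneg (hSet p)
  -- constants
  set V : ℝ := (volume (Metric.closedBall (0 : EuclideanSpace ℝ (Fin d)) 1)).toReal
      + (volume (Metric.closedBall (0 : EuclideanSpace ℝ (Fin d)) nS)).toReal with hVdef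
  have hV0 : 0 ≤ V := add_nonneg ENNReal.toReal_nonneg ENNReal.toReal_nonneg
  set C0 : ℝ := 2 * M * V with hC0def
  have hC00 : 0 ≤ C0 := by positivity
  have hball : 0 < volume (Metric.ball (0 : EuclideanSpace ℝ (Fin d)) 1) :=
    Metric.measure_ball_pos volume (0 : EuclideanSpace ℝ (Fin d)) one_pos
  -- main bound for large p
  have hbound : ∀ p : ℝ, 1 ≤ p → (d : ℝ) < ε * p → lambdaOne d p K ≤ C0 * (1/2) ^ p := by
    intro p hp1 hpd
    have hp0 : (0:ℝ) ≤ p := by linarith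
    have humeas : Measurable u := by
      rw [hu]; fun_prop
    have hfrd : ((Module.finrank ℝ (EuclideanSpace ℝ (Fin d))) : ℝ) = (d : ℝ) := by
      simp [finrank_euclideanSpace]
    have hint : Integrable (fun x : EuclideanSpace ℝ (Fin d) => (1 + ‖x‖) ^ (-(ε * p))) := by
      apply integrable_one_add_norm
      rw [hfrd]; exact hpd
    have hupow : ∀ x : EuclideanSpace ℝ (Fin d), |u x| ^ p = (1 + ‖x‖) ^ (-(ε * p)) := by
      intro x
      rw [abs_of_pos (hux x)]
      show ((1 + ‖x‖) ^ (-ε)) ^ p = (1 + ‖x‖) ^ (-(ε * p))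
      rw [← Real.rpow_mul (by positivity), neg_mul]
    have hint_up : Integrable (fun x => |u x| ^ p) :=
      hint.congr (ae_of_all _ fun x => (hupow x).symm)
    have hq0 : (ENNReal.ofReal p) ≠ 0 := by
      simp only [ne_eq, ENNReal.ofReal_eq_zero, not_le]
      linarith
    have hqt : (ENNReal.ofReal p) ≠ ⊤ := ENNReal.ofReal_ne_top
    have huLp : MemLp u (ENNReal.ofReal p) volume := by
      have h1 : Integrable (fun x => ‖u x‖ ^ (ENNReal.ofReal p).toReal) volume := by
        refine hint_up.congr (ae_of_all _ fun x => ?_)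
        simp [ENNReal.toReal_ofReal hp0, Real.norm_eq_abs]
      have h2 : MemLp (fun x => ‖u x‖ ^ (ENNReal.ofReal p).toReal)
          (ENNReal.ofReal p / ENNReal.ofReal p) volume := by
        rw [ENNReal.div_self hq0 hqt]
        exact (memLp_one_iff_integrable).2 h1
      exact (memLp_norm_rpow_iff humeas.aestronglyMeasurable hq0 hqt).1 h2
    have hne : ¬ u =ᵐ[volume] (0 : EuclideanSpace ℝ (Fin d) → ℝ) := by
      intro h
      have h' : ∀ᵐ x : EuclideanSpace ℝ (Fin d) ∂volume, u x = 0 := h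
      rw [MeasureTheory.ae_iff] at h'
      have h2 : volume {x : EuclideanSpace ℝ (Fin d) | ¬ u x = 0} = 0 := h'
      have h3 : {x : EuclideanSpace ℝ (Fin d) | ¬ u x = 0} = Set.univ :=
        Set.eq_univ_of_forall fun x => (hux x).ne'
      rw [h3] at h2
      have h4 : volume (Metric.ball (0 : EuclideanSpace ℝ (Fin d)) 1)
          ≤ volume (Set.univ : Set (EuclideanSpace ℝ (Fin d))) :=
        measure_mono (Set.subset_univ _)
      rw [h2] at h4
      exact absurd (le_antisymm h4 zero_le) hball.ne'
    have hdenom : 0 < ∫ x, |u x| ^ p := by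
      rw [integral_pos_iff_support_of_nonneg
        (fun x => Real.rpow_nonneg (abs_nonneg _) _) hint_up]
      have hsupp : Function.support (fun x : EuclideanSpace ℝ (Fin d) => |u x| ^ p)
          = Set.univ :=
        Set.eq_univ_of_forall fun x =>
          (Real.rpow_pos_of_pos (abs_pos.2 (hux x).ne') p).ne'
      rw [hsupp]
      exact hball.trans_le (measure_mono (Set.subset_univ _))
    -- inner integral bound
    have hinner : ∀ x, (∫ y, K x y * |u x - u y| ^ p) ≤ C0 * ((1/2) * u x) ^ p := by
      intro x
      set Bd : Set (EuclideanSpace ℝ (Fin d)) :=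
        Metric.closedBall (T x) 1 ∪ Metric.closedBall (S x) nS with hBd
      have hBdmeas : MeasurableSet Bd :=
        measurableSet_closedBall.union measurableSet_closedBall
      have hBdfin : volume Bd < ⊤ :=
        lt_of_le_of_lt (measure_union_le _ _)
          (ENNReal.add_lt_top.2 ⟨measure_closedBall_lt_top, measure_closedBall_lt_top⟩)
      have hcx : (0:ℝ) ≤ (1/2) * u x := mul_nonneg (by norm_num) (hux x).le
      set c : ℝ := 2 * M * ((1/2) * u x) ^ p with hc
      have hc0 : 0 ≤ c :=
        mul_nonneg (by linarith) (Real.rpow_nonneg hcx _)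
      have hpt : ∀ y, K x y * |u x - u y| ^ p ≤ Bd.indicator (fun _ => c) y := by
        intro y
        by_cases hxy : K x y = 0
        · rw [hxy, zero_mul]
          exact Set.indicator_nonneg (fun _ _ => hc0) y
        · rw [Set.indicator_of_mem ((hgeo x y hxy).2)]
          have h1 : K x y ≤ 2 * M := by
            simp only [hK]
            linarith [hψM (y - T x), hψM (x - T y)]
          have h2 : |u x - u y| ^ p ≤ ((1/2) * u x) ^ p :=
            Real.rpow_le_rpow (abs_nonneg _) (hcore x y hxy) hp0
          calc K x y * |u x - u y| ^ p ≤ (2 * M) * ((1/2) * u x) ^ p :=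
                mul_le_mul h1 h2 (Real.rpow_nonneg (abs_nonneg _) _) (by linarith)
            _ = c := rfl
      have hindint : Integrable (Bd.indicator fun _ => c) := by
        rw [integrable_indicator_iff hBdmeas]
        exact integrableOn_const hBdfin.ne
      have h3 : (∫ y, K x y * |u x - u y| ^ p) ≤ ∫ y, Bd.indicator (fun _ => c) y :=
        integral_mono_of_nonneg
          (ae_of_all _ fun y =>
            mul_nonneg (hKnn x y) (Real.rpow_nonneg (abs_nonneg _) _))
          hindint (ae_of_all _ hpt)
      have h4 : (∫ y, Bd.indicator (fun _ => c) y) = (volume Bd).toReal * c := by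
        rw [integral_indicator_const _ hBdmeas, smul_eq_mul]
        rfl
      have e1 : volume (Metric.closedBall (T x) 1)
          = volume (Metric.closedBall (0 : EuclideanSpace ℝ (Fin d)) 1) :=
        Measure.addHaar_closedBall_center _ _ _
      have e2 : volume (Metric.closedBall (S x) nS)
          = volume (Metric.closedBall (0 : EuclideanSpace ℝ (Fin d)) nS) :=
        Measure.addHaar_closedBall_center _ _ _
      have h6 : volume Bd ≤ volume (Metric.closedBall (0 : EuclideanSpace ℝ (Fin d)) 1)
          + volume (Metric.closedBall (0 : EuclideanSpace ℝ (Fin d)) nS) := by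
        refine le_trans (measure_union_le _ _) ?_
        rw [e1, e2]
      have h5 : (volume Bd).toReal ≤ V := by
        rw [hVdef, ← ENNReal.toReal_add measure_closedBall_lt_top.ne
          measure_closedBall_lt_top.ne]
        exact ENNReal.toReal_mono
          (ENNReal.add_lt_top.2 ⟨measure_closedBall_lt_top, measure_closedBall_lt_top⟩).ne h6
      calc (∫ y, K x y * |u x - u y| ^ p) ≤ (volume Bd).toReal * c := h3.trans_eq h4
        _ ≤ V * c := mul_le_mul_of_nonneg_right h5 hc0
        _ = C0 * ((1/2) * u x) ^ p := by rw [hC0def, hc]; ring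
    -- outer integral bound
    have hhalf : ∀ x : EuclideanSpace ℝ (Fin d),
        C0 * ((1/2) * u x) ^ p = (C0 * (1/2 : ℝ) ^ p) * |u x| ^ p := by
      intro x
      rw [Real.mul_rpow (by norm_num) (hux x).le, abs_of_pos (hux x)]
      ring
    have hRHSint : Integrable (fun x => C0 * ((1/2) * u x) ^ p) :=
      (hint_up.const_mul (C0 * (1/2 : ℝ) ^ p)).congr
        (ae_of_all _ fun x => (hhalf x).symm)
    have hnum : (∫ x, ∫ y, K x y * |u x - u y| ^ p)
        ≤ C0 * (1/2 : ℝ) ^ p * ∫ x, |u x| ^ p := by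
      have h7 : (∫ x, ∫ y, K x y * |u x - u y| ^ p)
          ≤ ∫ x, C0 * ((1/2) * u x) ^ p :=
        integral_mono_of_nonneg
          (ae_of_all _ fun x => integral_nonneg fun y =>
            mul_nonneg (hKnn x y) (Real.rpow_nonneg (abs_nonneg _) _))
          hRHSint (ae_of_all _ hinner)
      have h8 : (∫ x, C0 * ((1/2) * u x) ^ p)
          = C0 * (1/2 : ℝ) ^ p * ∫ x, |u x| ^ p := by
        calc (∫ x, C0 * ((1/2) * u x) ^ p)
            = ∫ x, (C0 * (1/2 : ℝ) ^ p) * |u x| ^ p := by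
              congr 1
              funext x
              exact hhalf x
          _ = C0 * (1/2 : ℝ) ^ p * ∫ x, |u x| ^ p := integral_const_mul _ _
      linarith
    have hfrac : (∫ x, ∫ y, K x y * |u x - u y| ^ p) / (∫ x, |u x| ^ p)
        ≤ C0 * (1/2 : ℝ) ^ p := by
      rw [div_le_iff₀ hdenom]
      exact hnum
    have hmem : (∫ x, ∫ y, K x y * |u x - u y| ^ p) / (∫ x, |u x| ^ p)
        ∈ eigSet d p K := ⟨u, huLp, hne, rfl⟩
    have hle := csInf_le ⟨(0:ℝ), fun r hr => hSet p r hr⟩ hmem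
    rw [lambdaOne_eq_sInf]
    exact le_trans hle hfrac
  -- assemble
  set p₀ : ℝ := max 1 ((d + 1) / ε) with hp₀def
  have hmain : ∀ p : ℝ, p₀ ≤ p → lambdaOne d p K ≤ C0 * (1/2 : ℝ) ^ p := by
    intro p hp
    apply hbound p (le_trans (le_max_left _ _) hp)
    have h1 : ((d : ℝ) + 1) / ε ≤ p := le_trans (le_max_right _ _) hp
    rw [div_le_iff₀ hε] at h1
    nlinarith
  have htend : Tendsto (fun p : ℝ => lambdaOne d p K) atTop (nhds 0) := by
    have hupper : Tendsto (fun p : ℝ => C0 * (1/2 : ℝ) ^ p) atTop (nhds 0) := by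
      have h := (tendsto_rpow_atTop_of_base_lt_one (1/2)
        (by norm_num) (by norm_num)).const_mul C0
      simpa using h
    refine tendsto_of_tendsto_of_tendsto_of_le_of_le' tendsto_const_nhds hupper ?_ ?_
    · exact Eventually.of_forall fun p => hlamnn p
    · exact eventually_atTop.2 ⟨p₀, hmain⟩
  refine ⟨htend, ?_⟩
  rintro ⟨c, hc, hcl⟩
  have hcle : c ≤ 0 :=
    ge_of_tendsto htend (eventually_atTop.2 ⟨1, fun p hp => hcl p hp⟩)
  linarith
end

section
/- The first eigenvalue on the whole space is the limit of the first eigenvalues on expanding balls: λ_{1,p}(ℝ^d) = lim_{R→∞} λ_{1,p}(B_R), where B_R is the ball of radius R centered at the origin. -/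
open MeasureTheory Filter Metric Set

/-- The first eigenvalue of the nonlocal `p`-Laplacian with kernel `K` on a domain `Ω`:
functions in `L^p(Ω)` are extended by zero outside `Ω`. -/
noncomputable def lambdaOneDom (d : ℕ) (p : ℝ)
    (K : EuclideanSpace ℝ (Fin d) → EuclideanSpace ℝ (Fin d) → ℝ)
    (Ω : Set (EuclideanSpace ℝ (Fin d))) : ℝ :=
  sInf { r : ℝ |
    ∃ u : EuclideanSpace ℝ (Fin d) → ℝ,
      MemLp u (ENNReal.ofReal p) volume ∧
      (∀ x, x ∉ Ω → u x = 0) ∧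
      ¬ u =ᵐ[volume] (0 : EuclideanSpace ℝ (Fin d) → ℝ) ∧
      r = (∫ x, ∫ y, K x y * |u x - u y| ^ p) / (∫ x in Ω, |u x| ^ p) }



private lemma aux_rpow_bound {p : ℝ} (hp : 1 ≤ p) (a b : ℝ) :
    |a - b| ^ p ≤ 2 ^ p * (|a| ^ p + |b| ^ p) := by
  have hp0 : (0:ℝ) ≤ p := le_trans zero_le_one hp
  have h2 : |a - b| ≤ 2 * max |a| |b| := by
    refine (abs_sub a b).trans ?_
    rcases le_total |a| |b| with h | h
    · rw [max_eq_right h]; nlinarith [abs_nonneg a, abs_nonneg b]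
    · rw [max_eq_left h]; nlinarith [abs_nonneg a, abs_nonneg b]
  calc |a - b| ^ p ≤ (2 * max |a| |b|) ^ p := Real.rpow_le_rpow (abs_nonneg _) h2 hp0
    _ = 2 ^ p * (max |a| |b|) ^ p :=
        Real.mul_rpow (by norm_num) (le_max_iff.mpr (Or.inl (abs_nonneg a)))
    _ ≤ 2 ^ p * (|a| ^ p + |b| ^ p) := by
        refine mul_le_mul_of_nonneg_left ?_ (Real.rpow_nonneg (by norm_num) p)
        rcases le_total |a| |b| with h | h
        · rw [max_eq_right h]
          exact le_add_of_nonneg_left (Real.rpow_nonneg (abs_nonneg a) p)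
        · rw [max_eq_left h]
          exact le_add_of_nonneg_right (Real.rpow_nonneg (abs_nonneg b) p)


private lemma aux_kernel_integrable (d : ℕ) (p : ℝ) (hp : 1 ≤ p)
    (ψ : EuclideanSpace ℝ (Fin d) → ℝ) (hψmeas : Measurable ψ) (hψnn : ∀ z, 0 ≤ ψ z)
    (M : ℝ) (hψbdd : ∀ z, ψ z ≤ M)
    (hψsupp : ∀ z, ψ z ≠ 0 → z ∈ Metric.closedBall (0 : EuclideanSpace ℝ (Fin d)) 1)
    (A : Matrix (Fin d) (Fin d) ℝ) (hA : IsUnit A.det)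
    (K : EuclideanSpace ℝ (Fin d) → EuclideanSpace ℝ (Fin d) → ℝ)
    (hK : K = fun x y =>
      ψ (y - Matrix.toEuclideanLin A x) + ψ (x - Matrix.toEuclideanLin A y))
    (u : EuclideanSpace ℝ (Fin d) → ℝ) (hu : Measurable u)
    (hui : Integrable (fun x => |u x| ^ p)) :
    Integrable (fun z : EuclideanSpace ℝ (Fin d) × EuclideanSpace ℝ (Fin d) =>
        K z.1 z.2 * |u z.1| ^ p) (volume.prod volume) ∧
      Integrable (fun z : EuclideanSpace ℝ (Fin d) × EuclideanSpace ℝ (Fin d) =>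
        K z.1 z.2 * |u z.2| ^ p) (volume.prod volume) := by
  set T : EuclideanSpace ℝ (Fin d) →ₗ[ℝ] EuclideanSpace ℝ (Fin d) := Matrix.toEuclideanLin A with hT
  have hp0 : (0:ℝ) ≤ p := le_trans zero_le_one hp
  have hM0 : 0 ≤ M := le_trans (hψnn 0) (hψbdd 0)
  have hTc : Continuous fun x : EuclideanSpace ℝ (Fin d) => T x := T.continuous_of_finiteDimensional
  have hdet : LinearMap.det T = A.det := LinearMap.det_toLin (PiLp.basisFun 2 ℝ (Fin d)) A
  have hdne : LinearMap.det T ≠ 0 := by rw [hdet]; exact hA.ne_zero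
  have hKnn : ∀ x y, 0 ≤ K x y := by
    subst hK; intro x y; exact add_nonneg (hψnn _) (hψnn _)
  have hKsymm : ∀ x y, K x y = K y x := by
    subst hK; intro x y; simp [add_comm]
  have hKm : Measurable (fun z : EuclideanSpace ℝ (Fin d) × EuclideanSpace ℝ (Fin d) => K z.1 z.2) := by
    subst hK
    exact (hψmeas.comp ((measurable_snd.sub (hTc.measurable.comp measurable_fst)))).add
      (hψmeas.comp ((measurable_fst.sub (hTc.measurable.comp measurable_snd))))
  -- pointwise bound for K
  have hKle : ∀ x y : EuclideanSpace ℝ (Fin d), K x y ≤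
      M * (Metric.closedBall (T x) 1).indicator (fun _ => (1:ℝ)) y
        + M * ((fun w => T w) ⁻¹' Metric.closedBall x 1).indicator (fun _ => (1:ℝ)) y := by
    subst hK
    intro x y
    have h1 : ψ (y - T x) ≤ M * (Metric.closedBall (T x) 1).indicator (fun _ => (1:ℝ)) y := by
      by_cases h : ψ (y - T x) = 0
      · rw [h]
        exact mul_nonneg hM0 (Set.indicator_nonneg (fun _ _ => zero_le_one) y)
      · have hy : y ∈ Metric.closedBall (T x) 1 := by
          have := hψsupp _ h
          rw [Metric.mem_closedBall, dist_eq_norm]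
          simpa [mem_closedBall_zero_iff] using this
        rw [Set.indicator_of_mem hy, mul_one]
        exact hψbdd _
    have h2 : ψ (x - T y) ≤ M * ((fun w => T w) ⁻¹' Metric.closedBall x 1).indicator
        (fun _ => (1:ℝ)) y := by
      by_cases h : ψ (x - T y) = 0
      · rw [h]
        exact mul_nonneg hM0 (Set.indicator_nonneg (fun _ _ => zero_le_one) y)
      · have hy : y ∈ (fun w => T w) ⁻¹' Metric.closedBall x 1 := by
          have := hψsupp _ h
          simp only [Set.mem_preimage, Metric.mem_closedBall, dist_eq_norm]
          rw [mem_closedBall_zero_iff] at this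
          calc ‖T y - x‖ = ‖x - T y‖ := norm_sub_rev _ _
            _ ≤ 1 := this
        rw [Set.indicator_of_mem hy, mul_one]
        exact hψbdd _
    exact add_le_add h1 h2
  -- measure facts
  have m1 : ∀ x : EuclideanSpace ℝ (Fin d), volume (Metric.closedBall x 1) = volume (Metric.closedBall (0:EuclideanSpace ℝ (Fin d)) 1) :=
    fun x => Measure.addHaar_closedBall_center volume x 1
  have m1fin : volume (Metric.closedBall (0:EuclideanSpace ℝ (Fin d)) 1) < ⊤ := measure_closedBall_lt_top
  have m2 : ∀ x : EuclideanSpace ℝ (Fin d), volume ((fun w => T w) ⁻¹' Metric.closedBall x 1)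
      = ENNReal.ofReal |(LinearMap.det T)⁻¹| * volume (Metric.closedBall (0:EuclideanSpace ℝ (Fin d)) 1) := by
    intro x
    rw [Measure.addHaar_preimage_linearMap volume hdne, m1 x]
  have m2fin : ENNReal.ofReal |(LinearMap.det T)⁻¹| * volume (Metric.closedBall (0:EuclideanSpace ℝ (Fin d)) 1) < ⊤ :=
    ENNReal.mul_lt_top ENNReal.ofReal_lt_top m1fin
  -- the dominating function g x for K x ·
  have hgint : ∀ x : EuclideanSpace ℝ (Fin d), Integrable (fun y =>
      M * (Metric.closedBall (T x) 1).indicator (fun _ => (1:ℝ)) y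
        + M * ((fun w => T w) ⁻¹' Metric.closedBall x 1).indicator (fun _ => (1:ℝ)) y) volume := by
    intro x
    have i1 : Integrable ((Metric.closedBall (T x) 1).indicator (fun _ => (1:ℝ))) volume :=
      (integrable_indicator_iff measurableSet_closedBall).2
        (integrableOn_const ((m1 (T x)).le.trans_lt m1fin).ne)
    have i2 : Integrable (((fun w => T w) ⁻¹' Metric.closedBall x 1).indicator
        (fun _ => (1:ℝ))) volume :=
      (integrable_indicator_iff (hTc.measurable measurableSet_closedBall)).2
        (integrableOn_const ((m2 x).le.trans_lt m2fin).ne)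
    exact (i1.const_mul M).add (i2.const_mul M)
  have hKyint : ∀ x : EuclideanSpace ℝ (Fin d), Integrable (fun y => K x y) volume := by
    intro x
    refine Integrable.mono' (hgint x) ((hKm.comp (measurable_prodMk_left)).aestronglyMeasurable)
      (Eventually.of_forall fun y => ?_)
    rw [Real.norm_of_nonneg (hKnn x y)]
    exact hKle x y
  set C : ℝ := M * (volume (Metric.closedBall (0:EuclideanSpace ℝ (Fin d)) 1)).toReal
      + M * (ENNReal.ofReal |(LinearMap.det T)⁻¹| * volume (Metric.closedBall (0:EuclideanSpace ℝ (Fin d)) 1)).toReal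
    with hC
  have hintK : ∀ x : EuclideanSpace ℝ (Fin d), (∫ y, K x y) ≤ C := by
    intro x
    have := integral_mono (hKyint x) (hgint x) (fun y => hKle x y)
    refine this.trans ?_
    rw [integral_add ((((integrable_indicator_iff measurableSet_closedBall).2
        (integrableOn_const ((m1 (T x)).le.trans_lt m1fin).ne))).const_mul M)
      ((((integrable_indicator_iff (hTc.measurable measurableSet_closedBall)).2
        (integrableOn_const ((m2 x).le.trans_lt m2fin).ne))).const_mul M),
      integral_const_mul, integral_const_mul, integral_indicator_const _ measurableSet_closedBall,
      integral_indicator_const _ (hTc.measurable measurableSet_closedBall), measureReal_def, measureReal_def, m1 (T x), m2 x]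
    simp [hC]
  have hC0 : 0 ≤ C := le_trans (integral_nonneg fun y => hKnn 0 y) (hintK 0)
  -- first integrability
  have h1f : AEStronglyMeasurable (fun z : EuclideanSpace ℝ (Fin d) × EuclideanSpace ℝ (Fin d) => K z.1 z.2 * |u z.1| ^ p)
      (volume.prod volume) := by
    exact (hKm.mul (((Real.continuous_rpow_const hp0).measurable).comp
      ((hu.comp measurable_fst).abs))).aestronglyMeasurable
  have I1 : Integrable (fun z : EuclideanSpace ℝ (Fin d) × EuclideanSpace ℝ (Fin d) => K z.1 z.2 * |u z.1| ^ p) (volume.prod volume) := by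
    refine (integrable_prod_iff h1f).2 ⟨Eventually.of_forall fun x => ?_, ?_⟩
    · show Integrable (fun y => K x y * |u x| ^ p) volume
      exact (hKyint x).mul_const _
    · refine Integrable.mono' (hui.const_mul C)
        (h1f.norm.integral_prod_right') (Eventually.of_forall fun x => ?_)
      have hnn : (0:ℝ) ≤ ∫ y, ‖K x y * |u x| ^ p‖ := integral_nonneg fun y => norm_nonneg _
      rw [Real.norm_of_nonneg hnn]
      have heq : (fun y => ‖K x y * |u x| ^ p‖) = fun y => K x y * |u x| ^ p := by
        funext y
        exact Real.norm_of_nonneg (mul_nonneg (hKnn x y) (Real.rpow_nonneg (abs_nonneg _) p))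
      rw [heq, integral_mul_const]
      calc (∫ y, K x y) * |u x| ^ p ≤ C * |u x| ^ p :=
            mul_le_mul_of_nonneg_right (hintK x) (Real.rpow_nonneg (abs_nonneg _) p)
        _ = C * |u x| ^ p := rfl
  refine ⟨I1, ?_⟩
  have := I1.swap
  refine this.congr (Eventually.of_forall fun z => ?_)
  show K z.2 z.1 * |u z.2| ^ p = K z.1 z.2 * |u z.2| ^ p
  rw [hKsymm z.2 z.1]


private lemma aux_num_tendsto (d : ℕ) (p : ℝ) (hp : 1 ≤ p)
    (ψ : EuclideanSpace ℝ (Fin d) → ℝ) (hψmeas : Measurable ψ) (hψnn : ∀ z, 0 ≤ ψ z)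
    (M : ℝ) (hψbdd : ∀ z, ψ z ≤ M)
    (hψsupp : ∀ z, ψ z ≠ 0 → z ∈ Metric.closedBall (0 : EuclideanSpace ℝ (Fin d)) 1)
    (A : Matrix (Fin d) (Fin d) ℝ) (hA : IsUnit A.det)
    (K : EuclideanSpace ℝ (Fin d) → EuclideanSpace ℝ (Fin d) → ℝ)
    (hK : K = fun x y =>
      ψ (y - Matrix.toEuclideanLin A x) + ψ (x - Matrix.toEuclideanLin A y))
    (u : EuclideanSpace ℝ (Fin d) → ℝ) (hu : Measurable u)
    (hui : Integrable (fun x => |u x| ^ p)) :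
    Tendsto (fun R : ℝ => ∫ x, ∫ y, K x y *
        |(Metric.ball (0 : EuclideanSpace ℝ (Fin d)) R).indicator u x
          - (Metric.ball (0 : EuclideanSpace ℝ (Fin d)) R).indicator u y| ^ p) atTop
      (nhds (∫ x, ∫ y, K x y * |u x - u y| ^ p)) := by
  have hp0 : (0:ℝ) ≤ p := le_trans zero_le_one hp
  have hKnn : ∀ x y, 0 ≤ K x y := by
    subst hK; intro x y; exact add_nonneg (hψnn _) (hψnn _)
  have hKm : Measurable (fun z : EuclideanSpace ℝ (Fin d) × EuclideanSpace ℝ (Fin d) =>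
      K z.1 z.2) := by
    have hTc : Continuous fun x : EuclideanSpace ℝ (Fin d) => Matrix.toEuclideanLin A x :=
      (Matrix.toEuclideanLin A).continuous_of_finiteDimensional
    subst hK
    exact (hψmeas.comp ((measurable_snd.sub (hTc.measurable.comp measurable_fst)))).add
      (hψmeas.comp ((measurable_fst.sub (hTc.measurable.comp measurable_snd))))
  obtain ⟨I1, I2⟩ := aux_kernel_integrable d p hp ψ hψmeas hψnn M hψbdd hψsupp A hA K hK u hu hui
  set B : EuclideanSpace ℝ (Fin d) × EuclideanSpace ℝ (Fin d) → ℝ :=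
    fun z => (2:ℝ) ^ p * (K z.1 z.2 * |u z.1| ^ p + K z.1 z.2 * |u z.2| ^ p) with hB
  have IB : Integrable B (volume.prod volume) := (I1.add I2).const_mul _
  -- generic bound
  have hbound : ∀ v : EuclideanSpace ℝ (Fin d) → ℝ, (∀ x, |v x| ≤ |u x|) →
      ∀ z : EuclideanSpace ℝ (Fin d) × EuclideanSpace ℝ (Fin d),
      ‖K z.1 z.2 * |v z.1 - v z.2| ^ p‖ ≤ B z := by
    intro v hv z
    rw [Real.norm_of_nonneg (mul_nonneg (hKnn _ _) (Real.rpow_nonneg (abs_nonneg _) p))]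
    have h1 : |v z.1 - v z.2| ^ p ≤ 2 ^ p * (|u z.1| ^ p + |u z.2| ^ p) := by
      refine (aux_rpow_bound hp _ _).trans ?_
      refine mul_le_mul_of_nonneg_left (add_le_add ?_ ?_) (Real.rpow_nonneg (by norm_num) p)
      · exact Real.rpow_le_rpow (abs_nonneg _) (by simpa using hv z.1) hp0
      · exact Real.rpow_le_rpow (abs_nonneg _) (by simpa using hv z.2) hp0
    calc K z.1 z.2 * |v z.1 - v z.2| ^ p
        ≤ K z.1 z.2 * (2 ^ p * (|u z.1| ^ p + |u z.2| ^ p)) :=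
          mul_le_mul_of_nonneg_left h1 (hKnn _ _)
      _ = B z := by rw [hB]; ring
  have habs : ∀ x, |u x| ≤ |u x| := fun x => le_rfl
  have hvabs : ∀ (R : ℝ) x, |(Metric.ball (0 : EuclideanSpace ℝ (Fin d)) R).indicator u x|
      ≤ |u x| := by
    intro R x
    by_cases hx : x ∈ Metric.ball (0 : EuclideanSpace ℝ (Fin d)) R
    · rw [Set.indicator_of_mem hx]
    · rw [Set.indicator_of_notMem hx]; simpa using abs_nonneg (u x)
  have hmeas : ∀ v : EuclideanSpace ℝ (Fin d) → ℝ, Measurable v →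
      Measurable (fun z : EuclideanSpace ℝ (Fin d) × EuclideanSpace ℝ (Fin d) =>
        K z.1 z.2 * |v z.1 - v z.2| ^ p) := by
    intro v hv
    exact hKm.mul ((Real.continuous_rpow_const hp0).measurable.comp
      (((hv.comp measurable_fst).sub (hv.comp measurable_snd)).abs))
  have hint : ∀ v : EuclideanSpace ℝ (Fin d) → ℝ, Measurable v → (∀ x, |v x| ≤ |u x|) →
      Integrable (fun z : EuclideanSpace ℝ (Fin d) × EuclideanSpace ℝ (Fin d) =>
        K z.1 z.2 * |v z.1 - v z.2| ^ p) (volume.prod volume) := by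
    intro v hv hvle
    exact Integrable.mono' IB (hmeas v hv).aestronglyMeasurable
      (Eventually.of_forall (hbound v hvle))
  have heq : ∀ v : EuclideanSpace ℝ (Fin d) → ℝ, Measurable v → (∀ x, |v x| ≤ |u x|) →
      (∫ x, ∫ y, K x y * |v x - v y| ^ p)
        = ∫ z : EuclideanSpace ℝ (Fin d) × EuclideanSpace ℝ (Fin d),
            K z.1 z.2 * |v z.1 - v z.2| ^ p ∂(volume.prod volume) := by
    intro v hv hvle
    exact integral_integral (hint v hv hvle)
  have hvmeas : ∀ R : ℝ, Measurable ((Metric.ball (0 : EuclideanSpace ℝ (Fin d)) R).indicator u) :=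
    fun R => hu.indicator measurableSet_ball
  have key : Tendsto (fun R : ℝ => ∫ z : EuclideanSpace ℝ (Fin d) × EuclideanSpace ℝ (Fin d),
      K z.1 z.2 * |(Metric.ball (0 : EuclideanSpace ℝ (Fin d)) R).indicator u z.1
        - (Metric.ball (0 : EuclideanSpace ℝ (Fin d)) R).indicator u z.2| ^ p
      ∂(volume.prod volume)) atTop
      (nhds (∫ z : EuclideanSpace ℝ (Fin d) × EuclideanSpace ℝ (Fin d),
        K z.1 z.2 * |u z.1 - u z.2| ^ p ∂(volume.prod volume))) := by
    refine tendsto_integral_filter_of_dominated_convergence B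
      (Eventually.of_forall fun R => (hmeas _ (hvmeas R)).aestronglyMeasurable)
      (Eventually.of_forall fun R => Eventually.of_forall (hbound _ (hvabs R))) IB
      (Eventually.of_forall fun z => ?_)
    have hev : ∀ᶠ R : ℝ in atTop,
        K z.1 z.2 * |(Metric.ball (0 : EuclideanSpace ℝ (Fin d)) R).indicator u z.1
          - (Metric.ball (0 : EuclideanSpace ℝ (Fin d)) R).indicator u z.2| ^ p
        = K z.1 z.2 * |u z.1 - u z.2| ^ p := by
      filter_upwards [eventually_gt_atTop (max ‖z.1‖ ‖z.2‖)] with R hR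
      rw [Set.indicator_of_mem (mem_ball_zero_iff.2 ((le_max_left _ _).trans_lt hR)),
        Set.indicator_of_mem (mem_ball_zero_iff.2 ((le_max_right _ _).trans_lt hR))]
    exact Tendsto.congr' (EventuallyEq.symm hev) tendsto_const_nhds
  have e1 : (fun R : ℝ => ∫ x, ∫ y, K x y *
      |(Metric.ball (0 : EuclideanSpace ℝ (Fin d)) R).indicator u x
        - (Metric.ball (0 : EuclideanSpace ℝ (Fin d)) R).indicator u y| ^ p)
      = fun R : ℝ => ∫ z : EuclideanSpace ℝ (Fin d) × EuclideanSpace ℝ (Fin d),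
          K z.1 z.2 * |(Metric.ball (0 : EuclideanSpace ℝ (Fin d)) R).indicator u z.1
            - (Metric.ball (0 : EuclideanSpace ℝ (Fin d)) R).indicator u z.2| ^ p
          ∂(volume.prod volume) := by
    funext R
    exact heq _ (hvmeas R) (hvabs R)
  rw [e1, heq u hu habs]
  exact key


private lemma aux_den_tendsto (d : ℕ) (p : ℝ) (hp : 1 ≤ p)
    (u : EuclideanSpace ℝ (Fin d) → ℝ) (hu : Measurable u)
    (hui : Integrable (fun x => |u x| ^ p)) :
    Tendsto (fun R : ℝ => ∫ x in Metric.ball (0 : EuclideanSpace ℝ (Fin d)) R,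
        |(Metric.ball (0 : EuclideanSpace ℝ (Fin d)) R).indicator u x| ^ p) atTop
      (nhds (∫ x, |u x| ^ p)) := by
  have hp0 : (0:ℝ) ≤ p := le_trans zero_le_one hp
  have step1 : ∀ R : ℝ, (∫ x in Metric.ball (0 : EuclideanSpace ℝ (Fin d)) R,
      |(Metric.ball (0 : EuclideanSpace ℝ (Fin d)) R).indicator u x| ^ p)
      = ∫ x, (Metric.ball (0 : EuclideanSpace ℝ (Fin d)) R).indicator
          (fun x => |u x| ^ p) x := by
    intro R
    rw [integral_indicator measurableSet_ball]
    exact setIntegral_congr_fun measurableSet_ball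
      (fun x hx => by rw [Set.indicator_of_mem hx])
  simp only [step1]
  refine tendsto_integral_filter_of_dominated_convergence (fun x => |u x| ^ p)
    (Eventually.of_forall fun R => ?_) (Eventually.of_forall fun R => ?_) hui
    (Eventually.of_forall fun x => ?_)
  · exact (((Real.continuous_rpow_const hp0).measurable.comp hu.abs).indicator
      measurableSet_ball).aestronglyMeasurable
  · refine Eventually.of_forall fun x => ?_
    by_cases hx : x ∈ Metric.ball (0 : EuclideanSpace ℝ (Fin d)) R
    · rw [Set.indicator_of_mem hx, Real.norm_of_nonneg (Real.rpow_nonneg (abs_nonneg _) p)]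
    · rw [Set.indicator_of_notMem hx]
      simpa using Real.rpow_nonneg (abs_nonneg (u x)) p
  · have hev : ∀ᶠ R : ℝ in atTop, (Metric.ball (0 : EuclideanSpace ℝ (Fin d)) R).indicator
        (fun x => |u x| ^ p) x = |u x| ^ p := by
      filter_upwards [eventually_gt_atTop ‖x‖] with R hR
      rw [Set.indicator_of_mem (mem_ball_zero_iff.2 hR)]
    exact Tendsto.congr' (EventuallyEq.symm hev) tendsto_const_nhds


theorem first_eigenvalue_limit_of_balls (d : ℕ) (hd : 1 ≤ d) (p : ℝ) (hp : 1 ≤ p)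
    (ψ : EuclideanSpace ℝ (Fin d) → ℝ)
    (hψmeas : Measurable ψ) (hψnn : ∀ z, 0 ≤ ψ z)
    (hψbdd : ∃ M : ℝ, ∀ z, ψ z ≤ M)
    (hψsupp : ∀ z, ψ z ≠ 0 → z ∈ Metric.closedBall (0 : EuclideanSpace ℝ (Fin d)) 1)
    (A : Matrix (Fin d) (Fin d) ℝ) (hA : IsUnit A.det)
    (K : EuclideanSpace ℝ (Fin d) → EuclideanSpace ℝ (Fin d) → ℝ)
    (hK : K = fun x y =>
      ψ (y - Matrix.toEuclideanLin A x) + ψ (x - Matrix.toEuclideanLin A y)) :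
    Tendsto (fun R : ℝ => lambdaOneDom d p K (Metric.ball 0 R)) atTop
      (nhds (lambdaOne d p K)) := by
  obtain ⟨M, hψbdd⟩ := hψbdd
  have hp0 : (0:ℝ) ≤ p := le_trans zero_le_one hp
  have hpne : p ≠ 0 := by linarith
  have hKnn : ∀ x y, 0 ≤ K x y := by
    subst hK; intro x y; exact add_nonneg (hψnn _) (hψnn _)
  -- the sets
  set S : Set ℝ := {r : ℝ |
    ∃ u : EuclideanSpace ℝ (Fin d) → ℝ,
      MemLp u (ENNReal.ofReal p) volume ∧
      ¬ u =ᵐ[volume] (0 : EuclideanSpace ℝ (Fin d) → ℝ) ∧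
      r = (∫ x, ∫ y, K x y * |u x - u y| ^ p) / (∫ x, |u x| ^ p)} with hSdef
  set SR : ℝ → Set ℝ := fun R => {r : ℝ |
    ∃ u : EuclideanSpace ℝ (Fin d) → ℝ,
      MemLp u (ENNReal.ofReal p) volume ∧
      (∀ x, x ∉ Metric.ball (0 : EuclideanSpace ℝ (Fin d)) R → u x = 0) ∧
      ¬ u =ᵐ[volume] (0 : EuclideanSpace ℝ (Fin d) → ℝ) ∧
      r = (∫ x, ∫ y, K x y * |u x - u y| ^ p) /
        (∫ x in Metric.ball (0 : EuclideanSpace ℝ (Fin d)) R, |u x| ^ p)} with hSRdef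
  have hlam : lambdaOne d p K = sInf S := rfl
  have hlamR : ∀ R : ℝ, lambdaOneDom d p K (Metric.ball 0 R) = sInf (SR R) := fun R => rfl
  -- nonnegativity
  have hSnn : ∀ r ∈ S, (0:ℝ) ≤ r := by
    rintro r ⟨u, -, -, rfl⟩
    refine div_nonneg (integral_nonneg fun x => integral_nonneg fun y =>
      mul_nonneg (hKnn x y) (Real.rpow_nonneg (abs_nonneg _) p))
      (integral_nonneg fun x => Real.rpow_nonneg (abs_nonneg _) p)
  have hSRnn : ∀ R : ℝ, ∀ r ∈ SR R, (0:ℝ) ≤ r := by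
    rintro R r ⟨u, -, -, -, rfl⟩
    refine div_nonneg (integral_nonneg fun x => integral_nonneg fun y =>
      mul_nonneg (hKnn x y) (Real.rpow_nonneg (abs_nonneg _) p))
      (setIntegral_nonneg measurableSet_ball fun x _ => Real.rpow_nonneg (abs_nonneg _) p)
  have hbbS : BddBelow S := ⟨0, fun r hr => hSnn r hr⟩
  have hbbSR : ∀ R : ℝ, BddBelow (SR R) := fun R => ⟨0, fun r hr => hSRnn R r hr⟩
  -- a sample element
  set u₀ : EuclideanSpace ℝ (Fin d) → ℝ :=
    (Metric.ball (0 : EuclideanSpace ℝ (Fin d)) 1).indicator (fun _ => (1:ℝ)) with hu₀def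
  have hu₀Lp : MemLp u₀ (ENNReal.ofReal p) volume :=
    memLp_indicator_const _ measurableSet_ball 1 (Or.inr measure_ball_lt_top.ne)
  have hu₀ne : ¬ u₀ =ᵐ[volume] (0 : EuclideanSpace ℝ (Fin d) → ℝ) := by
    intro h
    have h0 : volume {x : EuclideanSpace ℝ (Fin d) | u₀ x ≠ 0} = 0 := by
      rw [Filter.EventuallyEq, ae_iff] at h
      simpa using h
    have hsub : Metric.ball (0 : EuclideanSpace ℝ (Fin d)) 1 ⊆
        {x : EuclideanSpace ℝ (Fin d) | u₀ x ≠ 0} := by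
      intro x hx
      simp only [Set.mem_setOf_eq, hu₀def, Set.indicator_of_mem hx]
      norm_num
    exact absurd (measure_mono_null hsub h0)
      (Metric.measure_ball_pos volume (0 : EuclideanSpace ℝ (Fin d)) one_pos).ne'
  have hSne : S.Nonempty :=
    ⟨_, ⟨u₀, hu₀Lp, hu₀ne, rfl⟩⟩
  have hSRne : ∀ R : ℝ, 1 ≤ R → (SR R).Nonempty := by
    intro R hR
    refine ⟨_, ⟨u₀, hu₀Lp, ?_, hu₀ne, rfl⟩⟩
    intro x hx
    refine Set.indicator_of_notMem (fun hx1 => hx ?_) _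
    exact Metric.ball_subset_ball hR hx1
  -- subset
  have hsub : ∀ R : ℝ, SR R ⊆ S := by
    rintro R r ⟨u, h1, h2, h3, rfl⟩
    refine ⟨u, h1, h3, ?_⟩
    rw [setIntegral_eq_integral_of_forall_compl_eq_zero
      (f := fun x => |u x| ^ p) (fun x hx => by show |u x| ^ p = 0; rw [h2 x hx]; simp [Real.zero_rpow hpne])]
  -- lower bound
  have hle : ∀ R : ℝ, 1 ≤ R → sInf S ≤ sInf (SR R) :=
    fun R hR => csInf_le_csInf hbbS (hSRne R hR) (hsub R)
  refine tendsto_order.2 ⟨?_, ?_⟩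
  · intro a ha
    filter_upwards [eventually_ge_atTop (1:ℝ)] with R hR
    rw [hlamR R]
    rw [hlam] at ha
    exact lt_of_lt_of_le ha (hle R hR)
  · intro b hb
    rw [hlam] at hb
    obtain ⟨r, hrS, hrb⟩ := exists_lt_of_csInf_lt hSne hb
    obtain ⟨u, huLp, hune, hrval⟩ := hrS
    -- replace u by a measurable representative
    set u' : EuclideanSpace ℝ (Fin d) → ℝ := huLp.aestronglyMeasurable.mk u with hu'def
    have heq : u =ᵐ[volume] u' := huLp.aestronglyMeasurable.ae_eq_mk
    have hu'meas : Measurable u' := huLp.aestronglyMeasurable.stronglyMeasurable_mk.measurable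
    have hu'Lp : MemLp u' (ENNReal.ofReal p) volume := huLp.ae_eq heq
    have hu'ne : ¬ u' =ᵐ[volume] (0 : EuclideanSpace ℝ (Fin d) → ℝ) :=
      fun h => hune (heq.trans h)
    have hu'int : Integrable (fun x => |u' x| ^ p) volume := by
      have := hu'Lp.integrable_norm_rpow (by simp only [ne_eq, ENNReal.ofReal_eq_zero, not_le]; linarith) (by simp)
      simpa [Real.norm_eq_abs, ENNReal.toReal_ofReal hp0] using this
    have hDeq : (∫ x, |u x| ^ p) = ∫ x, |u' x| ^ p :=
      integral_congr_ae (heq.mono fun x hx => by show |u x| ^ p = |u' x| ^ p; rw [hx])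
    have hNeq : (∫ x, ∫ y, K x y * |u x - u y| ^ p)
        = ∫ x, ∫ y, K x y * |u' x - u' y| ^ p := by
      refine integral_congr_ae (heq.mono fun x hx => ?_)
      show (∫ y, K x y * |u x - u y| ^ p) = ∫ y, K x y * |u' x - u' y| ^ p
      exact integral_congr_ae (heq.mono fun y hy => by show K x y * |u x - u y| ^ p = K x y * |u' x - u' y| ^ p; rw [hx, hy])
    have hrval' : r = (∫ x, ∫ y, K x y * |u' x - u' y| ^ p) / (∫ x, |u' x| ^ p) := by
      rw [hrval, hDeq, hNeq]
    -- denominator positivity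
    have hDpos : 0 < ∫ x, |u' x| ^ p := by
      rw [integral_pos_iff_support_of_nonneg
        (fun x => Real.rpow_nonneg (abs_nonneg _) p) hu'int]
      have hsupp : (Function.support fun x => |u' x| ^ p) = Function.support u' := by
        ext x
        simp only [Function.mem_support]
        constructor
        · intro h hx; exact h (by simp [hx, Real.zero_rpow hpne])
        · intro h
          exact (Real.rpow_pos_of_pos (abs_pos.2 h) p).ne'
      rw [hsupp]
      have hne0 : volume (Function.support u') ≠ 0 := by
        intro h0
        refine hu'ne ?_
        rw [Filter.EventuallyEq, ae_iff]
        simpa [Function.support] using h0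
      exact lt_of_le_of_ne (by simp) (Ne.symm hne0)
    -- convergence of the truncated Rayleigh quotients
    have hN := aux_num_tendsto d p hp ψ hψmeas hψnn M hψbdd hψsupp A hA K hK u' hu'meas hu'int
    have hD := aux_den_tendsto d p hp u' hu'meas hu'int
    have hQ : Tendsto (fun R : ℝ =>
        (∫ x, ∫ y, K x y *
          |(Metric.ball (0 : EuclideanSpace ℝ (Fin d)) R).indicator u' x
            - (Metric.ball (0 : EuclideanSpace ℝ (Fin d)) R).indicator u' y| ^ p) /
        (∫ x in Metric.ball (0 : EuclideanSpace ℝ (Fin d)) R,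
          |(Metric.ball (0 : EuclideanSpace ℝ (Fin d)) R).indicator u' x| ^ p)) atTop
        (nhds r) := by
      rw [hrval']
      exact hN.div hD hDpos.ne'
    have hev1 := hD.eventually_const_lt hDpos
    have hev2 := hQ.eventually_lt_const hrb
    filter_upwards [hev1, hev2] with R h1 h2
    rw [hlamR R]
    have hvne : ¬ (Metric.ball (0 : EuclideanSpace ℝ (Fin d)) R).indicator u'
        =ᵐ[volume] (0 : EuclideanSpace ℝ (Fin d) → ℝ) := by
      intro hh
      have hz0 : (∫ x in Metric.ball (0 : EuclideanSpace ℝ (Fin d)) R,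
          |(Metric.ball (0 : EuclideanSpace ℝ (Fin d)) R).indicator u' x| ^ p) = 0 := by
        have hz : (fun x => |(Metric.ball (0 : EuclideanSpace ℝ (Fin d)) R).indicator u' x| ^ p)
            =ᵐ[volume] (fun _ => (0:ℝ)) :=
          hh.mono fun x hx => by simp [hx, Real.zero_rpow hpne]
        calc (∫ x in Metric.ball (0 : EuclideanSpace ℝ (Fin d)) R,
              |(Metric.ball (0 : EuclideanSpace ℝ (Fin d)) R).indicator u' x| ^ p)
            = ∫ _x in Metric.ball (0 : EuclideanSpace ℝ (Fin d)) R, (0:ℝ) :=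
              integral_congr_ae (ae_restrict_of_ae hz)
          _ = 0 := by simp
      rw [hz0] at h1
      exact lt_irrefl _ h1
    have hmem : (∫ x, ∫ y, K x y *
        |(Metric.ball (0 : EuclideanSpace ℝ (Fin d)) R).indicator u' x
          - (Metric.ball (0 : EuclideanSpace ℝ (Fin d)) R).indicator u' y| ^ p) /
        (∫ x in Metric.ball (0 : EuclideanSpace ℝ (Fin d)) R,
          |(Metric.ball (0 : EuclideanSpace ℝ (Fin d)) R).indicator u' x| ^ p) ∈ SR R :=
      ⟨(Metric.ball (0 : EuclideanSpace ℝ (Fin d)) R).indicator u',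
        hu'Lp.indicator measurableSet_ball,
        fun x hx => Set.indicator_of_notMem hx _, hvne, rfl⟩
    exact lt_of_le_of_lt (csInf_le (hbbSR R) hmem) h2
end

section
/- For every 0 < η < 1 and 1 ≤ p < ∞ there is a constant θ(η,p), given by θ(η,p) = −η/(1−η^{1/(p−1)})^{p−1} when 1 < p < ∞ and θ(η,1) = −η, such that |a − b|^p ≥ η|a|^p + θ(η,p)|b|^p for all real numbers a and b. -/
theorem elementary_inequality (η p : ℝ) (hη0 : 0 < η) (hη1 : η < 1) (hp : 1 ≤ p) :
    ∃ θ : ℝ,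
      ((1 < p → θ = -η / (1 - η ^ (1 / (p - 1))) ^ (p - 1)) ∧ (p = 1 → θ = -η)) ∧
      ∀ a b : ℝ, η * |a| ^ p + θ * |b| ^ p ≤ |a - b| ^ p := by
  rcases eq_or_lt_of_le hp with hp1 | hp1
  · refine ⟨-η, ⟨fun h => by rw [← hp1] at h; exact absurd h (lt_irrefl 1), fun _ => rfl⟩, ?_⟩
    intro a b
    rw [← hp1]
    simp only [Real.rpow_one]
    have h1 : |a| - |b| ≤ |a - b| := abs_sub_abs_le_abs_sub a b
    nlinarith [abs_nonneg (a - b), abs_nonneg a, abs_nonneg b]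
  · set l := η ^ (1 / (p - 1)) with hl
    have hpm : 0 < p - 1 := by linarith
    have hl0 : 0 < l := Real.rpow_pos_of_pos hη0 _
    have hl1 : l < 1 := Real.rpow_lt_one hη0.le hη1 (by positivity)
    have h1l : 0 < 1 - l := by linarith
    refine ⟨-η / (1 - l) ^ (p - 1), ⟨fun _ => rfl, fun h => by rw [h] at hp1; linarith⟩, ?_⟩
    intro a b
    have key : ∀ x y : ℝ, 0 ≤ x → 0 ≤ y →
        (x + y) ^ p ≤ l ^ (1 - p) * x ^ p + (1 - l) ^ (1 - p) * y ^ p := by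
      intro x y hx hy
      have hc := (convexOn_rpow hp).2 (Set.mem_Ici.2 (div_nonneg hx hl0.le))
        (Set.mem_Ici.2 (div_nonneg hy h1l.le)) hl0.le h1l.le (by ring)
      simp only [smul_eq_mul] at hc
      have e1 : l * (x / l) + (1 - l) * (y / (1 - l)) = x + y := by
        field_simp
      rw [e1] at hc
      refine hc.trans_eq ?_
      rw [Real.div_rpow hx hl0.le, Real.div_rpow hy h1l.le,
        Real.rpow_sub hl0, Real.rpow_sub h1l, Real.rpow_one]
      field_simp
      simp only [Real.rpow_one, pow_one]
      ring
    have hab : |a| ≤ |a - b| + |b| := by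
      calc |a| = |(a - b) + b| := by ring_nf
        _ ≤ |a - b| + |b| := abs_add_le _ _
    have h2 : |a| ^ p ≤ (|a - b| + |b|) ^ p :=
      Real.rpow_le_rpow (abs_nonneg a) hab (by linarith)
    have h3 := key _ _ (abs_nonneg (a - b)) (abs_nonneg b)
    have e2 : η * l ^ (1 - p) = 1 := by
      rw [hl, ← Real.rpow_mul hη0.le]
      have : 1 / (p - 1) * (1 - p) = -1 := by
        field_simp
        ring
      rw [this, Real.rpow_neg_one, mul_inv_cancel₀ hη0.ne']
    have e3 : -η / (1 - l) ^ (p - 1) = -(η * (1 - l) ^ (1 - p)) := by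
      rw [div_eq_mul_inv, ← Real.rpow_neg h1l.le, neg_sub p 1, neg_mul]
    rw [e3]
    have h4 : η * |a| ^ p ≤ η * (l ^ (1 - p) * |a - b| ^ p + (1 - l) ^ (1 - p) * |b| ^ p) :=
      mul_le_mul_of_nonneg_left (h2.trans h3) hη0.le
    have h5 : η * (l ^ (1 - p) * |a - b| ^ p + (1 - l) ^ (1 - p) * |b| ^ p) =
        |a - b| ^ p + η * (1 - l) ^ (1 - p) * |b| ^ p := by
      rw [mul_add, ← mul_assoc, e2, one_mul, ← mul_assoc]
    nlinarith [h4, h5]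
end

section
/- Let 1 ≤ p < ∞. For every continuously differentiable, compactly supported function φ : ℝ^d → ℝ with ‖φ‖_{L^p(ℝ^d)} = 1, the first eigenvalue satisfies the upper bound λ_{1,p}(ℝ^d) ≤ 2·(∫_{ℝ^d} ψ(z) dz)·∫_{ℝ^d} |φ(x) − φ(Ax)|^p dx. -/
open MeasureTheory Filter

section Auxx

open Metric

/-- integrability of a function dominated by a constant on a finite-measure set -/
lemma integrable_of_le_indicator {α : Type*} [MeasurableSpace α] {μ : Measure α}
    {f : α → ℝ} (hf : AEStronglyMeasurable f μ)
    {s : Set α} (hs : MeasurableSet s) (hμs : μ s < ⊤) {c : ℝ}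
    (hfc : ∀ x, ‖f x‖ ≤ s.indicator (fun _ => c) x) : Integrable f μ := by
  have hint : Integrable (s.indicator fun _ => c) μ :=
    (integrable_indicator_iff hs).2 (integrableOn_const hμs.ne)
  exact hint.mono' hf (Filter.Eventually.of_forall hfc)

noncomputable abbrev eCLM {d : ℕ} (A : Matrix (Fin d) (Fin d) ℝ) :
    EuclideanSpace ℝ (Fin d) →L[ℝ] EuclideanSpace ℝ (Fin d) :=
  Matrix.toEuclideanCLM (n := Fin d) (𝕜 := ℝ) A

/-- the invertible matrix `A` as a continuous linear equivalence of Euclidean space -/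
noncomputable def TeOf {d : ℕ} (A : Matrix (Fin d) (Fin d) ℝ) (hA : IsUnit A.det) :
    EuclideanSpace ℝ (Fin d) ≃L[ℝ] EuclideanSpace ℝ (Fin d) :=
  ContinuousLinearEquiv.equivOfInverse (eCLM A) (eCLM A⁻¹)
    (fun x => by
      show (eCLM A⁻¹).comp (eCLM A) x = x
      rw [show (eCLM A⁻¹).comp (eCLM A) = eCLM (A⁻¹ * A) from
          (map_mul (Matrix.toEuclideanCLM (n := Fin d) (𝕜 := ℝ)) _ _).symm,
        Matrix.nonsing_inv_mul A hA,
        show eCLM (1 : Matrix (Fin d) (Fin d) ℝ) = 1 from map_one _]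
      rfl)
    (fun x => by
      show (eCLM A).comp (eCLM A⁻¹) x = x
      rw [show (eCLM A).comp (eCLM A⁻¹) = eCLM (A * A⁻¹) from
          (map_mul (Matrix.toEuclideanCLM (n := Fin d) (𝕜 := ℝ)) _ _).symm,
        Matrix.mul_nonsing_inv A hA,
        show eCLM (1 : Matrix (Fin d) (Fin d) ℝ) = 1 from map_one _]
      rfl)

end Auxx

set_option maxHeartbeats 2000000 in
theorem first_eigenvalue_upper_bound (d : ℕ) (hd : 1 ≤ d) (p : ℝ) (hp : 1 ≤ p)
    (ψ : EuclideanSpace ℝ (Fin d) → ℝ)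
    (hψmeas : Measurable ψ) (hψnn : ∀ z, 0 ≤ ψ z)
    (hψbdd : ∃ M : ℝ, ∀ z, ψ z ≤ M)
    (hψsupp : ∀ z, ψ z ≠ 0 → z ∈ Metric.closedBall (0 : EuclideanSpace ℝ (Fin d)) 1)
    (A : Matrix (Fin d) (Fin d) ℝ) (hA : IsUnit A.det)
    (φ : EuclideanSpace ℝ (Fin d) → ℝ)
    (hφsmooth : ContDiff ℝ 1 φ) (hφsupp : HasCompactSupport φ)
    (hφnorm : (∫ x, |φ x| ^ p) = 1) :
    lambdaOne d p (fun x y =>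
        ψ (y - Matrix.toEuclideanLin A x) + ψ (x - Matrix.toEuclideanLin A y)) ≤
      2 * (∫ z, ψ z) * ∫ x, |φ x - φ (Matrix.toEuclideanLin A x)| ^ p := by
  classical
  have hp0 : (0:ℝ) < p := lt_of_lt_of_le one_pos hp
  have hp0' : p ≠ 0 := hp0.ne'
  have hrpc : Continuous (fun t : ℝ => t ^ p) := Real.continuous_rpow_const hp0.le
  obtain ⟨M, hM⟩ := hψbdd
  have hM0 : 0 ≤ M := (hψnn 0).trans (hM 0)
  have hφc : Continuous φ := hφsmooth.continuous
  obtain ⟨C, hC⟩ : ∃ C, ∀ x, ‖φ x‖ ≤ C := hφsupp.exists_bound_of_continuous hφc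
  have hC0 : 0 ≤ C := (norm_nonneg _).trans (hC 0)
  obtain ⟨ρ₀, hρ₀⟩ := hφsupp.isBounded.subset_closedBall 0
  set ρ : ℝ := max ρ₀ 0 with hρdef
  have hρ0 : 0 ≤ ρ := le_max_right _ _
  have hρ : tsupport φ ⊆ Metric.closedBall 0 ρ :=
    hρ₀.trans (Metric.closedBall_subset_closedBall (le_max_left _ _))
  have hφρ : ∀ w, φ w ≠ 0 → ‖w‖ ≤ ρ := fun w hw => by
    have := hρ (subset_tsupport φ hw)
    simpa [mem_closedBall_zero_iff] using this
  have hTapp : ∀ x, Matrix.toEuclideanLin A x = TeOf A hA x := fun _ => rfl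
  simp only [hTapp]
  set T := TeOf A hA with hTdef
  set nT : ℝ := ‖(T : EuclideanSpace ℝ (Fin d) →L[ℝ] EuclideanSpace ℝ (Fin d))‖ with hnTdef
  set B : ℝ := ‖(T.symm : EuclideanSpace ℝ (Fin d) →L[ℝ] EuclideanSpace ℝ (Fin d))‖ with hBdef
  have hnT0 : 0 ≤ nT := by rw [hnTdef]; exact norm_nonneg _
  have hB0 : 0 ≤ B := by rw [hBdef]; exact norm_nonneg _
  have hTcont : Continuous T := T.continuous
  have hTle : ∀ x, ‖T x‖ ≤ nT * ‖x‖ := fun x => by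
    rw [hnTdef]
    exact (T : EuclideanSpace ℝ (Fin d) →L[ℝ] EuclideanSpace ℝ (Fin d)).le_opNorm x
  have hBle : ∀ x, ‖x‖ ≤ B * ‖T x‖ := fun x => by
    rw [hBdef]
    have h1 := (T.symm : EuclideanSpace ℝ (Fin d) →L[ℝ] EuclideanSpace ℝ (Fin d)).le_opNorm (T x)
    rw [ContinuousLinearEquiv.coe_coe, T.symm_apply_apply] at h1
    exact h1
  -- the abstract bound on the `p`-power of differences
  have hup : ∀ a b : ℝ, |a| ≤ C → |b| ≤ C → |a - b| ^ p ≤ (2 * C) ^ p := by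
    intro a b ha hb
    refine Real.rpow_le_rpow (abs_nonneg _) ?_ hp0.le
    have h1 : |a - b| ≤ |a| + |b| := by
      rw [sub_eq_add_neg]
      exact (abs_add_le _ _).trans (by rw [abs_neg])
    linarith
  have hφbd : ∀ w, |φ w| ≤ C := fun w => by simpa [Real.norm_eq_abs] using hC w
  have hprodball : ∀ R1 R2 : ℝ, (volume.prod volume)
      ((Metric.closedBall (0 : EuclideanSpace ℝ (Fin d)) R1) ×ˢ
        (Metric.closedBall (0 : EuclideanSpace ℝ (Fin d)) R2)) < ⊤ := by
    intro R1 R2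
    rw [Measure.prod_prod]
    exact ENNReal.mul_lt_top measure_closedBall_lt_top measure_closedBall_lt_top
  -- the admissible set is bounded below by `0`
  have hBdd : BddBelow {r : ℝ |
      ∃ u : EuclideanSpace ℝ (Fin d) → ℝ,
        MemLp u (ENNReal.ofReal p) volume ∧
        ¬ u =ᵐ[volume] (0 : EuclideanSpace ℝ (Fin d) → ℝ) ∧
        r = (∫ x, ∫ y, (ψ (y - T x) + ψ (x - T y)) * |u x - u y| ^ p) / (∫ x, |u x| ^ p)} := by
    refine ⟨0, fun r hr => ?_⟩
    obtain ⟨u, -, -, rfl⟩ := hr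
    exact div_nonneg
      (integral_nonneg fun x => integral_nonneg fun y =>
        mul_nonneg (add_nonneg (hψnn _) (hψnn _)) (Real.rpow_nonneg (abs_nonneg _) _))
      (integral_nonneg fun x => Real.rpow_nonneg (abs_nonneg _) _)
  have hlam : lambdaOne d p (fun x y => ψ (y - T x) + ψ (x - T y)) = sInf {r : ℝ |
      ∃ u : EuclideanSpace ℝ (Fin d) → ℝ,
        MemLp u (ENNReal.ofReal p) volume ∧
        ¬ u =ᵐ[volume] (0 : EuclideanSpace ℝ (Fin d) → ℝ) ∧
        r = (∫ x, ∫ y, (ψ (y - T x) + ψ (x - T y)) * |u x - u y| ^ p) / (∫ x, |u x| ^ p)} := rfl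
  -- main estimate for the rescaled test functions
  have key : ∀ n : ℕ, lambdaOne d p (fun x y => ψ (y - T x) + ψ (x - T y)) ≤
      2 * ∫ w, ∫ z, ψ z * |φ w - φ (T w + ((n : ℝ) + 1)⁻¹ • z)| ^ p := by
    intro n
    set S : ℝ := (n : ℝ) + 1 with hSdef
    have hS : 0 < S := by positivity
    have hSi : (0:ℝ) < S⁻¹ := by positivity
    set u : EuclideanSpace ℝ (Fin d) → ℝ := fun x => φ (S⁻¹ • x) with hudef
    have hu_cont : Continuous u := hφc.comp (continuous_const_smul _)
    have hu_supp : HasCompactSupport u := hφsupp.comp_smul (inv_ne_zero hS.ne')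
    have hu_bd : ∀ x : EuclideanSpace ℝ (Fin d), |u x| ≤ C := fun x => hφbd (S⁻¹ • x)
    have hu_ρ : ∀ x : EuclideanSpace ℝ (Fin d), u x ≠ 0 → ‖x‖ ≤ S * ρ := by
      intro x hx
      have h1 : ‖S⁻¹ • x‖ ≤ ρ := by
        have h2 := hρ (subset_tsupport φ hx)
        simpa [mem_closedBall_zero_iff] using h2
      rw [norm_smul, Real.norm_eq_abs, abs_of_pos hSi] at h1
      calc ‖x‖ = S * (S⁻¹ * ‖x‖) := by field_simp
        _ ≤ S * ρ := mul_le_mul_of_nonneg_left h1 hS.le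
    set Rbig : ℝ := max (max (S * ρ) (B * (S * ρ + 1))) (nT * (S * ρ) + 1) with hRdef
    have hR1 : S * ρ ≤ Rbig := le_trans (le_max_left _ _) (le_max_left _ _)
    have hR2 : B * (S * ρ + 1) ≤ Rbig := le_trans (le_max_right _ _) (le_max_left _ _)
    have hR3 : nT * (S * ρ) + 1 ≤ Rbig := le_max_right _ _
    have hne : ∀ x y : EuclideanSpace ℝ (Fin d), |u x - u y| ^ p ≠ 0 → u x ≠ 0 ∨ u y ≠ 0 := by
      intro x y h
      by_contra hcon
      push_neg at hcon
      exact h (by rw [hcon.1, hcon.2, sub_self, abs_zero, Real.zero_rpow hp0'])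
    -- support estimates for the two kernel pieces
    have hsupp1 : ∀ x y : EuclideanSpace ℝ (Fin d),
        ψ (y - T x) * |u x - u y| ^ p ≠ 0 → ‖x‖ ≤ Rbig ∧ ‖y‖ ≤ Rbig := by
      intro x y h
      rcases mul_ne_zero_iff.1 h with ⟨h1, h2⟩
      have hy1 : ‖y - T x‖ ≤ 1 := by
        simpa [mem_closedBall_zero_iff] using hψsupp _ h1
      rcases hne x y h2 with h3 | h3
      · have hx := hu_ρ x h3
        refine ⟨hx.trans hR1, ?_⟩
        have h4 : ‖y‖ ≤ ‖y - T x‖ + ‖T x‖ := by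
          calc ‖y‖ = ‖(y - T x) + T x‖ := by congr 1; abel
            _ ≤ ‖y - T x‖ + ‖T x‖ := norm_add_le _ _
        have h5 := hTle x
        have h6 : nT * ‖x‖ ≤ nT * (S * ρ) := mul_le_mul_of_nonneg_left hx hnT0
        refine le_trans ?_ hR3
        linarith
      · have hy := hu_ρ y h3
        refine ⟨?_, hy.trans hR1⟩
        have h4 := hBle x
        have h5 : ‖T x‖ - ‖y‖ ≤ ‖T x - y‖ := norm_sub_norm_le _ _
        rw [norm_sub_rev] at h5
        have h6 : ‖T x‖ ≤ S * ρ + 1 := by linarith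
        refine le_trans ?_ hR2
        calc ‖x‖ ≤ B * ‖T x‖ := h4
          _ ≤ B * (S * ρ + 1) := mul_le_mul_of_nonneg_left h6 hB0
    have hsupp2 : ∀ x y : EuclideanSpace ℝ (Fin d),
        ψ (x - T y) * |u x - u y| ^ p ≠ 0 → ‖x‖ ≤ Rbig ∧ ‖y‖ ≤ Rbig := by
      intro x y h
      rcases mul_ne_zero_iff.1 h with ⟨h1, h2⟩
      have hy1 : ‖x - T y‖ ≤ 1 := by
        simpa [mem_closedBall_zero_iff] using hψsupp _ h1
      rcases hne x y h2 with h3 | h3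
      · have hx := hu_ρ x h3
        refine ⟨hx.trans hR1, ?_⟩
        have h4 := hBle y
        have h5 : ‖T y‖ - ‖x‖ ≤ ‖T y - x‖ := norm_sub_norm_le _ _
        rw [norm_sub_rev] at h5
        have h6 : ‖T y‖ ≤ S * ρ + 1 := by linarith
        refine le_trans ?_ hR2
        calc ‖y‖ ≤ B * ‖T y‖ := h4
          _ ≤ B * (S * ρ + 1) := mul_le_mul_of_nonneg_left h6 hB0
      · have hy := hu_ρ y h3
        refine ⟨?_, hy.trans hR1⟩
        have h4 : ‖x‖ ≤ ‖x - T y‖ + ‖T y‖ := by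
          calc ‖x‖ = ‖(x - T y) + T y‖ := by congr 1; abel
            _ ≤ ‖x - T y‖ + ‖T y‖ := norm_add_le _ _
        have h5 := hTle y
        have h6 : nT * ‖y‖ ≤ nT * (S * ρ) := mul_le_mul_of_nonneg_left hy hnT0
        refine le_trans ?_ hR3
        linarith
    have hval_nonneg : ∀ x y : EuclideanSpace ℝ (Fin d),
        0 ≤ ψ (y - T x) * |u x - u y| ^ p := fun x y =>
      mul_nonneg (hψnn _) (Real.rpow_nonneg (abs_nonneg _) _)
    have hval_nonneg2 : ∀ x y : EuclideanSpace ℝ (Fin d),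
        0 ≤ ψ (x - T y) * |u x - u y| ^ p := fun x y =>
      mul_nonneg (hψnn _) (Real.rpow_nonneg (abs_nonneg _) _)
    have hbnd : ∀ x y : EuclideanSpace ℝ (Fin d),
        ψ (y - T x) * |u x - u y| ^ p ≤ M * (2 * C) ^ p := fun x y =>
      mul_le_mul (hM _) (hup _ _ (hu_bd _) (hu_bd _)) (Real.rpow_nonneg (abs_nonneg _) _) hM0
    have hbnd2 : ∀ x y : EuclideanSpace ℝ (Fin d),
        ψ (x - T y) * |u x - u y| ^ p ≤ M * (2 * C) ^ p := fun x y =>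
      mul_le_mul (hM _) (hup _ _ (hu_bd _) (hu_bd _)) (Real.rpow_nonneg (abs_nonneg _) _) hM0
    have hMC0 : 0 ≤ M * (2 * C) ^ p := mul_nonneg hM0 (Real.rpow_nonneg (by positivity) _)
    -- product integrability of the two kernel pieces
    have hint1 : Integrable
        (Function.uncurry fun x y : EuclideanSpace ℝ (Fin d) =>
          ψ (y - T x) * |u x - u y| ^ p) (volume.prod volume) := by
      refine integrable_of_le_indicator (c := M * (2 * C) ^ p) ?_
        (measurableSet_closedBall.prod measurableSet_closedBall) (hprodball Rbig Rbig) ?_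
      · exact ((hψmeas.comp (continuous_snd.sub (hTcont.comp continuous_fst)).measurable).mul
          ((hrpc.comp (((hu_cont.comp continuous_fst).sub
            (hu_cont.comp continuous_snd)).abs)).measurable)).aestronglyMeasurable
      · intro q
        show ‖ψ (q.2 - T q.1) * |u q.1 - u q.2| ^ p‖ ≤ _
        by_cases h : ψ (q.2 - T q.1) * |u q.1 - u q.2| ^ p = 0
        · rw [h, norm_zero]
          exact Set.indicator_nonneg (fun _ _ => hMC0) _
        · obtain ⟨hx, hy⟩ := hsupp1 _ _ h
          rw [Set.indicator_of_mem (Set.mk_mem_prod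
            (mem_closedBall_zero_iff.2 hx) (mem_closedBall_zero_iff.2 hy))]
          rw [Real.norm_eq_abs, abs_of_nonneg (hval_nonneg _ _)]
          exact hbnd _ _
    have hint2 : Integrable
        (Function.uncurry fun x y : EuclideanSpace ℝ (Fin d) =>
          ψ (x - T y) * |u x - u y| ^ p) (volume.prod volume) := by
      refine integrable_of_le_indicator (c := M * (2 * C) ^ p) ?_
        (measurableSet_closedBall.prod measurableSet_closedBall) (hprodball Rbig Rbig) ?_
      · exact ((hψmeas.comp (continuous_fst.sub (hTcont.comp continuous_snd)).measurable).mul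
          ((hrpc.comp (((hu_cont.comp continuous_fst).sub
            (hu_cont.comp continuous_snd)).abs)).measurable)).aestronglyMeasurable
      · intro q
        show ‖ψ (q.1 - T q.2) * |u q.1 - u q.2| ^ p‖ ≤ _
        by_cases h : ψ (q.1 - T q.2) * |u q.1 - u q.2| ^ p = 0
        · rw [h, norm_zero]
          exact Set.indicator_nonneg (fun _ _ => hMC0) _
        · obtain ⟨hx, hy⟩ := hsupp2 _ _ h
          rw [Set.indicator_of_mem (Set.mk_mem_prod
            (mem_closedBall_zero_iff.2 hx) (mem_closedBall_zero_iff.2 hy))]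
          rw [Real.norm_eq_abs, abs_of_nonneg (hval_nonneg2 _ _)]
          exact hbnd2 _ _
    -- slice integrability
    have hslice1 : ∀ x : EuclideanSpace ℝ (Fin d),
        Integrable (fun y => ψ (y - T x) * |u x - u y| ^ p) volume := by
      intro x
      refine integrable_of_le_indicator (c := M * (2 * C) ^ p)
        ?_ (measurableSet_closedBall (x := T x) (ε := 1)) measure_closedBall_lt_top ?_
      · exact ((hψmeas.comp (measurable_id.sub_const (T x))).mul
          ((hrpc.comp ((continuous_const.sub hu_cont).abs)).measurable)).aestronglyMeasurable
      · intro y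
        show ‖ψ (y - T x) * |u x - u y| ^ p‖ ≤ _
        by_cases h : ψ (y - T x) = 0
        · rw [h, zero_mul, norm_zero]
          exact Set.indicator_nonneg (fun _ _ => hMC0) _
        · have hy : y ∈ Metric.closedBall (T x) 1 := by
            have h2 := hψsupp _ h
            rw [mem_closedBall_zero_iff] at h2
            rw [Metric.mem_closedBall, dist_eq_norm]
            exact h2
          rw [Set.indicator_of_mem hy, Real.norm_eq_abs, abs_of_nonneg (hval_nonneg _ _)]
          exact hbnd _ _
    have hslice2 : ∀ x : EuclideanSpace ℝ (Fin d),
        Integrable (fun y => ψ (x - T y) * |u x - u y| ^ p) volume := by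
      intro x
      refine integrable_of_le_indicator (c := M * (2 * C) ^ p)
        ?_ (measurableSet_closedBall (x := (0 : EuclideanSpace ℝ (Fin d))) (ε := B * (‖x‖ + 1)))
        measure_closedBall_lt_top ?_
      · exact ((hψmeas.comp (measurable_const.sub (hTcont.measurable))).mul
          ((hrpc.comp ((continuous_const.sub hu_cont).abs)).measurable)).aestronglyMeasurable
      · intro y
        show ‖ψ (x - T y) * |u x - u y| ^ p‖ ≤ _
        by_cases h : ψ (x - T y) = 0
        · rw [h, zero_mul, norm_zero]
          exact Set.indicator_nonneg (fun _ _ => hMC0) _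
        · have h1 : ‖x - T y‖ ≤ 1 := by
            simpa [mem_closedBall_zero_iff] using hψsupp _ h
          have h2 : ‖T y‖ - ‖x‖ ≤ ‖T y - x‖ := norm_sub_norm_le _ _
          rw [norm_sub_rev] at h2
          have h3 : ‖y‖ ≤ B * (‖x‖ + 1) := by
            calc ‖y‖ ≤ B * ‖T y‖ := hBle y
              _ ≤ B * (‖x‖ + 1) := mul_le_mul_of_nonneg_left (by linarith) hB0
          rw [Set.indicator_of_mem (mem_closedBall_zero_iff.2 h3), Real.norm_eq_abs,
            abs_of_nonneg (hval_nonneg2 _ _)]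
          exact hbnd2 _ _
    -- splitting the double integral
    have hsplit : (∫ x, ∫ y, (ψ (y - T x) + ψ (x - T y)) * |u x - u y| ^ p)
        = (∫ x, ∫ y, ψ (y - T x) * |u x - u y| ^ p)
          + ∫ x, ∫ y, ψ (x - T y) * |u x - u y| ^ p := by
      have hpt : ∀ x : EuclideanSpace ℝ (Fin d),
          (∫ y, (ψ (y - T x) + ψ (x - T y)) * |u x - u y| ^ p)
            = (∫ y, ψ (y - T x) * |u x - u y| ^ p) + ∫ y, ψ (x - T y) * |u x - u y| ^ p := by
        intro x
        rw [← integral_add (hslice1 x) (hslice2 x)]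
        refine integral_congr_ae (Eventually.of_forall fun y => ?_)
        ring
      rw [integral_congr_ae (Eventually.of_forall hpt)]
      exact integral_add hint1.integral_prod_left hint2.integral_prod_left
    -- symmetry: the second piece equals the first
    have hswap : (∫ x, ∫ y, ψ (x - T y) * |u x - u y| ^ p)
        = ∫ x, ∫ y, ψ (y - T x) * |u x - u y| ^ p := by
      rw [integral_integral_swap hint2]
      refine integral_congr_ae (Eventually.of_forall fun a => ?_)
      refine integral_congr_ae (Eventually.of_forall fun b => ?_)
      show ψ (b - T a) * |u b - u a| ^ p = ψ (b - T a) * |u a - u b| ^ p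
      rw [abs_sub_comm]
    -- translation in the inner integral
    have htrans : ∀ x : EuclideanSpace ℝ (Fin d),
        (∫ y, ψ (y - T x) * |u x - u y| ^ p) = ∫ z, ψ z * |u x - u (T x + z)| ^ p := by
      intro x
      have h1 : ∀ y : EuclideanSpace ℝ (Fin d), ψ (y - T x) * |u x - u y| ^ p
          = (fun z => ψ z * |u x - u (T x + z)| ^ p) (y - T x) := by
        intro y
        show ψ (y - T x) * |u x - u y| ^ p = ψ (y - T x) * |u x - u (T x + (y - T x))| ^ p
        rw [show T x + (y - T x) = y from by abel]
      rw [integral_congr_ae (Eventually.of_forall h1)]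
      exact integral_sub_right_eq_self (fun z => ψ z * |u x - u (T x + z)| ^ p) (T x)
    -- scaling
    have hscale : (∫ x, ∫ z, ψ z * |u x - u (T x + z)| ^ p)
        = S ^ d * ∫ w, ∫ z, ψ z * |φ w - φ (T w + S⁻¹ • z)| ^ p := by
      have h1 : ∀ x : EuclideanSpace ℝ (Fin d),
          (∫ z, ψ z * |u x - u (T x + z)| ^ p)
            = (fun w => ∫ z, ψ z * |φ w - φ (T w + S⁻¹ • z)| ^ p) (S⁻¹ • x) := by
        intro x
        show (∫ z, ψ z * |u x - u (T x + z)| ^ p)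
          = ∫ z, ψ z * |φ (S⁻¹ • x) - φ (T (S⁻¹ • x) + S⁻¹ • z)| ^ p
        refine integral_congr_ae (Eventually.of_forall fun z => ?_)
        have e2 : u (T x + z) = φ (T (S⁻¹ • x) + S⁻¹ • z) := by
          show φ (S⁻¹ • (T x + z)) = _
          rw [smul_add, _root_.map_smul]
        show ψ z * |u x - u (T x + z)| ^ p = ψ z * |φ (S⁻¹ • x) - φ (T (S⁻¹ • x) + S⁻¹ • z)| ^ p
        rw [e2]
      rw [integral_congr_ae (Eventually.of_forall h1),
        Measure.integral_comp_inv_smul volume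
          (fun w => ∫ z, ψ z * |φ w - φ (T w + S⁻¹ • z)| ^ p) S,
        finrank_euclideanSpace_fin, abs_of_pos (pow_pos hS d), smul_eq_mul]
    have hD : (∫ x, |u x| ^ p) = S ^ d := by
      have h1 : (fun x : EuclideanSpace ℝ (Fin d) => |u x| ^ p)
          = fun x => (fun w => |φ w| ^ p) (S⁻¹ • x) := rfl
      rw [h1, Measure.integral_comp_inv_smul volume (fun w => |φ w| ^ p) S,
        finrank_euclideanSpace_fin, hφnorm, smul_eq_mul, mul_one, abs_of_pos (pow_pos hS d)]
    have hu_ne : ¬ u =ᵐ[volume] (0 : EuclideanSpace ℝ (Fin d) → ℝ) := by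
      intro h
      have h2 : (fun x : EuclideanSpace ℝ (Fin d) => |u x| ^ p) =ᵐ[volume] (fun _ => (0:ℝ)) := by
        refine h.mono fun x hx => ?_
        simp only [Pi.zero_apply] at hx
        show |u x| ^ p = (0:ℝ)
        rw [hx, abs_zero, Real.zero_rpow hp0']
      have h3 : (∫ x, |u x| ^ p) = 0 := by rw [integral_congr_ae h2, integral_zero]
      rw [hD] at h3
      exact (pow_pos hS d).ne' h3
    have hu_mem : MemLp u (ENNReal.ofReal p) volume :=
      hu_cont.memLp_of_hasCompactSupport hu_supp
    -- the value of the Rayleigh quotient of `u`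
    have hval : (∫ x, ∫ y, (ψ (y - T x) + ψ (x - T y)) * |u x - u y| ^ p) / (∫ x, |u x| ^ p)
        = 2 * ∫ w, ∫ z, ψ z * |φ w - φ (T w + S⁻¹ • z)| ^ p := by
      rw [hsplit, hswap, integral_congr_ae (Eventually.of_forall htrans), hscale, hD]
      have hSd : (S : ℝ) ^ d ≠ 0 := (pow_pos hS d).ne'
      field_simp
      ring
    rw [hlam]
    exact csInf_le hBdd ⟨u, hu_mem, hu_ne, hval.symm⟩
  -- passage to the limit via dominated convergence
  set Rw : ℝ := max ρ (B * (ρ + 1)) with hRwdef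
  have hsuppF : ∀ (c : ℝ), 0 < c → c ≤ 1 → ∀ w z : EuclideanSpace ℝ (Fin d),
      ψ z * |φ w - φ (T w + c • z)| ^ p ≠ 0 → ‖w‖ ≤ Rw ∧ ‖z‖ ≤ 1 := by
    intro c hc hc1 w z h
    rcases mul_ne_zero_iff.1 h with ⟨h1, h2⟩
    have hz : ‖z‖ ≤ 1 := by simpa [mem_closedBall_zero_iff] using hψsupp _ h1
    refine ⟨?_, hz⟩
    have h3 : φ w ≠ 0 ∨ φ (T w + c • z) ≠ 0 := by
      by_contra hcon
      push_neg at hcon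
      exact h2 (by rw [hcon.1, hcon.2, sub_self, abs_zero, Real.zero_rpow hp0'])
    rcases h3 with h3 | h3
    · exact (hφρ _ h3).trans (le_max_left _ _)
    · have h4 : ‖T w + c • z‖ ≤ ρ := hφρ _ h3
      have h5 : ‖c • z‖ ≤ 1 := by
        rw [norm_smul, Real.norm_eq_abs, abs_of_pos hc]
        nlinarith
      have h6 : ‖T w‖ ≤ ρ + 1 := by
        have h7 : ‖T w‖ = ‖(T w + c • z) - c • z‖ := by congr 1; abel
        rw [h7]
        exact (norm_sub_le _ _).trans (add_le_add h4 h5)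
      refine le_trans ?_ (le_max_right _ _)
      calc ‖w‖ ≤ B * ‖T w‖ := hBle w
        _ ≤ B * (ρ + 1) := mul_le_mul_of_nonneg_left h6 hB0
  have hFmeas : ∀ c : ℝ, AEStronglyMeasurable
      (Function.uncurry fun w z : EuclideanSpace ℝ (Fin d) =>
        ψ z * |φ w - φ (T w + c • z)| ^ p) (volume.prod volume) := by
    intro c
    exact ((hψmeas.comp continuous_snd.measurable).mul
      ((hrpc.comp (((hφc.comp continuous_fst).sub (hφc.comp
        ((hTcont.comp continuous_fst).add
          ((continuous_const_smul c).comp continuous_snd)))).abs)).measurable)).aestronglyMeasurable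
  set g : EuclideanSpace ℝ (Fin d) × EuclideanSpace ℝ (Fin d) → ℝ :=
      (Metric.closedBall (0 : EuclideanSpace ℝ (Fin d)) Rw ×ˢ
        Metric.closedBall (0 : EuclideanSpace ℝ (Fin d)) 1).indicator
        (fun _ => M * (2 * C) ^ p) with hgdef
  have hMC0 : 0 ≤ M * (2 * C) ^ p := mul_nonneg hM0 (Real.rpow_nonneg (by positivity) _)
  have hg_int : Integrable g (volume.prod volume) := by
    rw [hgdef]
    exact (integrable_indicator_iff (measurableSet_closedBall.prod measurableSet_closedBall)).2
      (integrableOn_const (hprodball Rw 1).ne)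
  have hgbound : ∀ c : ℝ, 0 < c → c ≤ 1 →
      ∀ q : EuclideanSpace ℝ (Fin d) × EuclideanSpace ℝ (Fin d),
      ‖ψ q.2 * |φ q.1 - φ (T q.1 + c • q.2)| ^ p‖ ≤ g q := by
    intro c hc hc1 q
    by_cases h : ψ q.2 * |φ q.1 - φ (T q.1 + c • q.2)| ^ p = 0
    · rw [h, norm_zero]
      rw [hgdef]
      exact Set.indicator_nonneg (fun _ _ => hMC0) _
    · obtain ⟨hw, hz⟩ := hsuppF c hc hc1 _ _ h
      rw [hgdef, Set.indicator_of_mem (Set.mk_mem_prod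
        (mem_closedBall_zero_iff.2 hw) (mem_closedBall_zero_iff.2 hz))]
      rw [Real.norm_eq_abs,
        abs_of_nonneg (mul_nonneg (hψnn _) (Real.rpow_nonneg (abs_nonneg _) _))]
      exact mul_le_mul (hM _) (hup _ _ (hφbd _) (hφbd _))
        (Real.rpow_nonneg (abs_nonneg _) _) hM0
  have hcn : ∀ n : ℕ, 0 < ((n : ℝ) + 1)⁻¹ ∧ ((n : ℝ) + 1)⁻¹ ≤ 1 := by
    intro n
    have h2 : (0:ℝ) < (n : ℝ) + 1 := by positivity
    have h1 : (1:ℝ) ≤ (n : ℝ) + 1 := by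
      have := Nat.cast_nonneg (α := ℝ) n
      linarith
    refine ⟨by positivity, ?_⟩
    have h3 := mul_le_mul_of_nonneg_left h1 (inv_pos.2 h2).le
    rwa [mul_one, inv_mul_cancel₀ h2.ne'] at h3
  have hFint : ∀ c : ℝ, 0 < c → c ≤ 1 → Integrable
      (Function.uncurry fun w z : EuclideanSpace ℝ (Fin d) =>
        ψ z * |φ w - φ (T w + c • z)| ^ p) (volume.prod volume) :=
    fun c hc hc1 => hg_int.mono' (hFmeas c) (Eventually.of_forall (hgbound c hc hc1))
  have key2 : ∀ n : ℕ, lambdaOne d p (fun x y => ψ (y - T x) + ψ (x - T y)) ≤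
      2 * ∫ q, ψ q.2 * |φ q.1 - φ (T q.1 + ((n : ℝ) + 1)⁻¹ • q.2)| ^ p
        ∂((volume : Measure (EuclideanSpace ℝ (Fin d))).prod volume) := by
    intro n
    have h1 := key n
    rwa [integral_integral (hFint _ (hcn n).1 (hcn n).2)] at h1
  have hlim : ∀ q : EuclideanSpace ℝ (Fin d) × EuclideanSpace ℝ (Fin d),
      Filter.Tendsto (fun n : ℕ => ψ q.2 * |φ q.1 - φ (T q.1 + ((n : ℝ) + 1)⁻¹ • q.2)| ^ p)
        Filter.atTop (nhds (ψ q.2 * |φ q.1 - φ (T q.1)| ^ p)) := by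
    intro q
    have h1 : Filter.Tendsto (fun n : ℕ => ((n : ℝ) + 1)⁻¹) Filter.atTop (nhds 0) := by
      exact Tendsto.congr (fun n => one_div _) tendsto_one_div_add_atTop_nhds_zero_nat
    have h3 : Filter.Tendsto (fun n : ℕ => ((n : ℝ) + 1)⁻¹ • q.2) Filter.atTop
        (nhds (0 : EuclideanSpace ℝ (Fin d))) := by
      simpa using h1.smul_const q.2
    have h2 : Filter.Tendsto (fun n : ℕ => T q.1 + ((n : ℝ) + 1)⁻¹ • q.2) Filter.atTop
        (nhds (T q.1)) := by
      simpa using tendsto_const_nhds.add h3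
    have h4 : Continuous fun v : EuclideanSpace ℝ (Fin d) => ψ q.2 * |φ q.1 - φ v| ^ p :=
      continuous_const.mul (hrpc.comp ((continuous_const.sub hφc).abs))
    exact (h4.tendsto (T q.1)).comp h2
  have htend : Filter.Tendsto (fun n : ℕ =>
      ∫ q, ψ q.2 * |φ q.1 - φ (T q.1 + ((n : ℝ) + 1)⁻¹ • q.2)| ^ p
        ∂((volume : Measure (EuclideanSpace ℝ (Fin d))).prod volume)) Filter.atTop
      (nhds (∫ q, ψ q.2 * |φ q.1 - φ (T q.1)| ^ p
        ∂((volume : Measure (EuclideanSpace ℝ (Fin d))).prod volume))) := by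
    exact tendsto_integral_of_dominated_convergence g (fun n => hFmeas _) hg_int
      (fun n => Eventually.of_forall (hgbound _ (hcn n).1 (hcn n).2))
      (Eventually.of_forall hlim)
  have hsplitlim : (∫ q, ψ q.2 * |φ q.1 - φ (T q.1)| ^ p
      ∂((volume : Measure (EuclideanSpace ℝ (Fin d))).prod volume))
      = (∫ x, |φ x - φ (T x)| ^ p) * ∫ z, ψ z := by
    rw [show (fun q : EuclideanSpace ℝ (Fin d) × EuclideanSpace ℝ (Fin d) =>
        ψ q.2 * |φ q.1 - φ (T q.1)| ^ p)
        = fun q => (fun w => |φ w - φ (T w)| ^ p) q.1 * ψ q.2 from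
      funext fun q => mul_comm _ _]
    exact integral_prod_mul (L := ℝ) (fun w => |φ w - φ (T w)| ^ p) ψ
  have hfinal : Filter.Tendsto (fun n : ℕ =>
      2 * ∫ q, ψ q.2 * |φ q.1 - φ (T q.1 + ((n : ℝ) + 1)⁻¹ • q.2)| ^ p
        ∂((volume : Measure (EuclideanSpace ℝ (Fin d))).prod volume)) Filter.atTop
      (nhds (2 * (∫ z, ψ z) * ∫ x, |φ x - φ (T x)| ^ p)) := by
    have h1 := htend.const_mul 2
    rw [hsplitlim] at h1
    convert h1 using 2
    ring
  exact ge_of_tendsto' hfinal key2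
end

section
/- Let a(x) = Ax be an expansive invertible linear map on ℝ^d, i.e. every complex eigenvalue of A has absolute value strictly greater than one. Then there exists a sequence of measurable sets (E_j)_{j≥0} contained in the closed unit ball, each of positive Lebesgue measure, such that A⁻¹(E_j) = E_{j+1} for all j, |E_j| = |det A|^{−j}·|E_0| for all j, and E_j ∩ E_l = ∅ whenever j ≠ l. -/
open MeasureTheory Polynomial

lemma aux_prod_multiset (s : Multiset ℝ) (hs : s ≠ 0) (h : ∀ x ∈ s, 1 < x) : 1 < s.prod := by
  induction s using Multiset.induction with
  | empty => exact absurd rfl hs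
  | cons a t ih =>
    rw [Multiset.prod_cons]
    have h1 : (1:ℝ) ≤ t.prod := by
      rcases eq_or_ne t 0 with rfl | ht
      · simp
      · exact le_of_lt (ih ht fun x hx => h x (Multiset.mem_cons_of_mem hx))
    have ha1 : 1 < a := h a (Multiset.mem_cons_self a t)
    nlinarith

lemma aux_root_mem_spectrum {n : Type*} [Fintype n] [DecidableEq n]
    {M : Matrix n n ℂ} {μ : ℂ} (h : (Matrix.charpoly M).IsRoot μ) : μ ∈ spectrum ℂ M := by
  have key : (Matrix.charpoly M).eval μ = (Matrix.scalar n μ - M).det := by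
    rw [Matrix.charpoly, eval_det, Matrix.matPolyEquiv_charmatrix]
    simp
  rw [spectrum.mem_iff]
  intro hunit
  have halg : algebraMap ℂ (Matrix n n ℂ) μ = Matrix.scalar n μ := rfl
  rw [halg] at hunit
  have hdet : (Matrix.scalar n μ - M).det ≠ 0 :=
    ((Matrix.isUnit_iff_isUnit_det _).mp hunit).ne_zero
  exact hdet (by rw [← key]; exact h)

lemma aux_one_lt_abs_det (d : ℕ) (hd : 1 ≤ d) (A : Matrix (Fin d) (Fin d) ℝ)
    (hexp : ∀ μ : ℂ, μ ∈ spectrum ℂ (A.map (algebraMap ℝ ℂ)) → 1 < ‖μ‖) :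
    1 < |A.det| := by
  set Mc := A.map (algebraMap ℝ ℂ) with hMc
  have hdet : Mc.det = (A.det : ℂ) := by
    rw [hMc, ← RingHom.mapMatrix_apply, ← RingHom.map_det]; rfl
  have hprod : Mc.det = (Matrix.charpoly Mc).roots.prod := Matrix.det_eq_prod_roots_charpoly Mc
  have hcard : Multiset.card (Matrix.charpoly Mc).roots = d := by
    have h1 : Mc.charpoly.natDegree = d := by
      rw [Matrix.charpoly_natDegree_eq_dim Mc, Fintype.card_fin]
    exact (splits_iff_card_roots.mp (IsAlgClosed.splits _)).trans h1
  have hne : (Matrix.charpoly Mc).roots ≠ 0 := by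
    intro h0
    rw [h0] at hcard
    simp at hcard
    omega
  have habs : ‖Mc.det‖ = ((Matrix.charpoly Mc).roots.map (fun z : ℂ => ‖z‖)).prod := by
    rw [hprod]; exact map_multiset_prod (normHom : ℂ →*₀ ℝ) _
  have h2 : 1 < ((Matrix.charpoly Mc).roots.map (fun z : ℂ => ‖z‖)).prod := by
    apply aux_prod_multiset
    · simpa using hne
    · intro x hx
      obtain ⟨μ, hμ, rfl⟩ := Multiset.mem_map.mp hx
      exact hexp μ (aux_root_mem_spectrum (isRoot_of_mem_roots hμ))
  calc 1 < ‖Mc.det‖ := habs ▸ h2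
    _ = |A.det| := by rw [hdet, Complex.norm_real, Real.norm_eq_abs]

lemma aux_exists_pow_norm_lt (d : ℕ) (hd : 1 ≤ d) (A : Matrix (Fin d) (Fin d) ℝ)
    (hA : IsUnit A.det)
    (hexp : ∀ μ : ℂ, μ ∈ spectrum ℂ (A.map (algebraMap ℝ ℂ)) → 1 < ‖μ‖) :
    ∃ N : ℕ, 1 ≤ N ∧
      ‖(Matrix.toEuclideanCLM (𝕜 := ℂ) ((A⁻¹).map (algebraMap ℝ ℂ))) ^ N‖ < 1 := by
  haveI : Nonempty (Fin d) := ⟨⟨0, hd⟩⟩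
  set Mc := A.map (algebraMap ℝ ℂ) with hMcdef
  set Bc := (A⁻¹).map (algebraMap ℝ ℂ) with hBcdef
  have hBM : Bc * Mc = 1 := by
    have : Bc * Mc = (A⁻¹ * A).map (algebraMap ℝ ℂ) := (Matrix.map_mul).symm
    rw [this, Matrix.nonsing_inv_mul A hA, Matrix.map_one _ (map_zero _) (map_one _)]
  have hMB : Mc * Bc = 1 := by
    have : Mc * Bc = (A * A⁻¹).map (algebraMap ℝ ℂ) := (Matrix.map_mul).symm
    rw [this, Matrix.mul_nonsing_inv A hA, Matrix.map_one _ (map_zero _) (map_one _)]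
  set u : (Matrix (Fin d) (Fin d) ℂ)ˣ := ⟨Mc, Bc, hMB, hBM⟩ with hu
  have hspecBc : ∀ μ : ℂ, μ ∈ spectrum ℂ Bc → ‖μ‖₊ < 1 := by
    intro μ hμ
    have hμ0 : μ ≠ 0 := by
      rintro rfl
      exact spectrum.zero_notMem ℂ ((u⁻¹).isUnit) hμ
    have hBcu : ((u⁻¹ : _ˣ) : Matrix (Fin d) (Fin d) ℂ) = Bc := rfl
    set r : ℂˣ := Units.mk0 μ hμ0 with hr
    have h1 : (r : ℂ) ∈ spectrum ℂ ((u⁻¹ : _ˣ) : Matrix (Fin d) (Fin d) ℂ) := by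
      rw [hBcu]; exact hμ
    have h2 := spectrum.inv_mem_iff.mp h1
    rw [inv_inv] at h2
    have h3 : 1 < ‖μ⁻¹‖ := hexp _ h2
    have habs : ‖μ‖ < 1 := by
      rw [norm_inv] at h3
      have h0 : 0 < ‖μ‖ := norm_pos_iff.mpr hμ0
      exact (one_lt_inv_iff₀).mp h3 |>.2
    rw [← NNReal.coe_lt_coe]
    simpa [nnnorm] using habs
  set fc := Matrix.toEuclideanCLM (𝕜 := ℂ) Bc with hfc
  have hspecfc : spectrum ℂ fc = spectrum ℂ Bc :=
    AlgEquiv.spectrum_eq (Matrix.toEuclideanCLM (𝕜 := ℂ) (n := Fin d)) Bc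
  have hρ : spectralRadius ℂ fc < 1 := by
    have := spectrum.spectralRadius_lt_of_forall_lt (a := fc) (r := 1)
      (fun z hz => hspecBc z (hspecfc ▸ hz))
    simpa using this
  have htend := spectrum.pow_nnnorm_pow_one_div_tendsto_nhds_spectralRadius fc
  have hev := (htend.eventually_lt_const hρ).and (Filter.eventually_ge_atTop 1)
  obtain ⟨N, hN1, hN2⟩ := hev.exists
  refine ⟨N, hN2, ?_⟩
  have hpow : (‖fc ^ N‖₊ : ENNReal) < 1 := by
    by_contra hcon
    push_neg at hcon
    have : (1 : ENNReal) ≤ (‖fc ^ N‖₊ : ENNReal) ^ (1 / (N:ℝ)) := by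
      calc (1:ENNReal) = 1 ^ (1/(N:ℝ)) := by rw [ENNReal.one_rpow]
        _ ≤ _ := ENNReal.rpow_le_rpow hcon (by positivity)
    exact absurd hN1 (not_lt.mpr this)
  have := ENNReal.coe_lt_coe.mp (by simpa using hpow)
  exact_mod_cast this

noncomputable def auxJ (d : ℕ) (x : EuclideanSpace ℝ (Fin d)) : EuclideanSpace ℂ (Fin d) :=
  (WithLp.equiv 2 (Fin d → ℂ)).symm (fun i => (x i : ℂ))

lemma auxJ_norm (d : ℕ) (x : EuclideanSpace ℝ (Fin d)) : ‖auxJ d x‖ = ‖x‖ := by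
  rw [EuclideanSpace.norm_eq, EuclideanSpace.norm_eq]
  congr 1
  apply Finset.sum_congr rfl
  intro i _
  simp [auxJ]

lemma auxJ_comm (d : ℕ) (P : Matrix (Fin d) (Fin d) ℝ) (x : EuclideanSpace ℝ (Fin d)) :
    Matrix.toEuclideanCLM (𝕜 := ℂ) (P.map (algebraMap ℝ ℂ)) (auxJ d x)
      = auxJ d (Matrix.toEuclideanLin P x) := by
  apply (WithLp.equiv 2 (Fin d → ℂ)).injective
  rw [WithLp.equiv_apply, Matrix.ofLp_toEuclideanCLM]
  funext i
  simp [auxJ, Matrix.toLin'_apply, Matrix.mulVec, dotProduct,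
    Matrix.toEuclideanLin_apply]

lemma aux_mul_apply {d : ℕ} (P Q : Matrix (Fin d) (Fin d) ℝ) (x : EuclideanSpace ℝ (Fin d)) :
    Matrix.toEuclideanLin (P * Q) x = Matrix.toEuclideanLin P (Matrix.toEuclideanLin Q x) := by
  simp [Matrix.toEuclideanLin_apply, Matrix.mulVec_mulVec]

lemma aux_one_apply {d : ℕ} (x : EuclideanSpace ℝ (Fin d)) :
    Matrix.toEuclideanLin (1 : Matrix (Fin d) (Fin d) ℝ) x = x := by
  simp [Matrix.toEuclideanLin_apply]

lemma aux_det {d : ℕ} (M : Matrix (Fin d) (Fin d) ℝ) :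
    LinearMap.det (Matrix.toEuclideanLin M) = M.det := by
  rw [Matrix.toEuclideanLin_eq_toLin]
  exact LinearMap.det_toLin _ M

theorem expansive_exists_disjoint_sets (d : ℕ) (hd : 1 ≤ d)
    (A : Matrix (Fin d) (Fin d) ℝ) (hA : IsUnit A.det)
    (hexp : ∀ μ : ℂ, μ ∈ spectrum ℂ (A.map (algebraMap ℝ ℂ)) → 1 < ‖μ‖) :
    ∃ E : ℕ → Set (EuclideanSpace ℝ (Fin d)),
      (∀ j, MeasurableSet (E j)) ∧
      (∀ j, E j ⊆ Metric.closedBall (0 : EuclideanSpace ℝ (Fin d)) 1) ∧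
      (∀ j, 0 < volume (E j)) ∧
      (∀ j, (Matrix.toEuclideanLin A) ⁻¹' (E j) = E (j + 1)) ∧
      (∀ j : ℕ, volume (E j) = ENNReal.ofReal (|A.det| ^ (-(j : ℝ))) * volume (E 0)) ∧
      (∀ j l : ℕ, j ≠ l → E j ∩ E l = ∅) := by
  haveI : Nonempty (Fin d) := ⟨⟨0, hd⟩⟩
  obtain ⟨N, hN1, hNlt⟩ := aux_exists_pow_norm_lt d hd A hA hexp
  have hdet1 : 1 < |A.det| := aux_one_lt_abs_det d hd A hexp
  have hdet0 : A.det ≠ 0 := hA.ne_zero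
  set B := A⁻¹ with hB
  set c : ℝ := ‖(Matrix.toEuclideanCLM (𝕜 := ℂ) (B.map (algebraMap ℝ ℂ))) ^ N‖ with hc
  set c' : ℝ := max c (1/2) with hc'
  have hc'0 : (0:ℝ) < c' := lt_of_lt_of_le (by norm_num) (le_max_right _ _)
  have hc'1 : c' < 1 := max_lt hNlt (by norm_num)
  have hNne : (N:ℝ) ≠ 0 := by exact_mod_cast Nat.one_le_iff_ne_zero.mp hN1
  set θ : ℝ := c' ^ (1/(N:ℝ)) with hθ
  have hθ0 : 0 < θ := Real.rpow_pos_of_pos hc'0 _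
  have hθ1 : θ < 1 := Real.rpow_lt_one hc'0.le hc'1 (by positivity)
  have hθN : θ ^ N = c' := by
    rw [hθ, ← Real.rpow_natCast (c' ^ (1/(N:ℝ))) N, ← Real.rpow_mul hc'0.le,
      one_div, inv_mul_cancel₀ hNne, Real.rpow_one]
  -- the contraction estimate at exponent N
  have hkey : ∀ x : EuclideanSpace ℝ (Fin d),
      ‖Matrix.toEuclideanLin (B ^ N) x‖ ≤ θ ^ N * ‖x‖ := by
    intro x
    have hmap : (B ^ N).map (algebraMap ℝ ℂ) = (B.map (algebraMap ℝ ℂ)) ^ N := by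
      rw [← RingHom.mapMatrix_apply, ← RingHom.mapMatrix_apply, map_pow]
    have hclm : Matrix.toEuclideanCLM (𝕜 := ℂ) ((B.map (algebraMap ℝ ℂ)) ^ N)
        = (Matrix.toEuclideanCLM (𝕜 := ℂ) (B.map (algebraMap ℝ ℂ))) ^ N := map_pow _ _ _
    have h1 : ‖Matrix.toEuclideanLin (B ^ N) x‖
        = ‖(Matrix.toEuclideanCLM (𝕜 := ℂ) (B.map (algebraMap ℝ ℂ)) ^ N) (auxJ d x)‖ := by
      rw [← hclm, ← hmap, auxJ_comm, auxJ_norm]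
    rw [h1]
    calc ‖(Matrix.toEuclideanCLM (𝕜 := ℂ) (B.map (algebraMap ℝ ℂ)) ^ N) (auxJ d x)‖
        ≤ c * ‖auxJ d x‖ := ContinuousLinearMap.le_opNorm _ _
      _ = c * ‖x‖ := by rw [auxJ_norm]
      _ ≤ c' * ‖x‖ := mul_le_mul_of_nonneg_right (le_max_left _ _) (norm_nonneg _)
      _ = θ ^ N * ‖x‖ := by rw [hθN]
  -- the adapted gauge
  set g : EuclideanSpace ℝ (Fin d) → ℝ :=
    fun x => ∑ k ∈ Finset.range N, θ⁻¹ ^ k * ‖Matrix.toEuclideanLin (B ^ k) x‖ with hg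
  have hgnonneg : ∀ x, 0 ≤ g x := fun x =>
    Finset.sum_nonneg fun k _ => mul_nonneg (by positivity) (norm_nonneg _)
  have hgnorm : ∀ x, ‖x‖ ≤ g x := by
    intro x
    have h0 : θ⁻¹ ^ 0 * ‖Matrix.toEuclideanLin (B ^ 0) x‖ = ‖x‖ := by
      rw [pow_zero, pow_zero, aux_one_apply, one_mul]
    have := Finset.single_le_sum
      (f := fun k => θ⁻¹ ^ k * ‖Matrix.toEuclideanLin (B ^ k) x‖)
      (fun k _ => mul_nonneg (by positivity) (norm_nonneg _))
      (Finset.mem_range.mpr (Nat.lt_of_lt_of_le Nat.zero_lt_one hN1))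
    have h2 : θ⁻¹ ^ 0 * ‖(Matrix.toEuclideanLin ((B:Matrix (Fin d) (Fin d) ℝ) ^ 0)) x‖ ≤ g x := this
    rw [h0] at h2
    exact h2
  have hgcont : Continuous g := by
    apply continuous_finset_sum
    intro k _
    exact continuous_const.mul ((LinearMap.continuous_of_finiteDimensional _).norm)
  have hg0 : g 0 = 0 := by
    simp [hg]
  have hstep : ∀ (k : ℕ) x, Matrix.toEuclideanLin (B ^ k) (Matrix.toEuclideanLin B x)
      = Matrix.toEuclideanLin (B ^ (k+1)) x := by
    intro k x
    rw [← aux_mul_apply, ← pow_succ]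
  have hcontr : ∀ x, g (Matrix.toEuclideanLin B x) ≤ θ * g x := by
    intro x
    set v : ℕ → ℝ := fun k => θ⁻¹ ^ k * ‖Matrix.toEuclideanLin (B ^ k) x‖ with hv
    have hvN : v N ≤ v 0 := by
      have h1 : v N ≤ θ⁻¹ ^ N * (θ ^ N * ‖x‖) :=
        mul_le_mul_of_nonneg_left (hkey x) (by positivity)
      have h2 : θ⁻¹ ^ N * (θ ^ N * ‖x‖) = ‖x‖ := by
        rw [← mul_assoc, inv_pow, inv_mul_cancel₀ (by positivity), one_mul]
      have h3 : v 0 = ‖x‖ := by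
        rw [hv]; simp [aux_one_apply]
      rw [h3]
      exact h1.trans (le_of_eq h2)
    have hsum : g (Matrix.toEuclideanLin B x) = θ * ∑ k ∈ Finset.range N, v (k+1) := by
      rw [hg, Finset.mul_sum]
      apply Finset.sum_congr rfl
      intro k _
      have hsc : θ * θ⁻¹ ^ (k+1) = θ⁻¹ ^ k := by
        rw [pow_succ']
        rw [← mul_assoc, mul_inv_cancel₀ (ne_of_gt hθ0), one_mul]
      rw [hstep k x]
      show _ = θ * (θ⁻¹ ^ (k+1) * ‖(Matrix.toEuclideanLin (B ^ (k+1))) x‖)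
      rw [← mul_assoc, hsc]
    have h2 : ∑ k ∈ Finset.range N, v (k+1) ≤ ∑ k ∈ Finset.range N, v k := by
      have e1 := Finset.sum_range_succ' v N
      have e2 := Finset.sum_range_succ v N
      have : (∑ k ∈ Finset.range N, v (k+1)) + v 0 = (∑ k ∈ Finset.range N, v k) + v N := by
        rw [← e1, e2]
      linarith
    calc g (Matrix.toEuclideanLin B x) = θ * ∑ k ∈ Finset.range N, v (k+1) := hsum
      _ ≤ θ * ∑ k ∈ Finset.range N, v k := mul_le_mul_of_nonneg_left h2 hθ0.le
      _ = θ * g x := rfl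
  -- the basic set S
  set S : Set (EuclideanSpace ℝ (Fin d)) := {x | g x ≤ 1} with hS
  have hSclosed : IsClosed S := isClosed_le hgcont continuous_const
  have hSball : S ⊆ Metric.closedBall 0 1 := by
    intro x hx
    rw [Metric.mem_closedBall, dist_zero_right]
    exact le_trans (hgnorm x) hx
  have hBA : ∀ y : EuclideanSpace ℝ (Fin d),
      Matrix.toEuclideanLin B (Matrix.toEuclideanLin A y) = y := by
    intro y
    rw [← aux_mul_apply, hB, Matrix.nonsing_inv_mul A hA, aux_one_apply]
  have hSA : ∀ y, Matrix.toEuclideanLin A y ∈ S → y ∈ S := by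
    intro y hy
    have h1 : g y ≤ θ * g (Matrix.toEuclideanLin A y) := by
      conv_lhs => rw [← hBA y]
      exact hcontr _
    have h2 : θ * g (Matrix.toEuclideanLin A y) ≤ θ * 1 :=
      mul_le_mul_of_nonneg_left hy hθ0.le
    exact le_trans h1 (by linarith)
  -- the sets F and E
  set F : ℕ → Set (EuclideanSpace ℝ (Fin d)) :=
    fun j => (Matrix.toEuclideanLin (A ^ j)) ⁻¹' S with hF
  have hFsucc : ∀ j, (Matrix.toEuclideanLin A) ⁻¹' (F j) = F (j+1) := by
    intro j
    ext x
    simp only [hF, Set.mem_preimage]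
    rw [← aux_mul_apply, ← pow_succ]
  have hFmono : ∀ j, F (j+1) ⊆ F j := by
    intro j x hx
    have h1 : Matrix.toEuclideanLin A (Matrix.toEuclideanLin (A ^ j) x) ∈ S := by
      rw [← aux_mul_apply, ← pow_succ']
      exact hx
    exact hSA _ h1
  have hFanti : Antitone F := antitone_nat_of_succ_le fun n => hFmono n
  have hF0 : F 0 = S := by
    ext x
    simp only [hF, Set.mem_preimage, pow_zero, aux_one_apply]
  have hFmeas : ∀ j, MeasurableSet (F j) := fun j =>
    hSclosed.measurableSet.preimage (LinearMap.continuous_of_finiteDimensional _).measurable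
  have hFS : ∀ j, F j ⊆ S := fun j => hF0 ▸ hFanti (Nat.zero_le j)
  set E : ℕ → Set (EuclideanSpace ℝ (Fin d)) := fun j => F j \ F (j+1) with hE
  -- preimage identities
  have hEsucc : ∀ j, (Matrix.toEuclideanLin A) ⁻¹' (E j) = E (j+1) := by
    intro j
    rw [hE]
    show (Matrix.toEuclideanLin A) ⁻¹' (F j \ F (j+1)) = _
    rw [Set.preimage_diff, hFsucc j, hFsucc (j+1)]
  have hF1pre : ∀ j, (Matrix.toEuclideanLin (A ^ j)) ⁻¹' (F 1) = F (j+1) := by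
    intro j
    ext x
    simp only [hF, Set.mem_preimage]
    rw [pow_one, ← aux_mul_apply, ← pow_succ']
  have hEpre : ∀ j, E j = (Matrix.toEuclideanLin (A ^ j)) ⁻¹' (E 0) := by
    intro j
    rw [hE]
    show F j \ F (j+1) = (Matrix.toEuclideanLin (A ^ j)) ⁻¹' (F 0 \ F 1)
    rw [Set.preimage_diff, hF1pre j, hF0]
  -- volume identities
  have hdetpow : ∀ j : ℕ, LinearMap.det (Matrix.toEuclideanLin (A ^ j)) = A.det ^ j := by
    intro j
    rw [aux_det, Matrix.det_pow]
  have hvolpre : ∀ j, volume (E j) = ENNReal.ofReal |(A.det ^ j)⁻¹| * volume (E 0) := by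
    intro j
    rw [hEpre j,
      Measure.addHaar_preimage_linearMap volume
        (by rw [hdetpow j]; exact pow_ne_zero _ hdet0) (E 0),
      hdetpow j]
  have habsj : ∀ j : ℕ, |(A.det ^ j)⁻¹| = |A.det| ^ (-(j:ℝ)) := by
    intro j
    rw [abs_inv, abs_pow, Real.rpow_neg (abs_nonneg _), Real.rpow_natCast]
  have hvol : ∀ j : ℕ, volume (E j) = ENNReal.ofReal (|A.det| ^ (-(j:ℝ))) * volume (E 0) := by
    intro j
    rw [hvolpre j, habsj j]
  -- positivity
  have hvolS_pos : 0 < volume S := by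
    have hopen : IsOpen {x : EuclideanSpace ℝ (Fin d) | g x < 1} :=
      isOpen_lt hgcont continuous_const
    have h0mem : (0 : EuclideanSpace ℝ (Fin d)) ∈ {x | g x < 1} := by
      simp [hg0]
    calc (0:ENNReal) < volume {x : EuclideanSpace ℝ (Fin d) | g x < 1} :=
        hopen.measure_pos volume ⟨0, h0mem⟩
      _ ≤ volume S := measure_mono fun x hx => show g x ≤ 1 from le_of_lt hx
  have hvolS_fin : volume S < ⊤ :=
    lt_of_le_of_lt (measure_mono hSball) measure_closedBall_lt_top
  have hvolF1 : volume (F 1) = ENNReal.ofReal |(A.det)⁻¹| * volume S := by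
    have h1 : F 1 = (Matrix.toEuclideanLin (A ^ 1)) ⁻¹' S := rfl
    rw [h1,
      Measure.addHaar_preimage_linearMap volume
        (by rw [hdetpow 1]; simpa using hdet0) S,
      hdetpow 1, pow_one]
  have hr1 : ENNReal.ofReal |(A.det)⁻¹| < 1 := by
    rw [ENNReal.ofReal_lt_one, abs_inv]
    exact inv_lt_one_of_one_lt₀ hdet1
  have hvolF1lt : volume (F 1) < volume S := by
    rw [hvolF1]
    calc ENNReal.ofReal |(A.det)⁻¹| * volume S < 1 * volume S :=
        ENNReal.mul_lt_mul_left hvolS_pos.ne' hvolS_fin.ne hr1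
      _ = volume S := one_mul _
  have hvolE0 : 0 < volume (E 0) := by
    have hE0 : E 0 = S \ F 1 := by
      rw [hE]
      show F 0 \ F 1 = S \ F 1
      rw [hF0]
    have hsub : F 1 ⊆ S := hFS 1
    rw [hE0, measure_diff hsub (hFmeas 1).nullMeasurableSet
      (ne_of_lt (lt_of_le_of_lt (measure_mono hsub) hvolS_fin))]
    exact tsub_pos_of_lt hvolF1lt
  have hEpos : ∀ j, 0 < volume (E j) := by
    intro j
    rw [hvol j]
    exact ENNReal.mul_pos
      (ne_of_gt (ENNReal.ofReal_pos.mpr (Real.rpow_pos_of_pos (by linarith) _)))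
      hvolE0.ne'
  -- conclusion
  refine ⟨E, ?_, ?_, hEpos, hEsucc, hvol, ?_⟩
  · intro j
    exact (hFmeas j).diff (hFmeas (j+1))
  · intro j
    exact fun x hx => hSball (hFS j hx.1)
  · intro j l hjl
    have key : ∀ a b : ℕ, a < b → E a ∩ E b = ∅ := by
      intro a b hab
      ext x
      simp only [Set.mem_inter_iff, Set.mem_empty_iff_false, iff_false, not_and]
      intro hxa hxb
      exact hxa.2 (hFanti (Nat.succ_le_of_lt hab) hxb.1)
    rcases hjl.lt_or_gt with h | h
    · exact key j l h
    · rw [Set.inter_comm]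
      exact key l j h
end

section
/- Let 1 ≤ p < ∞ and let a(x) = Ax be an invertible linear map on ℝ^d such that a⁻¹ is expansive, i.e. every complex eigenvalue of A has absolute value strictly less than one. Then there exists a sequence of measurable sets (G_j)_{j≥0} contained in the closed unit ball, each of positive Lebesgue measure, with A(G_j) = G_{j+1}, |G_j| = |det A|^{j}·|G_0| and G_j ∩ G_l = ∅ for j ≠ l; moreover there exists a sequence of nonnegative functions φ_n ∈ L^p(ℝ^d), each supported in the closed unit ball and with ‖φ_n‖_{L^p(ℝ^d)} = 1, such that lim_{n→∞} ∫_{ℝ^d} |φ_n(x) − φ_n(Ax)|^p dx = | 1 − |det A|^{−1/p} |^p. -/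
open MeasureTheory Filter
open scoped NNReal ENNReal

private theorem norm_pow_tendsto_zero' (d : ℕ) (B : Matrix (Fin d) (Fin d) ℂ)
    (hcon : ∀ μ : ℂ, μ ∈ spectrum ℂ B → ‖μ‖ < 1) :
    Tendsto (fun n => ‖(Matrix.toEuclideanCLM (𝕜 := ℂ) B) ^ n‖) atTop (nhds 0) := by
  set T := Matrix.toEuclideanCLM (𝕜 := ℂ) B with hT
  have hspec : spectrum ℂ T = spectrum ℂ B :=
    AlgEquiv.spectrum_eq (Matrix.toEuclideanCLM (𝕜 := ℂ)) B
  obtain ⟨r, hr1, hr⟩ : ∃ r : ℝ≥0, r < 1 ∧ ∀ μ ∈ spectrum ℂ B, ‖μ‖₊ ≤ r := by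
    have hfin := Matrix.finite_spectrum B
    classical
    refine ⟨hfin.toFinset.sup (fun μ => ‖μ‖₊), ?_, ?_⟩
    · refine Finset.sup_lt_iff (by simp : (⊥ : ℝ≥0) < 1) |>.mpr ?_
      intro μ hμ
      have := hcon μ (hfin.mem_toFinset.mp hμ)
      simpa [← NNReal.coe_lt_coe] using this
    · intro μ hμ
      exact Finset.le_sup (hfin.mem_toFinset.mpr hμ)
  have hsr : spectralRadius ℂ T < 1 := by
    rw [spectralRadius, hspec]
    calc ⨆ μ ∈ spectrum ℂ B, (‖μ‖₊ : ℝ≥0∞) ≤ (r : ℝ≥0∞) := by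
          refine iSup₂_le fun μ hμ => ?_
          exact_mod_cast hr μ hμ
      _ < 1 := by exact_mod_cast hr1
  have hgel := spectrum.pow_nnnorm_pow_one_div_tendsto_nhds_spectralRadius T
  obtain ⟨r', hr'1, hsr'⟩ : ∃ r' : ℝ≥0, r' < 1 ∧ spectralRadius ℂ T < r' := by
    obtain ⟨r', h1, h2⟩ := exists_between hsr
    lift r' to ℝ≥0 using (h2.trans_le le_top).ne
    exact ⟨r', by exact_mod_cast h2, h1⟩
  have hev : ∀ᶠ n : ℕ in atTop, (‖T ^ n‖₊ : ℝ≥0∞) ^ (1 / (n:ℝ)) < (r' : ℝ≥0∞) :=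
    hgel.eventually_lt_const hsr'
  have hev2 : ∀ᶠ n : ℕ in atTop, ‖T ^ n‖ ≤ (r' : ℝ) ^ n := by
    filter_upwards [hev, eventually_gt_atTop 0] with n hn hn0
    have h1 : ((‖T ^ n‖₊ : ℝ≥0∞) ^ (1 / (n:ℝ))) ^ (n : ℝ) ≤ ((r' : ℝ≥0∞)) ^ (n : ℝ) :=
      ENNReal.rpow_le_rpow hn.le (by positivity)
    rw [← ENNReal.rpow_mul,
      one_div, inv_mul_cancel₀ (by exact_mod_cast hn0.ne' : (n:ℝ) ≠ 0),
      ENNReal.rpow_one, ENNReal.rpow_natCast] at h1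
    have := ENNReal.coe_le_coe.mp (by exact_mod_cast h1 : (‖T ^ n‖₊ : ℝ≥0∞) ≤ ((r' ^ n : ℝ≥0) : ℝ≥0∞))
    exact_mod_cast this
  have hgeo : Tendsto (fun n : ℕ => (r' : ℝ) ^ n) atTop (nhds 0) :=
    tendsto_pow_atTop_nhds_zero_of_lt_one r'.coe_nonneg (by exact_mod_cast hr'1)
  exact squeeze_zero' (Eventually.of_forall fun n => norm_nonneg _) hev2 hgeo

private theorem norm_toEuclideanLin_le' (d : ℕ) (M : Matrix (Fin d) (Fin d) ℝ)
    (x : EuclideanSpace ℝ (Fin d)) :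
    ‖Matrix.toEuclideanLin M x‖ ≤
      ‖Matrix.toEuclideanCLM (𝕜 := ℂ) (M.map (algebraMap ℝ ℂ))‖ * ‖x‖ := by
  set z : EuclideanSpace ℂ (Fin d) := WithLp.toLp 2 (fun i => (x i : ℂ)) with hz
  have hnz : ‖z‖ = ‖x‖ := by
    simp [EuclideanSpace.norm_eq, hz]
  have happ : Matrix.toEuclideanCLM (𝕜 := ℂ) (M.map (algebraMap ℝ ℂ)) z =
      WithLp.toLp 2 (fun i => ((Matrix.toEuclideanLin M x) i : ℂ)) := by
    ext i
    show Matrix.mulVec (M.map (algebraMap ℝ ℂ)) z.ofLp i = _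
    simp [Matrix.mulVec, dotProduct, Matrix.toEuclideanLin_apply, hz]
  have hn2 : ‖Matrix.toEuclideanCLM (𝕜 := ℂ) (M.map (algebraMap ℝ ℂ)) z‖
      = ‖Matrix.toEuclideanLin M x‖ := by
    rw [happ]
    simp [EuclideanSpace.norm_eq]
  calc ‖Matrix.toEuclideanLin M x‖
      = ‖Matrix.toEuclideanCLM (𝕜 := ℂ) (M.map (algebraMap ℝ ℂ)) z‖ := hn2.symm
    _ ≤ _ * ‖z‖ := ContinuousLinearMap.le_opNorm _ _
    _ = _ := by rw [hnz]

private theorem integral_sum_indicator_rpow' {X : Type*} [MeasurableSpace X] (μ : Measure X)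
    {ι : Type*} (s : Finset ι) (E : ι → Set X)
    (hmeas : ∀ j ∈ s, MeasurableSet (E j))
    (hfin : ∀ j ∈ s, μ (E j) ≠ ⊤)
    (hdisj : ∀ j ∈ s, ∀ l ∈ s, j ≠ l → E j ∩ E l = ∅)
    (c : ι → ℝ) {p : ℝ} (hp : 0 < p) :
    ∫ x, |∑ j ∈ s, (E j).indicator (fun _ => c j) x| ^ p ∂μ
      = ∑ j ∈ s, |c j| ^ p * (μ (E j)).toReal := by
  have hpt : ∀ x, |∑ j ∈ s, (E j).indicator (fun _ => c j) x| ^ p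
      = ∑ j ∈ s, (E j).indicator (fun _ => |c j| ^ p) x := by
    intro x
    by_cases hx : ∃ j ∈ s, x ∈ E j
    · obtain ⟨j0, hj0, hxj0⟩ := hx
      have hothers : ∀ b ∈ s, b ≠ j0 → x ∉ E b := by
        intro b hb hbne hxb
        have := hdisj b hb j0 hj0 hbne
        exact (Set.eq_empty_iff_forall_notMem.mp this x) ⟨hxb, hxj0⟩
      rw [Finset.sum_eq_single_of_mem j0 hj0
          (fun b hb hbne => Set.indicator_of_notMem (hothers b hb hbne) _),
        Finset.sum_eq_single_of_mem j0 hj0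
          (fun b hb hbne => Set.indicator_of_notMem (hothers b hb hbne) _)]
      simp [Set.indicator_of_mem hxj0]
    · push_neg at hx
      rw [Finset.sum_eq_zero fun j hj => Set.indicator_of_notMem (hx j hj) _,
        Finset.sum_eq_zero fun j hj => Set.indicator_of_notMem (hx j hj) _]
      simp [Real.zero_rpow hp.ne']
  simp_rw [hpt]
  rw [integral_finset_sum]
  · refine Finset.sum_congr rfl fun j hj => ?_
    rw [integral_indicator_const _ (hmeas j hj), smul_eq_mul, mul_comm]
    rfl
  · intro j hj
    exact (integrable_indicator_iff (hmeas j hj)).mpr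
      (integrableOn_const (hfin j hj))

set_option maxHeartbeats 2000000 in
theorem contractive_sets_and_minimizing_sequence (d : ℕ) (hd : 1 ≤ d) (p : ℝ) (hp : 1 ≤ p)
    (A : Matrix (Fin d) (Fin d) ℝ) (hA : IsUnit A.det)
    (hcon : ∀ μ : ℂ, μ ∈ spectrum ℂ (A.map (algebraMap ℝ ℂ)) → ‖μ‖ < 1) :
    (∃ G : ℕ → Set (EuclideanSpace ℝ (Fin d)),
      (∀ j, MeasurableSet (G j)) ∧
      (∀ j, G j ⊆ Metric.closedBall (0 : EuclideanSpace ℝ (Fin d)) 1) ∧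
      (∀ j, 0 < volume (G j)) ∧
      (∀ j, (Matrix.toEuclideanLin A) '' (G j) = G (j + 1)) ∧
      (∀ j : ℕ, volume (G j) = ENNReal.ofReal (|A.det| ^ (j : ℕ)) * volume (G 0)) ∧
      (∀ j l : ℕ, j ≠ l → G j ∩ G l = ∅)) ∧
    ∃ φ : ℕ → EuclideanSpace ℝ (Fin d) → ℝ,
      (∀ n x, 0 ≤ φ n x) ∧
      (∀ n, Function.support (φ n) ⊆ Metric.closedBall (0 : EuclideanSpace ℝ (Fin d)) 1) ∧
      (∀ n, MemLp (φ n) (ENNReal.ofReal p) volume) ∧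
      (∀ n, (∫ x, |φ n x| ^ p) = 1) ∧
      Tendsto (fun n => ∫ x, |φ n x - φ n (Matrix.toEuclideanLin A x)| ^ p) atTop
        (nhds (|1 - |A.det| ^ (-(1 / p))| ^ p)) := by
  classical
  haveI : Nonempty (Fin d) := ⟨⟨0, by omega⟩⟩
  haveI : Nontrivial (EuclideanSpace ℝ (Fin d)) := inferInstance
  have hp0 : 0 < p := lt_of_lt_of_le one_pos hp
  have hdet0 : A.det ≠ 0 := hA.ne_zero
  have hAU : IsUnit A := (Matrix.isUnit_iff_isUnit_det A).mpr hA
  set δ := |A.det| with hδdef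
  have hδ0 : 0 < δ := abs_pos.mpr hdet0
  -- the linear map
  set TR : EuclideanSpace ℝ (Fin d) →L[ℝ] EuclideanSpace ℝ (Fin d) :=
    Matrix.toEuclideanCLM (𝕜 := ℝ) A with hTRdef
  set f : EuclideanSpace ℝ (Fin d) → EuclideanSpace ℝ (Fin d) := ⇑TR with hfdef
  have hfeq : ⇑(Matrix.toEuclideanLin A) = f := rfl
  have hTRpow : ∀ n : ℕ, ⇑(TR ^ n) = f^[n] := fun n => by
    induction n with
    | zero => rfl
    | succ k ih => rw [pow_succ, Function.iterate_succ, ← ih]; rfl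
  have hTRn : ∀ n : ℕ, TR ^ n = Matrix.toEuclideanCLM (𝕜 := ℝ) (A ^ n) := fun n =>
    (map_pow (Matrix.toEuclideanCLM (𝕜 := ℝ)) A n).symm
  -- determinant of the linear map
  have hlindet : LinearMap.det (Matrix.toEuclideanLin A) = A.det := by
    rw [Matrix.toEuclideanLin_eq_toLin, LinearMap.det_toLin]
  -- norms tend to zero
  have hcnorm : Tendsto (fun n : ℕ => ‖TR ^ n‖) atTop (nhds 0) := by
    have hc := norm_pow_tendsto_zero' d (A.map (algebraMap ℝ ℂ)) hcon
    refine squeeze_zero (fun n => norm_nonneg _) (fun n => ?_) hc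
    refine ContinuousLinearMap.opNorm_le_bound _ (norm_nonneg _) fun x => ?_
    rw [hTRn]
    have h1 : (Matrix.toEuclideanCLM (𝕜 := ℝ) (A ^ n)) x = Matrix.toEuclideanLin (A ^ n) x := rfl
    have h2 : (Matrix.toEuclideanCLM (𝕜 := ℂ) (A.map (algebraMap ℝ ℂ))) ^ n
        = Matrix.toEuclideanCLM (𝕜 := ℂ) ((A ^ n).map (algebraMap ℝ ℂ)) := by
      rw [← map_pow (Matrix.toEuclideanCLM (𝕜 := ℂ))]
      congr 1
      exact (map_pow ((algebraMap ℝ ℂ).mapMatrix) A n).symm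
    rw [h1, h2]
    exact norm_toEuclideanLin_le' d (A ^ n) x
  -- injectivity and openness
  obtain ⟨u, hu⟩ := (hAU.map (Matrix.toEuclideanCLM (𝕜 := ℝ)) : IsUnit TR)
  have hTRu : TR = (↑u : EuclideanSpace ℝ (Fin d) →L[ℝ] EuclideanSpace ℝ (Fin d)) :=
    hTRdef.trans hu.symm
  have hleft : Function.LeftInverse
      ⇑((↑u⁻¹ : EuclideanSpace ℝ (Fin d) →L[ℝ] EuclideanSpace ℝ (Fin d))) f := by
    intro x
    rw [hfdef, hTRu, ← ContinuousLinearMap.mul_apply, u.inv_mul, ContinuousLinearMap.one_apply]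
  have hright : Function.RightInverse
      ⇑((↑u⁻¹ : EuclideanSpace ℝ (Fin d) →L[ℝ] EuclideanSpace ℝ (Fin d))) f := by
    intro x
    rw [hfdef, hTRu, ← ContinuousLinearMap.mul_apply, u.mul_inv, ContinuousLinearMap.one_apply]
  have hinj : Function.Injective f := hleft.injective
  have hopen : IsOpenMap f :=
    IsOpenMap.of_inverse (ContinuousLinearMap.continuous _) hright hleft
  have hopen_iter : ∀ m : ℕ, IsOpenMap (f^[m]) := by
    intro m
    induction m with
    | zero => simpa using IsOpenMap.id
    | succ m ih =>
      rw [Function.iterate_succ']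
      exact hopen.comp ih
  have hcont : Continuous f := TR.continuous
  -- measure scaling
  have himg : ∀ s : Set (EuclideanSpace ℝ (Fin d)),
      volume (f '' s) = ENNReal.ofReal δ * volume s := by
    intro s
    rw [← hfeq]
    rw [Measure.addHaar_image_linearMap, hlindet]
  have hpreim : ∀ s : Set (EuclideanSpace ℝ (Fin d)),
      volume (f ⁻¹' s) = ENNReal.ofReal δ⁻¹ * volume s := by
    intro s
    rw [← hfeq]
    rw [Measure.addHaar_preimage_linearMap volume (by rw [hlindet]; exact hdet0), hlindet,
      abs_inv]
  -- a uniform bound on iterates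
  obtain ⟨C0, hC0⟩ := hcnorm.bddAbove_range
  have hC0mem : ∀ n : ℕ, ‖TR ^ n‖ ≤ C0 := fun n => hC0 ⟨n, rfl⟩
  set C := max C0 1 with hCdef
  have hC1 : (1:ℝ) ≤ C := le_max_right _ _
  have hCpos : (0:ℝ) < C := lt_of_lt_of_le one_pos hC1
  have hCn : ∀ n : ℕ, ‖TR ^ n‖ ≤ C := fun n => (hC0mem n).trans (le_max_left _ _)
  set s0 : ℝ := C⁻¹ with hs0def
  have hs0 : 0 < s0 := inv_pos.mpr hCpos
  have hfn_bound : ∀ (n : ℕ) (x : EuclideanSpace ℝ (Fin d)), ‖f^[n] x‖ ≤ ‖TR ^ n‖ * ‖x‖ := by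
    intro n x
    rw [← hTRpow]
    exact ContinuousLinearMap.le_opNorm _ _
  -- the sets W
  set W : ℕ → Set (EuclideanSpace ℝ (Fin d)) :=
    fun n => ⋃ k : ℕ, f^[n + k] '' Metric.ball 0 s0 with hWdef
  have hWopen : ∀ n, IsOpen (W n) :=
    fun n => isOpen_iUnion fun k => hopen_iter _ _ Metric.isOpen_ball
  have hWsub : ∀ n, W n ⊆ Metric.closedBall (0 : EuclideanSpace ℝ (Fin d)) 1 := by
    intro n x hx
    simp only [hWdef, Set.mem_iUnion, Set.mem_image] at hx
    obtain ⟨k, y, hy, rfl⟩ := hx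
    rw [Metric.mem_closedBall, dist_zero_right]
    calc ‖f^[n+k] y‖ ≤ ‖TR ^ (n+k)‖ * ‖y‖ := hfn_bound _ _
      _ ≤ C * s0 := by
          apply mul_le_mul (hCn _) ?_ (norm_nonneg _) hCpos.le
          rw [Metric.mem_ball, dist_zero_right] at hy
          exact hy.le
      _ = 1 := mul_inv_cancel₀ hCpos.ne'
  have hfW : ∀ n, f '' W n = W (n + 1) := by
    intro n
    rw [hWdef]
    simp only [Set.image_iUnion]
    refine Set.iUnion_congr fun k => ?_
    rw [← Set.image_comp, ← Function.iterate_succ', Nat.succ_add_eq_add_succ]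
    rfl
  have hWmono : ∀ n, W (n + 1) ⊆ W n := by
    intro n
    refine Set.iUnion_subset fun k => ?_
    have : n + 1 + k = n + (k + 1) := by omega
    rw [this]
    exact Set.subset_iUnion
      (fun k : ℕ => f^[n + k] '' Metric.ball (0:EuclideanSpace ℝ (Fin d)) s0) (k+1)
  have hWanti : ∀ j l, j ≤ l → W l ⊆ W j := by
    intro j l hjl
    induction l with
    | zero => rw [Nat.le_zero.mp hjl]
    | succ l ih =>
      rcases Nat.lt_or_ge j (l+1) with h | h
      · exact (hWmono l).trans (ih (by omega))
      · rw [Nat.le_antisymm hjl h]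
  have hWn_img : ∀ n, W n = f^[n] '' W 0 := by
    intro n
    induction n with
    | zero => simp
    | succ n ih =>
      rw [← hfW n, ih, ← Set.image_comp, ← Function.iterate_succ']
  have hvolW : ∀ n, volume (W n) = ENNReal.ofReal (δ ^ n) * volume (W 0) := by
    intro n
    induction n with
    | zero => simp
    | succ n ih =>
      rw [← hfW n, himg, ih, ← mul_assoc, ← ENNReal.ofReal_mul hδ0.le, pow_succ, mul_comm δ]
  have hW0pos : 0 < volume (W 0) := by
    refine lt_of_lt_of_le (Metric.measure_ball_pos volume (0 : EuclideanSpace ℝ (Fin d)) hs0) ?_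
    refine measure_mono fun x hx => ?_
    have hx' : x ∈ f^[0+0] '' Metric.ball (0:EuclideanSpace ℝ (Fin d)) s0 := by simpa using hx
    exact Set.mem_iUnion.mpr ⟨0, hx'⟩
  have hWfin : ∀ n, volume (W n) < ⊤ := by
    intro n
    exact lt_of_le_of_lt (measure_mono (hWsub n)) measure_closedBall_lt_top
  -- δ < 1
  have hδ1 : δ < 1 := by
    have key : ∀ n : ℕ, δ ^ n * (volume (W 0)).toReal
        ≤ ‖TR ^ n‖ ^ d * (volume (Metric.ball (0:EuclideanSpace ℝ (Fin d)) 1)).toReal := by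
      intro n
      have hsub : W n ⊆ Metric.closedBall 0 (‖TR ^ n‖) := by
        intro x hx
        rw [hWn_img] at hx
        obtain ⟨y, hy, rfl⟩ := hx
        rw [Metric.mem_closedBall, dist_zero_right]
        calc ‖f^[n] y‖ ≤ ‖TR ^ n‖ * ‖y‖ := hfn_bound _ _
          _ ≤ ‖TR ^ n‖ * 1 := by
              refine mul_le_mul_of_nonneg_left ?_ (norm_nonneg _)
              have := hWsub 0 hy
              rwa [Metric.mem_closedBall, dist_zero_right] at this
          _ = ‖TR ^ n‖ := mul_one _
      have hle : volume (W n) ≤ volume (Metric.closedBall (0:EuclideanSpace ℝ (Fin d)) (‖TR ^ n‖)) :=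
        measure_mono hsub
      rw [hvolW n, Measure.addHaar_closedBall volume 0 (norm_nonneg _)] at hle
      have := ENNReal.toReal_le_toReal
        (by exact (ENNReal.mul_lt_top ENNReal.ofReal_lt_top (hWfin 0)).ne)
        (by exact (ENNReal.mul_lt_top ENNReal.ofReal_lt_top measure_ball_lt_top).ne) |>.mpr hle
      rw [ENNReal.toReal_mul, ENNReal.toReal_mul, ENNReal.toReal_ofReal (by positivity),
        ENNReal.toReal_ofReal (by positivity), finrank_euclideanSpace_fin] at this
      exact this
    have hW0r : 0 < (volume (W 0)).toReal :=
      ENNReal.toReal_pos hW0pos.ne' (hWfin 0).ne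
    have htend : Tendsto (fun n : ℕ => δ ^ n) atTop (nhds 0) := by
      have h1 : Tendsto (fun n : ℕ => ‖TR ^ n‖ ^ d
          * (volume (Metric.ball (0:EuclideanSpace ℝ (Fin d)) 1)).toReal
          / (volume (W 0)).toReal) atTop (nhds 0) := by
        have := ((hcnorm.pow d).mul_const
          ((volume (Metric.ball (0:EuclideanSpace ℝ (Fin d)) 1)).toReal)).div_const
          ((volume (W 0)).toReal)
        simpa [zero_pow (by omega : d ≠ 0)] using this
      refine squeeze_zero (fun n => by positivity) (fun n => ?_) h1
      rw [le_div_iff₀ hW0r]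
      exact key n
    have := tendsto_pow_atTop_nhds_zero_iff.mp htend
    rwa [abs_of_nonneg hδ0.le] at this
  -- the sets G
  set G : ℕ → Set (EuclideanSpace ℝ (Fin d)) := fun j => W j \ W (j + 1) with hGdef
  have hGmeas : ∀ j, MeasurableSet (G j) :=
    fun j => ((hWopen j).measurableSet).diff ((hWopen (j+1)).measurableSet)
  have hGsub : ∀ j, G j ⊆ Metric.closedBall (0 : EuclideanSpace ℝ (Fin d)) 1 :=
    fun j => (Set.diff_subset).trans (hWsub j)
  have hGimg : ∀ j, f '' G j = G (j + 1) := by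
    intro j
    rw [hGdef]
    simp only
    rw [Set.image_diff hinj, hfW, hfW]
  have hvolG : ∀ j, volume (G j) = ENNReal.ofReal (δ ^ j) * volume (G 0) := by
    have hvolG' : ∀ j, volume (G j) = volume (W j) - volume (W (j+1)) := by
      intro j
      rw [hGdef]
      exact measure_diff (hWmono j) ((hWopen (j+1)).measurableSet).nullMeasurableSet
        (hWfin (j+1)).ne
    intro j
    rw [hvolG' j, hvolG' 0, hvolW (j+1), hvolW 1, pow_one, pow_succ,
      ENNReal.ofReal_mul (by positivity : (0:ℝ) ≤ δ ^ j), hvolW j, mul_assoc,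
      ← ENNReal.mul_sub (fun _ _ => ENNReal.ofReal_ne_top)]
  have hG0pos : 0 < volume (G 0) := by
    have h1 : volume (G 0) = volume (W 0) - volume (W 1) := by
      rw [hGdef]
      exact measure_diff (hWmono 0) ((hWopen 1).measurableSet).nullMeasurableSet (hWfin 1).ne
    rw [h1, hvolW 1, pow_one]
    have hlt : ENNReal.ofReal δ * volume (W 0) < 1 * volume (W 0) := by
      refine ENNReal.mul_lt_mul_left hW0pos.ne' (hWfin 0).ne ?_
      rw [← ENNReal.ofReal_one]
      exact ENNReal.ofReal_lt_ofReal_iff_of_nonneg hδ0.le |>.mpr hδ1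
    rw [one_mul] at hlt
    exact tsub_pos_of_lt hlt
  have hGpos : ∀ j, 0 < volume (G j) := by
    intro j
    rw [hvolG j]
    exact ENNReal.mul_pos (by simp [ENNReal.ofReal_pos]; positivity) hG0pos.ne'
  have hGdisj : ∀ j l : ℕ, j ≠ l → G j ∩ G l = ∅ := by
    have key : ∀ j l : ℕ, j < l → G j ∩ G l = ∅ := by
      intro j l hjl
      rw [Set.eq_empty_iff_forall_notMem]
      rintro x ⟨⟨-, hx2⟩, hx3, -⟩
      exact hx2 (hWanti (j+1) l hjl hx3)
    intro j l hjl
    rcases Nat.lt_or_ge j l with h | h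
    · exact key j l h
    · rw [Set.inter_comm]
      exact key l j (by omega)
  refine ⟨⟨G, hGmeas, hGsub, hGpos, fun j => by rw [hfeq]; exact hGimg j, hvolG, hGdisj⟩, ?_⟩
  -- Part 2: the minimizing sequence
  set H : Set (EuclideanSpace ℝ (Fin d)) := f ⁻¹' (G 0) with hHdef
  have hHmeas : MeasurableSet H := (hGmeas 0).preimage hcont.measurable
  have hvolH : volume H = ENNReal.ofReal δ⁻¹ * volume (G 0) := hpreim _
  have hHdisj : ∀ l, H ∩ G l = ∅ := by
    intro l
    rw [Set.eq_empty_iff_forall_notMem]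
    rintro x ⟨hx1, hx2⟩
    have h2 : f x ∈ G (l+1) := by rw [← hGimg l]; exact ⟨x, hx2, rfl⟩
    exact (Set.eq_empty_iff_forall_notMem.mp (hGdisj 0 (l+1) (by omega)) (f x)) ⟨hx1, h2⟩
  set m : ℝ := (volume (G 0)).toReal with hmdef
  have hGfin : ∀ j, volume (G j) ≠ ⊤ :=
    fun j => (lt_of_le_of_lt (measure_mono (hGsub j)) measure_closedBall_lt_top).ne
  have hm0 : 0 < m := ENNReal.toReal_pos (hG0pos.ne') (hGfin 0)
  have hvolGr : ∀ j, (volume (G j)).toReal = δ ^ j * m := by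
    intro j
    rw [hvolG j, ENNReal.toReal_mul, ENNReal.toReal_ofReal (by positivity)]
  have hHfin : volume H ≠ ⊤ := by
    rw [hvolH]
    exact (ENNReal.mul_lt_top ENNReal.ofReal_lt_top (lt_top_iff_ne_top.mpr (hGfin 0))).ne
  have hvolHr : (volume H).toReal = δ⁻¹ * m := by
    rw [hvolH, ENNReal.toReal_mul, ENNReal.toReal_ofReal (by positivity)]
  set t : ℝ := δ ^ (-(1/p)) with htdef
  have ht0 : 0 < t := Real.rpow_pos_of_pos hδ0 _
  have ht1 : 1 < t := by
    rw [htdef]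
    refine (Real.one_lt_rpow_iff_of_pos hδ0).mpr (Or.inr ⟨hδ1, ?_⟩)
    have h1p : (0:ℝ) < 1/p := by positivity
    linarith
  set K : ℕ → ℝ := fun n => (((n:ℝ) + 1) * m) ^ (-(1/p)) with hKdef
  have hK0 : ∀ n, 0 < K n := by
    intro n
    exact Real.rpow_pos_of_pos (by positivity) _
  have hKp : ∀ n : ℕ, (K n) ^ p = (((n:ℝ) + 1) * m)⁻¹ := by
    intro n
    have hb : (0:ℝ) < ((n:ℝ) + 1) * m := by positivity
    have h1 : (K n) ^ p = (((n:ℝ) + 1) * m) ^ ((-(1/p)) * p) :=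
      (Real.rpow_mul hb.le _ _).symm
    rw [h1, show (-(1/p)) * p = -1 by field_simp, Real.rpow_neg_one]
  set c : ℕ → ℕ → ℝ := fun n j => K n * t ^ j with hcdef
  have hc0 : ∀ n j, 0 ≤ c n j := fun n j => by positivity
  have htp : ∀ j : ℕ, (t ^ j) ^ p = (δ ^ j)⁻¹ := by
    intro j
    have h1 : t ^ j = δ ^ ((-(1/p)) * j) := by
      rw [htdef, ← Real.rpow_natCast (δ ^ (-(1/p))) j, ← Real.rpow_mul hδ0.le]
    rw [h1, ← Real.rpow_mul hδ0.le]
    have h2 : (-(1/p)) * j * p = -(j:ℝ) := by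
      field_simp
    rw [h2, Real.rpow_neg hδ0.le, Real.rpow_natCast]
  have hterm : ∀ n j : ℕ, |c n j| ^ p * (δ ^ j * m) = (((n:ℝ) + 1))⁻¹ := by
    intro n j
    rw [abs_of_nonneg (hc0 n j), hcdef]
    rw [Real.mul_rpow (hK0 n).le (by positivity), hKp, htp]
    have hδj : (0:ℝ) < δ ^ j := by positivity
    field_simp
  set φ : ℕ → EuclideanSpace ℝ (Fin d) → ℝ :=
    fun n x => ∑ j ∈ Finset.range (n+1), (G j).indicator (fun _ => c n j) x with hφdef
  have hφ0 : ∀ n x, 0 ≤ φ n x := by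
    intro n x
    exact Finset.sum_nonneg fun j _ => Set.indicator_nonneg (fun _ _ => hc0 n j) x
  have hφsupp : ∀ n, Function.support (φ n) ⊆
      Metric.closedBall (0 : EuclideanSpace ℝ (Fin d)) 1 := by
    intro n x hx
    rcases Finset.exists_ne_zero_of_sum_ne_zero hx with ⟨j, hj, hne⟩
    exact hGsub j (Set.mem_of_indicator_ne_zero hne)
  have hφmem : ∀ n, MemLp (φ n) (ENNReal.ofReal p) volume := by
    intro n
    have := memLp_finset_sum' (μ := volume) (p := ENNReal.ofReal p) (Finset.range (n+1))
      (f := fun j => (G j).indicator (fun _ => c n j))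
      (fun j _ => memLp_indicator_const _ (hGmeas j) _ (Or.inr (hGfin j)))
    have heq : φ n = ∑ i ∈ Finset.range (n+1), (fun j => (G j).indicator fun _ => c n j) i := by
      funext x
      simp [hφdef, Finset.sum_apply]
    rw [heq]
    exact this
  have hφnorm : ∀ n, (∫ x, |φ n x| ^ p) = 1 := by
    intro n
    rw [hφdef]
    rw [integral_sum_indicator_rpow' volume _ G (fun j _ => hGmeas j) (fun j _ => hGfin j)
      (fun j _ l _ h => hGdisj j l h) (c n) hp0]
    have : ∀ j ∈ Finset.range (n+1), |c n j| ^ p * (volume (G j)).toReal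
        = (((n:ℝ) + 1))⁻¹ := by
      intro j _
      rw [hvolGr j, hterm n j]
    rw [Finset.sum_congr rfl this, Finset.sum_const, Finset.card_range, nsmul_eq_mul]
    push_cast
    field_simp
  -- the difference integral
  set L : ℝ := (t - 1) ^ p with hLdef
  have hInt : ∀ n : ℕ, (∫ x, |φ n x - φ n (f x)| ^ p)
      = L + ((δ⁻¹ + 1) - L) * (1/((n:ℝ)+1)) := by
    intro n
    set E' : ℕ → Set (EuclideanSpace ℝ (Fin d)) :=
      fun k => if k = 0 then H else G (k-1) with hE'def
    set c' : ℕ → ℝ := fun k =>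
      (if k = 0 then 0 else c n (k-1)) - (if k ≤ n then c n k else 0) with hc'def
    have hpreG : ∀ j : ℕ, f ⁻¹' (G j) = E' j := by
      intro j
      cases j with
      | zero => rfl
      | succ j =>
        rw [← hGimg j, Set.preimage_image_eq _ hinj]
        simp [hE'def]
    have hψ : ∀ x, φ n x - φ n (f x)
        = ∑ k ∈ Finset.range (n+2), (E' k).indicator (fun _ => c' k) x := by
      intro x
      have h1 : φ n (f x) = ∑ j ∈ Finset.range (n+1),
          (E' j).indicator (fun _ => c n j) x := by
        rw [hφdef]
        refine Finset.sum_congr rfl fun j _ => ?_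
        rw [← hpreG j]
        by_cases hxj : x ∈ f ⁻¹' (G j)
        · rw [Set.indicator_of_mem hxj, Set.indicator_of_mem (Set.mem_preimage.mp hxj)]
        · rw [Set.indicator_of_notMem hxj,
            Set.indicator_of_notMem (fun h => hxj (Set.mem_preimage.mpr h))]
      have h2 : φ n x = ∑ k ∈ Finset.range (n+2),
          (E' k).indicator (fun _ => if k = 0 then 0 else c n (k-1)) x := by
        rw [Finset.sum_range_succ'
          (fun k => (E' k).indicator (fun _ => if k = 0 then (0:ℝ) else c n (k-1)) x) (n+1)]
        simp only [Nat.succ_ne_zero, if_false, if_true, Nat.add_sub_cancel, reduceIte]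
        have hz : (E' 0).indicator (fun _ => (0:ℝ)) x = 0 := by simp
        rw [hz, add_zero, hφdef]
        refine Finset.sum_congr rfl fun j _ => ?_
        have hEj : E' (j+1) = G j := by simp [hE'def]
        rw [hEj]
      have h3 : φ n (f x) = ∑ k ∈ Finset.range (n+2),
          (E' k).indicator (fun _ => if k ≤ n then c n k else 0) x := by
        rw [h1, Finset.sum_range_succ _ (n+1)]
        have : (E' (n+1)).indicator (fun _ => if n+1 ≤ n then c n (n+1) else (0:ℝ)) x = 0 := by
          simp [Nat.not_succ_le_self]
        rw [this, add_zero]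
        refine Finset.sum_congr rfl fun j hj => ?_
        rw [Finset.mem_range] at hj
        rw [if_pos (by omega)]
      rw [h2, h3, ← Finset.sum_sub_distrib]
      refine Finset.sum_congr rfl fun k _ => ?_
      by_cases hxk : x ∈ E' k
      · simp [Set.indicator_of_mem hxk, hc'def]
      · simp [Set.indicator_of_notMem hxk]
    have hE'meas : ∀ k ∈ Finset.range (n+2), MeasurableSet (E' k) := by
      intro k _
      by_cases hk : k = 0
      · simp [hE'def, hk, hHmeas]
      · simp only [hE'def, if_neg hk]
        exact hGmeas _
    have hE'fin : ∀ k ∈ Finset.range (n+2), volume (E' k) ≠ ⊤ := by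
      intro k _
      by_cases hk : k = 0
      · simp [hE'def, hk, hHfin]
      · simp only [hE'def, if_neg hk]
        exact hGfin _
    have hE'disj : ∀ k ∈ Finset.range (n+2), ∀ l ∈ Finset.range (n+2),
        k ≠ l → E' k ∩ E' l = ∅ := by
      intro k _ l _ hkl
      rcases Nat.eq_zero_or_pos k with hk | hk
      · rcases Nat.eq_zero_or_pos l with hl | hl
        · omega
        · simp only [hE'def, if_pos hk, if_neg (by omega : l ≠ 0)]
          exact hHdisj _
      · rcases Nat.eq_zero_or_pos l with hl | hl
        · simp only [hE'def, if_neg (by omega : k ≠ 0), if_pos hl]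
          rw [Set.inter_comm]
          exact hHdisj _
        · simp only [hE'def, if_neg (by omega : k ≠ 0), if_neg (by omega : l ≠ 0)]
          exact hGdisj _ _ (by omega)
    have hcalc : (∫ x, |φ n x - φ n (f x)| ^ p)
        = ∑ k ∈ Finset.range (n+2), |c' k| ^ p * (volume (E' k)).toReal := by
      simp_rw [hψ]
      exact integral_sum_indicator_rpow' volume _ E' hE'meas hE'fin hE'disj c' hp0
    rw [hcalc]
    -- now compute the sum
    rw [Finset.sum_range_succ _ (n+1), Finset.sum_range_succ' _ n]
    have hF0 : |c' 0| ^ p * (volume (E' 0)).toReal = (((n:ℝ)+1))⁻¹ * δ⁻¹ := by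
      have hc'0 : c' 0 = -(c n 0) := by
        simp [hc'def]
      have hE'0 : E' 0 = H := by simp [hE'def]
      rw [hc'0, abs_neg, hE'0, hvolHr]
      have := hterm n 0
      rw [pow_zero, one_mul] at this
      calc |c n 0| ^ p * (δ⁻¹ * m) = δ⁻¹ * (|c n 0| ^ p * m) := by ring
        _ = δ⁻¹ * (((n:ℝ)+1))⁻¹ := by rw [this]
        _ = (((n:ℝ)+1))⁻¹ * δ⁻¹ := by ring
    have hFlast : |c' (n+1)| ^ p * (volume (E' (n+1))).toReal = (((n:ℝ)+1))⁻¹ := by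
      have hc'l : c' (n+1) = c n n := by
        simp [hc'def, Nat.not_succ_le_self]
      have hE'l : E' (n+1) = G n := by simp [hE'def]
      rw [hc'l, hE'l, hvolGr, hterm n n]
    have hFmid : ∀ i ∈ Finset.range n, |c' (i+1)| ^ p * (volume (E' (i+1))).toReal
        = (((n:ℝ)+1))⁻¹ * L := by
      intro i hi
      rw [Finset.mem_range] at hi
      have hc'm : c' (i+1) = c n i - c n (i+1) := by
        simp [hc'def, (by omega : i + 1 ≤ n)]
      have hE'm : E' (i+1) = G i := by simp [hE'def]
      have habs : |c n i - c n (i+1)| = c n i * (t - 1) := by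
        rw [hcdef]
        simp only
        rw [pow_succ]
        have hprod : (0:ℝ) ≤ K n * t ^ i * (t - 1) :=
          mul_nonneg (mul_pos (hK0 n) (pow_pos ht0 i)).le (by linarith : (0:ℝ) ≤ t - 1)
        rw [abs_of_nonpos (by nlinarith [hprod] : K n * t ^ i - K n * (t ^ i * t) ≤ 0)]
        ring
      rw [hc'm, hE'm, hvolGr, habs,
        Real.mul_rpow (hc0 n i) (by linarith : (0:ℝ) ≤ t - 1), hLdef]
      calc (c n i) ^ p * (t-1) ^ p * (δ ^ i * m)
          = ((c n i) ^ p * (δ ^ i * m)) * (t-1)^p := by ring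
        _ = (((n:ℝ)+1))⁻¹ * (t-1)^p := by
            rw [← abs_of_nonneg (hc0 n i), hterm n i]
    rw [Finset.sum_congr rfl hFmid, hF0, hFlast, Finset.sum_const, Finset.card_range,
      nsmul_eq_mul]
    have hn1 : ((n:ℝ)+1) ≠ 0 := by positivity
    field_simp
    ring
  have hioeq : (fun n : ℕ => ∫ x, |φ n x - φ n (Matrix.toEuclideanLin A x)| ^ p)
      = fun n : ℕ => L + ((δ⁻¹ + 1) - L) * (1/((n:ℝ)+1)) := by
    funext n
    exact hInt n
  have htendsto : Tendsto (fun n : ℕ => ∫ x, |φ n x - φ n (Matrix.toEuclideanLin A x)| ^ p)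
      atTop (nhds L) := by
    rw [hioeq]
    have h0 : Tendsto (fun n : ℕ => ((δ⁻¹ + 1) - L) * (1/((n:ℝ)+1))) atTop (nhds 0) := by
      have := tendsto_one_div_add_atTop_nhds_zero_nat.const_mul ((δ⁻¹ + 1) - L)
      simpa using this
    have := (tendsto_const_nhds : Tendsto (fun _ : ℕ => L) atTop (nhds L)).add h0
    simpa using (this : Tendsto (fun n : ℕ => L + ((δ⁻¹ + 1) - L) * (1/((n:ℝ)+1))) atTop (nhds (L + 0)))
  have hLeq : |1 - t| ^ p = L := by
    rw [hLdef, abs_sub_comm, abs_of_nonneg (by linarith : (0:ℝ) ≤ t - 1)]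
  refine ⟨φ, hφ0, hφsupp, hφmem, hφnorm, ?_⟩
  rw [hLeq]
  exact htendsto
end

section
/- With K(x,y) = ψ(y−Ax)+ψ(x−Ay), one has limsup_{p→∞} [λ_{1,p}(ℝ^d)]^{1/p} ≤ λ_{1,∞}(ℝ^d). -/
open MeasureTheory Filter

section AuxLemmas

variable {d : ℕ}

private lemma aux_inv_bound {a b D : ℝ} (ha : 0 < a) (hb : 0 < b) (hD : 1 ≤ D)
    (h1 : a ≤ D * b) (h2 : b ≤ D * a) : |a⁻¹ - b⁻¹| ≤ (D - 1) * a⁻¹ := by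
  have hD0 : (0:ℝ) < D := lt_of_lt_of_le one_pos hD
  have hb' : b⁻¹ ≤ D * a⁻¹ := by
    rw [inv_eq_one_div, inv_eq_one_div, mul_one_div, div_le_div_iff₀ hb ha]
    linarith
  have hbb : D⁻¹ * a⁻¹ ≤ b⁻¹ := by
    rw [inv_eq_one_div D, inv_eq_one_div a, inv_eq_one_div b, one_div_mul_one_div,
      div_le_div_iff₀ (by positivity) hb]
    linarith
  have h3 : 2 ≤ D + D⁻¹ := by
    rw [← sub_nonneg]
    have h4 : D + D⁻¹ - 2 = (D - 1)^2 / D := by field_simp; ring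
    rw [h4]; positivity
  have h5 : 1 - D⁻¹ ≤ D - 1 := by linarith
  rw [abs_le]
  constructor
  · have : a⁻¹ ≥ 0 := by positivity
    nlinarith
  · have h6 : a⁻¹ - b⁻¹ ≤ a⁻¹ - D⁻¹ * a⁻¹ := by linarith
    have h7 : a⁻¹ - D⁻¹ * a⁻¹ = (1 - D⁻¹) * a⁻¹ := by ring
    have h8 : (1 - D⁻¹) * a⁻¹ ≤ (D - 1) * a⁻¹ :=
      mul_le_mul_of_nonneg_right h5 (by positivity)
    linarith

private lemma aux_rpow_bound_s18 {s t C β : ℝ} (hs : 1 ≤ s) (ht : 1 ≤ t) (hC : 1 ≤ C) (hβ : 0 ≤ β)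
    (h1 : s ≤ C * t) (h2 : t ≤ C * s) :
    |s ^ (-β) - t ^ (-β)| ≤ (C ^ β - 1) * s ^ (-β) := by
  have hs0 : (0:ℝ) < s := lt_of_lt_of_le one_pos hs
  have ht0 : (0:ℝ) < t := lt_of_lt_of_le one_pos ht
  have hC0 : (0:ℝ) ≤ C := le_trans zero_le_one hC
  have ha : 0 < s ^ β := Real.rpow_pos_of_pos hs0 β
  have hb : 0 < t ^ β := Real.rpow_pos_of_pos ht0 β
  have hD : 1 ≤ C ^ β := Real.one_le_rpow hC hβ
  have hab : s ^ β ≤ C ^ β * t ^ β := by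
    calc s ^ β ≤ (C * t) ^ β := Real.rpow_le_rpow hs0.le h1 hβ
      _ = C ^ β * t ^ β := Real.mul_rpow hC0 ht0.le
  have hba : t ^ β ≤ C ^ β * s ^ β := by
    calc t ^ β ≤ (C * s) ^ β := Real.rpow_le_rpow ht0.le h2 hβ
      _ = C ^ β * s ^ β := Real.mul_rpow hC0 hs0.le
  have := aux_inv_bound ha hb hD hab hba
  rwa [Real.rpow_neg hs0.le, Real.rpow_neg ht0.le]

private lemma aux_detL (A : Matrix (Fin d) (Fin d) ℝ) :
    LinearMap.det (Matrix.toEuclideanLin A) = A.det := by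
  rw [Matrix.toEuclideanLin_eq_toLin]
  exact LinearMap.det_toLin _ A

private lemma aux_leftinv (A : Matrix (Fin d) (Fin d) ℝ) (hA : IsUnit A.det)
    (x : EuclideanSpace ℝ (Fin d)) :
    Matrix.toEuclideanLin A⁻¹ (Matrix.toEuclideanLin A x) = x := by
  have h1 : A⁻¹ * A = 1 := Matrix.nonsing_inv_mul A hA
  have h2 : (Matrix.toLin (PiLp.basisFun 2 ℝ (Fin d)) (PiLp.basisFun 2 ℝ (Fin d)) A⁻¹).comp
      (Matrix.toLin (PiLp.basisFun 2 ℝ (Fin d)) (PiLp.basisFun 2 ℝ (Fin d)) A) = LinearMap.id := by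
    rw [← Matrix.toLin_mul, h1, Matrix.toLin_one]
  rw [Matrix.toEuclideanLin_eq_toLin]
  exact LinearMap.congr_fun h2 x

private lemma aux_psi_int (ψ : EuclideanSpace ℝ (Fin d) → ℝ)
    (hψmeas : Measurable ψ) (hψnn : ∀ z, 0 ≤ ψ z) {M : ℝ} (hM : ∀ z, ψ z ≤ M)
    (hψsupp : ∀ z, ψ z ≠ 0 → z ∈ Metric.closedBall (0 : EuclideanSpace ℝ (Fin d)) 1) :
    Integrable ψ := by
  refine Integrable.mono'
    (g := (Metric.closedBall (0 : EuclideanSpace ℝ (Fin d)) 1).indicator fun _ => M) ?_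
    hψmeas.aestronglyMeasurable (Filter.Eventually.of_forall ?_)
  · exact (integrable_indicator_iff measurableSet_closedBall).2
      (integrableOn_const measure_closedBall_lt_top.ne)
  · intro z
    rw [Real.norm_eq_abs, abs_of_nonneg (hψnn z)]
    by_cases hz : z ∈ Metric.closedBall (0 : EuclideanSpace ℝ (Fin d)) 1
    · rw [Set.indicator_of_mem hz]; exact hM z
    · rw [Set.indicator_of_notMem hz]
      by_contra h
      push_neg at h
      exact hz (hψsupp z (by linarith [hψnn z]))

private lemma aux_kernel_int (ψ : EuclideanSpace ℝ (Fin d) → ℝ) (hψmeas : Measurable ψ)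
    (hψint : Integrable ψ)
    (A : Matrix (Fin d) (Fin d) ℝ) (hA : IsUnit A.det) (x : EuclideanSpace ℝ (Fin d)) :
    Integrable (fun y => ψ (y - Matrix.toEuclideanLin A x)
        + ψ (x - Matrix.toEuclideanLin A y)) ∧
    (∫ y, (ψ (y - Matrix.toEuclideanLin A x) + ψ (x - Matrix.toEuclideanLin A y)))
      = (∫ z, ψ z) + |A.det⁻¹| * (∫ z, ψ z) := by
  have hdet0 : LinearMap.det (Matrix.toEuclideanLin A) ≠ 0 := by
    rw [aux_detL]; exact hA.ne_zero
  have hLcont : Continuous (Matrix.toEuclideanLin A) :=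
    (Matrix.toEuclideanLin A).continuous_of_finiteDimensional
  have hmap : Measure.map (⇑(Matrix.toEuclideanLin A)) volume
      = ENNReal.ofReal |A.det⁻¹| • volume := by
    have h := Measure.map_linearMap_addHaar_eq_smul_addHaar (volume) hdet0
    rwa [aux_detL] at h
  have hgmeas : Measurable fun z => ψ (x - z) :=
    hψmeas.comp (measurable_const.sub measurable_id)
  have hgint : Integrable (fun z => ψ (x - z)) := hψint.comp_sub_left x
  have h2 : Integrable (fun y => ψ (x - Matrix.toEuclideanLin A y)) := by
    have h3 : Integrable (fun z => ψ (x - z))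
        (Measure.map (⇑(Matrix.toEuclideanLin A)) volume) := by
      rw [hmap]; exact hgint.smul_measure ENNReal.ofReal_ne_top
    exact (integrable_map_measure hgmeas.aestronglyMeasurable
      hLcont.measurable.aemeasurable).1 h3
  have h1 : Integrable (fun y => ψ (y - Matrix.toEuclideanLin A x)) :=
    hψint.comp_sub_right _
  refine ⟨h1.add h2, ?_⟩
  rw [integral_add h1 h2]
  congr 1
  · exact integral_sub_right_eq_self ψ _
  · rw [← integral_map hLcont.measurable.aemeasurable hgmeas.aestronglyMeasurable, hmap,
      integral_smul_measure, ENNReal.toReal_ofReal (abs_nonneg _), smul_eq_mul,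
      integral_sub_left_eq_self ψ volume x]

private lemma aux_comp (ψ : EuclideanSpace ℝ (Fin d) → ℝ)
    (hψsupp : ∀ z, ψ z ≠ 0 → z ∈ Metric.closedBall (0 : EuclideanSpace ℝ (Fin d)) 1)
    (A : Matrix (Fin d) (Fin d) ℝ) (hA : IsUnit A.det)
    (K : EuclideanSpace ℝ (Fin d) → EuclideanSpace ℝ (Fin d) → ℝ)
    (hK : K = fun x y =>
      ψ (y - Matrix.toEuclideanLin A x) + ψ (x - Matrix.toEuclideanLin A y)) :
    ∃ C : ℝ, 2 ≤ C ∧ ∀ x y : EuclideanSpace ℝ (Fin d), K x y ≠ 0 →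
      1 + ‖x‖ ≤ C * (1 + ‖y‖) ∧ 1 + ‖y‖ ≤ C * (1 + ‖x‖) := by
  set L := Matrix.toEuclideanLin A with hL
  set Lc := LinearMap.toContinuousLinearMap L with hLc
  set LB := Matrix.toEuclideanLin A⁻¹ with hLB
  set LBc := LinearMap.toContinuousLinearMap LB with hLBc
  have hCA : ∀ x : EuclideanSpace ℝ (Fin d), ‖L x‖ ≤ ‖Lc‖ * ‖x‖ := by
    intro x
    have h1 := Lc.le_opNorm x
    simp only [hLc, LinearMap.coe_toContinuousLinearMap'] at h1
    exact h1
  have hCB : ∀ x : EuclideanSpace ℝ (Fin d), ‖x‖ ≤ ‖LBc‖ * ‖L x‖ := by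
    intro x
    have h1 := LBc.le_opNorm (L x)
    simp only [hLBc, LinearMap.coe_toContinuousLinearMap'] at h1
    rwa [hLB, aux_leftinv A hA x] at h1
  have hCA0 : (0:ℝ) ≤ ‖Lc‖ := norm_nonneg _
  have hCB0 : (0:ℝ) ≤ ‖LBc‖ := norm_nonneg _
  refine ⟨2 + ‖Lc‖ + ‖LBc‖, by linarith, ?_⟩
  intro x y hxy
  have hcases : ψ (y - L x) ≠ 0 ∨ ψ (x - L y) ≠ 0 := by
    by_contra h
    push_neg at h
    apply hxy
    rw [hK]
    simp only [← hL, h.1, h.2, add_zero]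
  have hnx := norm_nonneg x
  have hny := norm_nonneg y
  rcases hcases with h | h
  · have h1 : ‖y - L x‖ ≤ 1 := by
      have := hψsupp _ h; rwa [mem_closedBall_zero_iff] at this
    have hy1 : ‖y‖ ≤ ‖L x‖ + 1 := by
      have := norm_sub_norm_le y (L x); linarith
    have hx1 : ‖L x‖ ≤ ‖y‖ + 1 := by
      have h2 := norm_sub_norm_le (L x) y
      rw [norm_sub_rev] at h2; linarith
    have h3 : ‖x‖ ≤ ‖LBc‖ * (‖y‖ + 1) := by
      have := hCB x
      nlinarith
    have h4 : ‖y‖ ≤ ‖Lc‖ * ‖x‖ + 1 := by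
      have := hCA x; linarith
    constructor
    · nlinarith
    · nlinarith
  · have h1 : ‖x - L y‖ ≤ 1 := by
      have := hψsupp _ h; rwa [mem_closedBall_zero_iff] at this
    have hy1 : ‖x‖ ≤ ‖L y‖ + 1 := by
      have := norm_sub_norm_le x (L y); linarith
    have hx1 : ‖L y‖ ≤ ‖x‖ + 1 := by
      have h2 := norm_sub_norm_le (L y) x
      rw [norm_sub_rev] at h2; linarith
    have h3 : ‖y‖ ≤ ‖LBc‖ * (‖x‖ + 1) := by
      have := hCB y
      nlinarith
    have h4 : ‖x‖ ≤ ‖Lc‖ * ‖y‖ + 1 := by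
      have := hCA y; linarith
    constructor
    · nlinarith
    · nlinarith

end AuxLemmas

/-- The `p = ∞` first eigenvalue of the nonlocal operator with kernel `K`:
the infimum, over nonzero compactly supported bounded functions `u`, of the quotient of the
supremum of `|u x - u y|` over pairs of points of the support of `u` where the kernel is
positive, by the supremum of `|u|` on the support of `u`. -/
noncomputable def lambdaOneInfty (d : ℕ)
    (K : EuclideanSpace ℝ (Fin d) → EuclideanSpace ℝ (Fin d) → ℝ) : ℝ :=
  sInf { r : ℝ |
    ∃ u : EuclideanSpace ℝ (Fin d) → ℝ,
      MemLp u ⊤ volume ∧ HasCompactSupport u ∧ u ≠ 0 ∧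
      r = sSup { v : ℝ | ∃ x y : EuclideanSpace ℝ (Fin d),
              x ∈ Function.support u ∧ y ∈ Function.support u ∧ 0 < K x y ∧
              v = |u x - u y| } /
          sSup { v : ℝ | ∃ x ∈ Function.support u, v = |u x| } }

private lemma aux_lambda_le {d : ℕ}
    (ψ : EuclideanSpace ℝ (Fin d) → ℝ)
    (hψmeas : Measurable ψ) (hψnn : ∀ z, 0 ≤ ψ z) (hψint : Integrable ψ)
    (A : Matrix (Fin d) (Fin d) ℝ) (hA : IsUnit A.det)
    (K : EuclideanSpace ℝ (Fin d) → EuclideanSpace ℝ (Fin d) → ℝ)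
    (hK : K = fun x y =>
      ψ (y - Matrix.toEuclideanLin A x) + ψ (x - Matrix.toEuclideanLin A y))
    (C β p : ℝ) (hC : 1 ≤ C) (hβ : 0 < β) (hp : 0 < p) (hdp : (d : ℝ) < β * p)
    (hcomp : ∀ x y : EuclideanSpace ℝ (Fin d), K x y ≠ 0 →
      1 + ‖x‖ ≤ C * (1 + ‖y‖) ∧ 1 + ‖y‖ ≤ C * (1 + ‖x‖)) :
    lambdaOne d p K ≤ ((∫ z, ψ z) + |A.det⁻¹| * ∫ z, ψ z) * (C ^ β - 1) ^ p := by
  have hKnn : ∀ x y, 0 ≤ K x y := fun x y => by rw [hK]; exact add_nonneg (hψnn _) (hψnn _)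
  set m : ℝ := (∫ z, ψ z) + |A.det⁻¹| * ∫ z, ψ z with hm
  have hI0 : 0 ≤ ∫ z, ψ z := integral_nonneg hψnn
  have hm0 : 0 ≤ m := by rw [hm]; positivity
  set c : ℝ := C ^ β - 1 with hc
  have hc0 : 0 ≤ c := by
    have h := Real.one_le_rpow hC hβ.le
    rw [hc]; linarith
  set u : EuclideanSpace ℝ (Fin d) → ℝ := fun x => (1 + ‖x‖) ^ (-β) with hu
  have h1x : ∀ x : EuclideanSpace ℝ (Fin d), (0:ℝ) < 1 + ‖x‖ := fun x => by positivity
  have hupos : ∀ x, 0 < u x := fun x => Real.rpow_pos_of_pos (h1x x) _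
  have hucont : Continuous u :=
    (continuous_const.add continuous_norm).rpow_const (fun x => Or.inl (h1x x).ne')
  have huabs : ∀ x, |u x| = u x := fun x => abs_of_pos (hupos x)
  have hupow : ∀ x : EuclideanSpace ℝ (Fin d),
      |u x| ^ p = (1 + ‖x‖) ^ (-(β * p)) := by
    intro x
    rw [huabs]
    simp only [hu]
    rw [← Real.rpow_mul (h1x x).le, neg_mul]
  have hint : Integrable (fun x : EuclideanSpace ℝ (Fin d) => (1 + ‖x‖) ^ (-(β * p))) := by
    apply integrable_one_add_norm
    rwa [finrank_euclideanSpace_fin]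
  have hintu : Integrable (fun x => |u x| ^ p) := by
    rw [show (fun x => |u x| ^ p) = fun x : EuclideanSpace ℝ (Fin d) => (1 + ‖x‖) ^ (-(β * p))
      from funext hupow]
    exact hint
  have hden_pos : 0 < ∫ x, |u x| ^ p := by
    refine (integral_pos_iff_support_of_nonneg
      (fun x => Real.rpow_nonneg (abs_nonneg _) _) hintu).2 ?_
    have hsupp : Function.support (fun x => |u x| ^ p) = Set.univ := by
      ext x
      simp only [Function.mem_support, Set.mem_univ, iff_true]
      exact (Real.rpow_pos_of_pos (abs_pos.2 (hupos x).ne') p).ne'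
    rw [hsupp]
    exact isOpen_univ.measure_pos volume Set.univ_nonempty
  have hmem : MemLp u (ENNReal.ofReal p) volume := by
    have hq0 : (ENNReal.ofReal p) ≠ 0 := by
      simp only [ne_eq, ENNReal.ofReal_eq_zero, not_le]; exact hp
    have hqt : (ENNReal.ofReal p) ≠ ⊤ := ENNReal.ofReal_ne_top
    have h := memLp_norm_rpow_iff (μ := (volume : Measure (EuclideanSpace ℝ (Fin d))))
      (p := ENNReal.ofReal p) (q := ENNReal.ofReal p)
      hucont.aestronglyMeasurable hq0 hqt
    rw [ENNReal.div_self hq0 hqt, memLp_one_iff_integrable] at h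
    apply h.1
    have : (fun x => ‖u x‖ ^ (ENNReal.ofReal p).toReal) = fun x => |u x| ^ p := by
      funext x; rw [Real.norm_eq_abs, ENNReal.toReal_ofReal hp.le]
    rw [this]
    exact hintu
  have hne : ¬ u =ᵐ[volume] (0 : EuclideanSpace ℝ (Fin d) → ℝ) := by
    intro h
    have h2 : (fun x => |u x| ^ p) =ᵐ[volume] (fun _ => (0:ℝ)) := by
      filter_upwards [h] with x hx
      simp only [Pi.zero_apply] at hx
      rw [hx, abs_zero, Real.zero_rpow hp.ne']
    have h3 := integral_congr_ae h2
    rw [integral_zero] at h3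
    rw [h3] at hden_pos
    exact lt_irrefl _ hden_pos
  have hker := fun x => aux_kernel_int ψ hψmeas hψint A hA x
  have hKint : ∀ x, Integrable (fun y => K x y) := by intro x; rw [hK]; exact (hker x).1
  have hKsum : ∀ x, (∫ y, K x y) = m := by intro x; rw [hK, hm]; exact (hker x).2
  have hpt : ∀ x y, K x y * |u x - u y| ^ p ≤ K x y * (c * u x) ^ p := by
    intro x y
    by_cases hxy : K x y = 0
    · rw [hxy, zero_mul, zero_mul]
    · refine mul_le_mul_of_nonneg_left ?_ (hKnn x y)
      refine Real.rpow_le_rpow (abs_nonneg _) ?_ hp.le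
      obtain ⟨h1, h2⟩ := hcomp x y hxy
      exact aux_rpow_bound_s18 (s := 1 + ‖x‖) (t := 1 + ‖y‖)
        (by linarith [norm_nonneg x]) (by linarith [norm_nonneg y]) hC hβ.le h1 h2
  have hinner : ∀ x, (∫ y, K x y * |u x - u y| ^ p) ≤ m * ((c * u x) ^ p) := by
    intro x
    calc (∫ y, K x y * |u x - u y| ^ p) ≤ ∫ y, K x y * (c * u x) ^ p :=
        integral_mono_of_nonneg
          (Filter.Eventually.of_forall fun y =>
            mul_nonneg (hKnn x y) (Real.rpow_nonneg (abs_nonneg _) _))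
          ((hKint x).mul_const _)
          (Filter.Eventually.of_forall (hpt x))
      _ = (∫ y, K x y) * (c * u x) ^ p := integral_mul_const _ _
      _ = m * (c * u x) ^ p := by rw [hKsum x]
  have hcu : ∀ x, m * (c * u x) ^ p = (m * c ^ p) * |u x| ^ p := by
    intro x
    rw [Real.mul_rpow hc0 (hupos x).le, huabs x]; ring
  have hnum : (∫ x, ∫ y, K x y * |u x - u y| ^ p) ≤ (m * c ^ p) * ∫ x, |u x| ^ p := by
    have hrint : Integrable (fun x => m * (c * u x) ^ p) := by
      rw [show (fun x => m * (c * u x) ^ p) = fun x => (m * c ^ p) * |u x| ^ p from funext hcu]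
      exact hintu.const_mul _
    calc (∫ x, ∫ y, K x y * |u x - u y| ^ p)
        ≤ ∫ x, m * (c * u x) ^ p :=
          integral_mono_of_nonneg
            (Filter.Eventually.of_forall fun x => integral_nonneg fun y =>
              mul_nonneg (hKnn x y) (Real.rpow_nonneg (abs_nonneg _) _))
            hrint (Filter.Eventually.of_forall hinner)
      _ = ∫ x, (m * c ^ p) * |u x| ^ p := by simp_rw [hcu]
      _ = (m * c ^ p) * ∫ x, |u x| ^ p := integral_const_mul _ _
  have hbdd : BddBelow { r : ℝ |
      ∃ u : EuclideanSpace ℝ (Fin d) → ℝ,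
        MemLp u (ENNReal.ofReal p) volume ∧
        ¬ u =ᵐ[volume] (0 : EuclideanSpace ℝ (Fin d) → ℝ) ∧
        r = (∫ x, ∫ y, K x y * |u x - u y| ^ p) / (∫ x, |u x| ^ p) } := by
    refine ⟨0, ?_⟩
    rintro r ⟨v, -, -, rfl⟩
    exact div_nonneg
      (integral_nonneg fun x => integral_nonneg fun y =>
        mul_nonneg (hKnn x y) (Real.rpow_nonneg (abs_nonneg _) _))
      (integral_nonneg fun x => Real.rpow_nonneg (abs_nonneg _) _)
  have hle : lambdaOne d p K ≤
      (∫ x, ∫ y, K x y * |u x - u y| ^ p) / (∫ x, |u x| ^ p) := by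
    unfold lambdaOne
    exact csInf_le hbdd ⟨u, hmem, hne, rfl⟩
  refine le_trans hle ?_
  rw [div_le_iff₀ hden_pos]
  exact hnum

theorem limsup_le_lambdaOneInfty (d : ℕ) (hd : 1 ≤ d)
    (ψ : EuclideanSpace ℝ (Fin d) → ℝ)
    (hψmeas : Measurable ψ) (hψnn : ∀ z, 0 ≤ ψ z)
    (hψbdd : ∃ M : ℝ, ∀ z, ψ z ≤ M)
    (hψsupp : ∀ z, ψ z ≠ 0 → z ∈ Metric.closedBall (0 : EuclideanSpace ℝ (Fin d)) 1)
    (A : Matrix (Fin d) (Fin d) ℝ) (hA : IsUnit A.det)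
    (K : EuclideanSpace ℝ (Fin d) → EuclideanSpace ℝ (Fin d) → ℝ)
    (hK : K = fun x y =>
      ψ (y - Matrix.toEuclideanLin A x) + ψ (x - Matrix.toEuclideanLin A y)) :
    Filter.limsup (fun p : ℝ => (lambdaOne d p K) ^ (1 / p)) atTop ≤ lambdaOneInfty d K := by
  obtain ⟨M, hM⟩ := hψbdd
  have hψint : Integrable ψ := aux_psi_int ψ hψmeas hψnn hM hψsupp
  obtain ⟨C, hC2, hcomp⟩ := aux_comp ψ hψsupp A hA K hK
  have hC1 : (1:ℝ) ≤ C := by linarith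
  have hKnn : ∀ x y, 0 ≤ K x y := fun x y => by rw [hK]; exact add_nonneg (hψnn _) (hψnn _)
  have hinf : (0:ℝ) ≤ lambdaOneInfty d K := by
    unfold lambdaOneInfty
    apply Real.sInf_nonneg
    rintro r ⟨v, -, -, -, rfl⟩
    refine div_nonneg (Real.sSup_nonneg ?_) (Real.sSup_nonneg ?_)
    · rintro w ⟨x, y, -, -, -, rfl⟩; exact abs_nonneg _
    · rintro w ⟨x, -, rfl⟩; exact abs_nonneg _
  have hlam_nonneg : ∀ q : ℝ, 0 ≤ lambdaOne d q K := by
    intro q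
    unfold lambdaOne
    apply Real.sInf_nonneg
    rintro r ⟨v, -, -, rfl⟩
    exact div_nonneg
      (integral_nonneg fun x => integral_nonneg fun y =>
        mul_nonneg (hKnn x y) (Real.rpow_nonneg (abs_nonneg _) _))
      (integral_nonneg fun x => Real.rpow_nonneg (abs_nonneg _) _)
  refine le_trans ?_ hinf
  have hco : IsCoboundedUnder (· ≤ ·) atTop (fun p : ℝ => (lambdaOne d p K) ^ (1/p)) :=
    isCoboundedUnder_le_of_le atTop (x := 0)
      (fun p => Real.rpow_nonneg (hlam_nonneg p) _)
  have main : ∀ ε : ℝ, 0 < ε →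
      Filter.limsup (fun p : ℝ => (lambdaOne d p K) ^ (1 / p)) atTop ≤ ε := by
    intro ε hε
    set m : ℝ := (∫ z, ψ z) + |A.det⁻¹| * ∫ z, ψ z with hm
    have hI0 : (0:ℝ) ≤ ∫ z, ψ z := integral_nonneg hψnn
    have hm0 : 0 ≤ m := by rw [hm]; positivity
    set β : ℝ := Real.log (1 + ε / 2) / Real.log C with hβdef
    have hC0 : (0:ℝ) < C := by linarith
    have hlogC : 0 < Real.log C := Real.log_pos (by linarith)
    have hβ : 0 < β := div_pos (Real.log_pos (by linarith)) hlogC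
    have hCβ : C ^ β = 1 + ε / 2 := by
      rw [Real.rpow_def_of_pos hC0, hβdef, mul_comm, div_mul_cancel₀ _ hlogC.ne',
        Real.exp_log (by linarith)]
    apply limsup_le_of_le hco
    have hev : ∀ᶠ p in atTop, ((d:ℝ)/β + 1 ≤ p ∧ 1 ≤ p) ∧ 2*m + 2 ≤ p :=
      ((eventually_ge_atTop _).and (eventually_ge_atTop _)).and (eventually_ge_atTop _)
    filter_upwards [hev] with p hp
    obtain ⟨⟨hp1, hp2⟩, hp3⟩ := hp
    have hp0 : (0:ℝ) < p := by linarith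
    have hdp : (d:ℝ) < β * p := by
      have h6 : β * ((d:ℝ)/β + 1) ≤ β * p := mul_le_mul_of_nonneg_left hp1 hβ.le
      rw [mul_add, mul_one, mul_comm β ((d:ℝ)/β), div_mul_cancel₀ _ hβ.ne'] at h6
      linarith
    have hkey := aux_lambda_le ψ hψmeas hψnn hψint A hA K hK C β p hC1 hβ hp0 hdp hcomp
    have h2p : m ≤ (2:ℝ) ^ p := by
      have e1 : (2:ℝ) ^ p = Real.exp (Real.log 2 * p) := Real.rpow_def_of_pos two_pos p
      have e2 : (1:ℝ)/2 ≤ Real.log 2 := by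
        have := Real.log_two_gt_d9; linarith
      have e3 : p / 2 ≤ Real.log 2 * p := by nlinarith
      have e4 : p/2 + 1 ≤ Real.exp (p/2) := by
        have := Real.add_one_le_exp (p/2); linarith
      have e5 : Real.exp (p/2) ≤ Real.exp (Real.log 2 * p) := Real.exp_le_exp.2 e3
      rw [e1]; linarith
    have hcb : C ^ β - 1 = ε / 2 := by rw [hCβ]; ring
    have hεp : m * (C ^ β - 1) ^ p ≤ ε ^ p := by
      rw [hcb, Real.div_rpow hε.le (by norm_num : (0:ℝ) ≤ 2)]
      have h2pos : (0:ℝ) < (2:ℝ) ^ p := Real.rpow_pos_of_pos two_pos p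
      have hεpp : (0:ℝ) ≤ ε ^ p := Real.rpow_nonneg hε.le p
      calc m * (ε ^ p / 2 ^ p) = (m / 2 ^ p) * ε ^ p := by ring
        _ ≤ 1 * ε ^ p := by
            refine mul_le_mul_of_nonneg_right ?_ hεpp
            rw [div_le_one h2pos]; exact h2p
        _ = ε ^ p := one_mul _
    have hfinal : lambdaOne d p K ≤ ε ^ p := le_trans hkey hεp
    calc (lambdaOne d p K) ^ (1/p) ≤ (ε ^ p) ^ (1/p) :=
        Real.rpow_le_rpow (hlam_nonneg p) hfinal (by positivity)
      _ = ε := by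
        rw [← Real.rpow_mul hε.le, mul_one_div_cancel hp0.ne', Real.rpow_one]
  by_contra hcon
  push_neg at hcon
  have h := main (Filter.limsup (fun p : ℝ => (lambdaOne d p K) ^ (1 / p)) atTop / 2)
    (by linarith)
  linarith
end
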